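/- arXiv:2008.00738 — 2 statements merged into one kernel-verified Lean document; each statement's English description precedes it below -/
import Mathlib

section
/- Let n ≥ 1 and let T : ℤⁿ×ℤⁿ → ℤⁿ be translation equivariant and monotone in the sense of Knothe. Suppose f, g, h, k : ℤⁿ → [0,∞) satisfy f(x)·g(y) ≤ h(T(x,y))·k(x+y−T(x,y)) for all x, y ∈ ℤⁿ. Then (∑_{x∈ℤⁿ} f(x))·(∑_{x∈ℤⁿ} g(x)) ≤ (∑_{x∈ℤⁿ} h(x))·(∑_{x∈ℤⁿ} k(x)), where the sums are taken in the extended nonnegative reals [0,∞]. -/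
open scoped BigOperators ENNReal NNReal

/-- A *total additive ordering* on an abelian group `G`: a linear order (given as
a relation `r`, meaning `r a b ↔ a ⪯ b`) compatible with addition. -/
def TotalAdditiveOrdering {G : Type*} [AddCommGroup G] (r : G → G → Prop) : Prop :=
  (∀ a, r a a) ∧ (∀ a b, r a b → r b a → a = b) ∧
  (∀ a b c, r a b → r b c → r a c) ∧ (∀ a b, r a b ∨ r b a) ∧
  (∀ a b c, r a b → r (a + c) (b + c))

/-- `u` is the minimal positive element of the ordering `r`, i.e. the minimum of
`{g : 0 ≺ g}`. -/
def IsMinimalPositive {G : Type*} [AddCommGroup G] (r : G → G → Prop) (u : G) : Prop :=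
  (r 0 u ∧ u ≠ 0) ∧ ∀ g, r 0 g → g ≠ 0 → r u g

/-- `T` is translation equivariant: `T (x+z) (y+z) = T x y + z`. -/
def TranslationEquivariant {G : Type*} [AddCommGroup G] (T : G → G → G) : Prop :=
  ∀ x y z, T (x + z) (y + z) = T x y + z

/-- `T : ℤⁿ × ℤⁿ → ℤⁿ` is triangular and monotone with respect to the decomposition
`ℤⁿ = G₁ × ⋯ × G_k` (encoded by the additive equivalence `e`, with `Gᵢ = ℤ^(ℓ i)`) and the
orderings `ord i` on the blocks: (i) the `i`-th block of `T x y` depends only on the blocks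
`≤ i` of `x` and `y`; (ii) fixing the blocks `< i`, the `i`-th block of `T` is nondecreasing
in the `i`-th blocks of both arguments. -/
def KnotheWith {n k : ℕ} (ℓ : Fin k → ℕ)
    (e : (Fin n → ℤ) ≃+ ((i : Fin k) → Fin (ℓ i) → ℤ))
    (ord : (i : Fin k) → (Fin (ℓ i) → ℤ) → (Fin (ℓ i) → ℤ) → Prop)
    (T : (Fin n → ℤ) → (Fin n → ℤ) → (Fin n → ℤ)) : Prop :=
  (∀ (i : Fin k) (x y x' y' : Fin n → ℤ),
      (∀ j, j ≤ i → e x j = e x' j ∧ e y j = e y' j) →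
      e (T x y) i = e (T x' y') i) ∧
  (∀ (i : Fin k) (x y x' y' : Fin n → ℤ),
      (∀ j, j < i → e x j = e x' j ∧ e y j = e y' j) →
      ord i (e x i) (e x' i) → ord i (e y i) (e y' i) →
      ord i (e (T x y) i) (e (T x' y') i))

/-- `T` is monotone in the sense of Knothe: there is a decomposition
`ℤⁿ = G₁ × ⋯ × G_k` with `Gᵢ = ℤ^(ℓᵢ)`, `ℓ₁ + ⋯ + ℓ_k = n`, together with total additive
orderings on the `Gᵢ`, each admitting a minimal positive element, with respect to which `T`
is triangular and monotone. -/
def KnotheMonotone {n : ℕ} (T : (Fin n → ℤ) → (Fin n → ℤ) → (Fin n → ℤ)) : Prop :=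
  ∃ (k : ℕ) (_ : 1 ≤ k) (ℓ : Fin k → ℕ) (_ : ∑ i, ℓ i = n)
    (e : (Fin n → ℤ) ≃+ ((i : Fin k) → Fin (ℓ i) → ℤ))
    (ord : (i : Fin k) → (Fin (ℓ i) → ℤ) → (Fin (ℓ i) → ℤ) → Prop),
    (∀ i, TotalAdditiveOrdering (ord i) ∧ ∃ u, IsMinimalPositive (ord i) u) ∧
    KnotheWith ℓ e ord T


open Finset

/-- Abel-type bound: antitone nonneg weights against nonpositive prefix sums. -/
lemma abel_weight_bound (a d : ℕ → ℝ) (ha : ∀ i, 0 ≤ a i)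
    (hmono : ∀ i, a (i + 1) ≤ a i)
    (n : ℕ) (hD : ∀ r, r ≤ n → (∑ i ∈ range r, d i) ≤ 0) :
    ∑ i ∈ range n, a i * d i ≤ a n * ∑ i ∈ range n, d i := by
  induction n with
  | zero => simp
  | succ n ih =>
    have hDn : ∀ r, r ≤ n → (∑ i ∈ range r, d i) ≤ 0 := fun r hr => hD r (hr.trans n.le_succ)
    have h1 : ∑ i ∈ range (n+1), a i * d i ≤ a n * (∑ i ∈ range n, d i) + a n * d n := by
      rw [Finset.sum_range_succ]
      exact add_le_add (ih hDn) le_rfl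
    have h2 : a n * (∑ i ∈ range n, d i) + a n * d n = a n * ∑ i ∈ range (n+1), d i := by
      rw [Finset.sum_range_succ, mul_add]
    have h3 : a n * ∑ i ∈ range (n+1), d i ≤ a (n+1) * ∑ i ∈ range (n+1), d i := by
      have := hD (n+1) le_rfl
      nlinarith [hmono n, ha (n+1)]
    linarith
lemma abel_weight_nonpos (a d : ℕ → ℝ) (ha : ∀ i, 0 ≤ a i)
    (hmono : ∀ i, a (i + 1) ≤ a i)
    (n : ℕ) (hD : ∀ r, r ≤ n → (∑ i ∈ range r, d i) ≤ 0) :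
    ∑ i ∈ range n, a i * d i ≤ 0 := by
  have := abel_weight_bound a d ha hmono n hD
  have h2 := hD n le_rfl
  nlinarith [ha n]

/-- Tomić-type: weak log-majorization implies weak majorization (for `exp`). -/
lemma maj_core (n : ℕ) (a b : ℕ → ℝ)
    (hapos : ∀ i, 0 < a i) (hbpos : ∀ i, 0 < b i)
    (hamono : ∀ i, a (i+1) ≤ a i)
    (hprod : ∀ r, r ≤ n → (∏ i ∈ range r, a i) ≤ ∏ i ∈ range r, b i) :
    ∑ i ∈ range n, a i ≤ ∑ i ∈ range n, b i := by
  set d : ℕ → ℝ := fun i => Real.log (a i) - Real.log (b i) with hd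
  have hD : ∀ r, r ≤ n → (∑ i ∈ range r, d i) ≤ 0 := by
    intro r hr
    have : ∑ i ∈ range r, d i = Real.log (∏ i ∈ range r, a i) - Real.log (∏ i ∈ range r, b i) := by
      rw [Real.log_prod (fun i _ => (hapos i).ne'), Real.log_prod (fun i _ => (hbpos i).ne'),
        Finset.sum_sub_distrib]
    rw [this, sub_nonpos]
    exact Real.log_le_log (Finset.prod_pos (fun i _ => hapos i)) (hprod r hr)
  have key : ∀ i, a i - b i ≤ a i * d i := by
    intro i
    have h1 : Real.log (b i) - Real.log (a i) ≤ b i / a i - 1 := by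
      have := Real.log_le_sub_one_of_pos (show (0:ℝ) < b i / a i from div_pos (hbpos i) (hapos i))
      rwa [Real.log_div (hbpos i).ne' (hapos i).ne'] at this
    have h2 : a i * (Real.log (b i) - Real.log (a i)) ≤ a i * (b i / a i - 1) :=
      mul_le_mul_of_nonneg_left h1 (hapos i).le
    have h3 : a i * (b i / a i - 1) = b i - a i := by
      have hne := (hapos i).ne'
      field_simp
    rw [show d i = Real.log (a i) - Real.log (b i) from rfl]
    nlinarith
  have hmain : ∑ i ∈ range n, a i - ∑ i ∈ range n, b i ≤ 0 := by
    calc ∑ i ∈ range n, a i - ∑ i ∈ range n, b i = ∑ i ∈ range n, (a i - b i) := by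
          rw [Finset.sum_sub_distrib]
      _ ≤ ∑ i ∈ range n, a i * d i := Finset.sum_le_sum (fun i _ => key i)
      _ ≤ 0 := abel_weight_nonpos a d (fun i => (hapos i).le) hamono n hD
  linarith

section Lists
variable {α : Type*} [DecidableEq α]

/-- Every finset has an enumeration along which `v` is non-increasing. -/
lemma exists_desc_list (S : Finset α) (v : α → ℝ≥0∞) :
    ∃ l : List α, l.Nodup ∧ l.toFinset = S ∧ (l.map v).Pairwise (· ≥ ·) := by
  induction S using Finset.strongInduction with
  | _ S ih =>
    rcases eq_or_ne S ∅ with rfl | hne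
    · exact ⟨[], by simp, by simp, by simp⟩
    · obtain ⟨x, hx, hmax⟩ := S.exists_max_image v (Finset.nonempty_of_ne_empty hne)
      obtain ⟨l, hnd, htf, hsort⟩ := ih (S.erase x) (Finset.erase_ssubset hx)
      refine ⟨x :: l, ?_, ?_, ?_⟩
      · simp only [List.nodup_cons, hnd, and_true]
        intro hmem
        have : x ∈ S.erase x := htf ▸ List.mem_toFinset.mpr hmem
        exact (Finset.notMem_erase x S) this
      · simp [htf, Finset.insert_erase hx]
      · rw [List.map_cons, List.pairwise_cons]
        refine ⟨?_, hsort⟩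
        intro b hb
        simp only [List.mem_map] at hb
        obtain ⟨y, hy, rfl⟩ := hb
        have : y ∈ S.erase x := htf ▸ List.mem_toFinset.mpr hy
        exact hmax y (Finset.mem_of_mem_erase this)

lemma prod_range_getD_one (L : List ℝ≥0∞) (r : ℕ) (hr : r ≤ L.length) :
    ∏ i ∈ range r, L.getD i 1 = (L.take r).prod := by
  induction r with
  | zero => simp
  | succ r ih =>
    have hrL : r < L.length := lt_of_lt_of_le (Nat.lt_succ_self r) hr
    rw [Finset.prod_range_succ, ih (le_of_lt hrL), List.prod_take_succ L r hrL,
      List.getD_eq_getElem L 1 hrL]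

lemma sum_range_getD_zero (L : List ℝ≥0∞) (r : ℕ) (hr : r ≤ L.length) :
    ∑ i ∈ range r, L.getD i 0 = (L.take r).sum := by
  induction r with
  | zero => simp
  | succ r ih =>
    have hrL : r < L.length := lt_of_lt_of_le (Nat.lt_succ_self r) hr
    rw [Finset.sum_range_succ, ih (le_of_lt hrL), List.sum_take_succ L r hrL,
      List.getD_eq_getElem L 0 hrL]

/-- A product of `H` over an `r`-element subset is at most the product of the
first `r` entries of a descending enumeration. -/
lemma prod_le_sorted_take (H : α → ℝ≥0∞) :
    ∀ (l : List α), (l.map H).Pairwise (· ≥ ·) → l.Nodup →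
    ∀ (Z : Finset α), Z ⊆ l.toFinset →
    ∏ t ∈ Z, H t ≤ ((l.map H).take Z.card).prod := by
  intro l
  induction l with
  | nil =>
    intro _ _ Z hZ
    have : Z = ∅ := Finset.subset_empty.mp (by simpa using hZ)
    simp [this]
  | cons t l ih =>
    intro hsort hnd Z hZ
    rw [List.map_cons] at hsort
    have hs := List.pairwise_cons.mp hsort
    have hsort' : (l.map H).Pairwise (· ≥ ·) := hs.2
    have hmax : ∀ b ∈ l, H b ≤ H t := fun b hb => hs.1 (H b) (List.mem_map.mpr ⟨b, hb, rfl⟩)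
    have hnd' : l.Nodup := (List.nodup_cons.mp hnd).2
    have htl : t ∉ l := (List.nodup_cons.mp hnd).1
    have hlen : l.toFinset.card = l.length := by rw [List.card_toFinset, hnd'.dedup]
    by_cases ht : t ∈ Z
    · have hZ' : Z.erase t ⊆ l.toFinset := by
        intro z hz
        have hz1 := Finset.mem_of_mem_erase hz
        have hz2 := Finset.ne_of_mem_erase hz
        have := hZ hz1
        simp only [List.toFinset_cons, Finset.mem_insert] at this
        tauto
      have hcard : Z.card = (Z.erase t).card + 1 := by
        rw [Finset.card_erase_of_mem ht]
        have : 1 ≤ Z.card := Finset.card_pos.mpr ⟨t, ht⟩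
        omega
      have h1 : ∏ x ∈ Z.erase t, H x ≤ ((l.map H).take (Z.erase t).card).prod :=
        ih hsort' hnd' _ hZ'
      calc ∏ x ∈ Z, H x = H t * ∏ x ∈ Z.erase t, H x := (Finset.mul_prod_erase Z H ht).symm
        _ ≤ H t * ((l.map H).take (Z.erase t).card).prod := mul_le_mul' le_rfl h1
        _ = ((H t :: l.map H).take Z.card).prod := by
              rw [hcard, List.take_succ_cons, List.prod_cons]
        _ = ((List.map H (t :: l)).take Z.card).prod := by rw [List.map_cons]
    · have hZ' : Z ⊆ l.toFinset := by
        intro z hz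
        have := hZ hz
        simp only [List.toFinset_cons, Finset.mem_insert] at this
        rcases this with h | h
        · exact absurd (h ▸ hz) ht
        · exact h
      have hcard_le : Z.card ≤ l.length := hlen ▸ Finset.card_le_card hZ'
      have h1 : ∏ x ∈ Z, H x ≤ ((l.map H).take Z.card).prod := ih hsort' hnd' Z hZ'
      refine h1.trans ?_
      rcases Nat.eq_zero_or_pos Z.card with h0 | hpos
      · simp [h0]
      · obtain ⟨r, hr⟩ := Nat.exists_eq_succ_of_ne_zero hpos.ne'
        have hrL : r < (l.map H).length := by
          rw [List.length_map]; omega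
        have hget : (l.map H).get ⟨r, hrL⟩ ≤ H t := by
          have hmem := List.get_mem (l.map H) ⟨r, hrL⟩
          obtain ⟨b, hb, hbe⟩ := List.mem_map.mp hmem
          exact hbe ▸ hmax b hb
        calc ((l.map H).take Z.card).prod
            = ((l.map H).take r).prod * (l.map H).get ⟨r, hrL⟩ := by
              rw [hr, List.prod_take_succ (l.map H) r hrL]; rfl
          _ ≤ ((l.map H).take r).prod * H t := mul_le_mul' le_rfl hget
          _ = H t * ((l.map H).take r).prod := mul_comm _ _
          _ = ((List.map H (t :: l)).take Z.card).prod := by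
              rw [List.map_cons, hr, List.take_succ_cons, List.prod_cons]
end Lists

lemma list_prod_ne_top : ∀ (L : List ℝ≥0∞), (∀ x ∈ L, x ≠ ∞) → L.prod ≠ ∞ := by
  intro L
  induction L with
  | nil => simp
  | cons a L ih =>
    intro h
    rw [List.prod_cons]
    exact ENNReal.mul_ne_top (h a (List.mem_cons_self))
      (ih (fun x hx => h x (List.mem_cons_of_mem a hx)))

lemma list_sum_ne_top : ∀ (L : List ℝ≥0∞), (∀ x ∈ L, x ≠ ∞) → L.sum ≠ ∞ := by
  intro L
  induction L with
  | nil => simp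
  | cons a L ih =>
    intro h
    rw [List.sum_cons]
    exact ENNReal.add_ne_top.mpr ⟨h a (List.mem_cons_self),
      ih (fun x hx => h x (List.mem_cons_of_mem a hx))⟩

/-- Majorization principle: if every subset `Y` of `X` admits an equinumerous
`Z ⊆ P` with `∏_Y c ≤ ∏_Z H`, then `∑_X c ≤ ∑_P H`. -/
lemma maj_ennreal {α : Type*} [DecidableEq α] (X P : Finset α) (c H : α → ℝ≥0∞)
    (hyp : ∀ Y, Y ⊆ X → ∃ Z, Z ⊆ P ∧ Z.card = Y.card ∧ ∏ y ∈ Y, c y ≤ ∏ t ∈ Z, H t) :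
    ∑ x ∈ X, c x ≤ ∑ t ∈ P, H t := by
  classical
  -- dispose of ∞ in H
  by_cases hPinf : ∃ t ∈ P, H t = ∞
  · rw [show ∑ t ∈ P, H t = ∞ from ENNReal.sum_eq_top.mpr hPinf]
    exact le_top
  push_neg at hPinf
  -- c is finite on X
  have hcfin : ∀ x ∈ X, c x ≠ ∞ := by
    intro x hx hc
    obtain ⟨Z, hZP, hZcard, hZprod⟩ := hyp {x} (Finset.singleton_subset_iff.mpr hx)
    rw [Finset.card_singleton] at hZcard
    obtain ⟨t, rfl⟩ := Finset.card_eq_one.mp hZcard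
    rw [Finset.prod_singleton, Finset.prod_singleton, hc, top_le_iff] at hZprod
    exact hPinf t (hZP (Finset.mem_singleton_self t)) hZprod
  -- restrict to the support of c and to nonzero values of H
  set S := X.filter (fun x => c x ≠ 0) with hS
  have hSsub : S ⊆ X := Finset.filter_subset _ _
  have hsumS : ∑ x ∈ X, c x = ∑ x ∈ S, c x := (Finset.sum_filter_ne_zero X).symm
  set P' := P.filter (fun t => H t ≠ 0) with hP'
  have hP'sub : P' ⊆ P := Finset.filter_subset _ _
  have hsumP : ∑ t ∈ P', H t ≤ ∑ t ∈ P, H t := Finset.sum_le_sum_of_subset hP'sub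
  -- the provided Z's automatically avoid zeros of H when Y ⊆ S
  have hyp' : ∀ Y, Y ⊆ S → ∃ Z, Z ⊆ P' ∧ Z.card = Y.card ∧ ∏ y ∈ Y, c y ≤ ∏ t ∈ Z, H t := by
    intro Y hY
    obtain ⟨Z, hZP, hZcard, hZprod⟩ := hyp Y (hY.trans hSsub)
    have hYpos : 0 < ∏ y ∈ Y, c y := by
      rw [pos_iff_ne_zero]
      rw [Finset.prod_ne_zero_iff]
      intro y hy
      exact (Finset.mem_filter.mp (hY hy)).2
    refine ⟨Z, ?_, hZcard, hZprod⟩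
    intro t htZ
    rw [hP', Finset.mem_filter]
    refine ⟨hZP htZ, ?_⟩
    intro h0
    have : ∏ t ∈ Z, H t = 0 := Finset.prod_eq_zero htZ h0
    rw [this] at hZprod
    exact absurd (lt_of_lt_of_le hYpos hZprod) (lt_irrefl 0)
  rcases eq_or_ne S ∅ with hSe | hSne
  · rw [hsumS, hSe, Finset.sum_empty]; exact zero_le
  -- enumerations
  obtain ⟨lS, hndS, htfS, hsortS⟩ := exists_desc_list S c
  obtain ⟨lP, hndP, htfP, hsortP⟩ := exists_desc_list P' H
  set n := S.card with hn
  have hlenS : lS.length = n := by rw [hn, ← htfS, List.card_toFinset, hndS.dedup]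
  have hlenP : lP.length = P'.card := by rw [← htfP, List.card_toFinset, hndP.dedup]
  have hnpos : 0 < n := Finset.card_pos.mpr (Finset.nonempty_of_ne_empty hSne)
  -- n ≤ |P'|
  obtain ⟨Zf, hZfP, hZfcard, _⟩ := hyp' S (le_refl S)
  have hnP : n ≤ P'.card := by rw [hn, ← hZfcard]; exact Finset.card_le_card hZfP
  -- the real sequences
  set va : ℕ → ℝ≥0∞ := fun i => (lS.map c).getD i 1 with hva
  set vb : ℕ → ℝ≥0∞ := fun i => (lP.map H).getD i 1 with hvb
  set A : ℕ → ℝ := fun i => (va (min i (n-1))).toReal with hA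
  set B : ℕ → ℝ := fun i => (vb (min i (n-1))).toReal with hB
  -- membership facts
  have hvamem : ∀ i, i < n → va i ∈ lS.map c := by
    intro i hi
    have : i < (lS.map c).length := by rw [List.length_map, hlenS]; exact hi
    rw [hva]; simp only
    rw [List.getD_eq_getElem _ 1 this]
    exact List.getElem_mem _
  have hvbmem : ∀ i, i < n → vb i ∈ lP.map H := by
    intro i hi
    have : i < (lP.map H).length := by rw [List.length_map, hlenP]; exact lt_of_lt_of_le hi hnP
    rw [hvb]; simp only
    rw [List.getD_eq_getElem _ 1 this]
    exact List.getElem_mem _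
  have hSval : ∀ z ∈ lS.map c, z ≠ 0 ∧ z ≠ ∞ := by
    intro z hz
    obtain ⟨y, hy, rfl⟩ := List.mem_map.mp hz
    have hyS : y ∈ S := htfS ▸ List.mem_toFinset.mpr hy
    exact ⟨(Finset.mem_filter.mp hyS).2, hcfin y (hSsub hyS)⟩
  have hPval : ∀ z ∈ lP.map H, z ≠ 0 ∧ z ≠ ∞ := by
    intro z hz
    obtain ⟨t, ht, rfl⟩ := List.mem_map.mp hz
    have htP : t ∈ P' := htfP ▸ List.mem_toFinset.mpr ht
    exact ⟨(Finset.mem_filter.mp htP).2, hPinf t (hP'sub htP)⟩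
  -- sortedness of va, vb
  have hvasort : ∀ i j, i ≤ j → j < n → va j ≤ va i := by
    intro i j hij hj
    rcases eq_or_lt_of_le hij with rfl | hlt
    · exact le_refl _
    · have hj' : j < (lS.map c).length := by rw [List.length_map, hlenS]; exact hj
      have hi' : i < (lS.map c).length := lt_trans (by exact_mod_cast hlt) hj'
      rw [hva]; simp only
      rw [List.getD_eq_getElem _ 1 hj', List.getD_eq_getElem _ 1 hi']
      exact List.Pairwise.rel_get_of_lt hsortS (show (⟨i, hi'⟩ : Fin _) < ⟨j, hj'⟩ from hlt)
  -- positivity and finiteness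
  have hvapos : ∀ i, i < n → va i ≠ 0 ∧ va i ≠ ∞ := fun i hi => hSval _ (hvamem i hi)
  have hvbpos : ∀ i, i < n → vb i ≠ 0 ∧ vb i ≠ ∞ := fun i hi => hPval _ (hvbmem i hi)
  have hminlt : ∀ i : ℕ, min i (n-1) < n := fun i => lt_of_le_of_lt (min_le_right _ _) (by omega)
  have hApos : ∀ i, 0 < A i := by
    intro i
    have := hvapos _ (hminlt i)
    rw [hA]; simp only
    exact ENNReal.toReal_pos this.1 this.2
  have hBpos : ∀ i, 0 < B i := by
    intro i
    have := hvbpos _ (hminlt i)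
    rw [hB]; simp only
    exact ENNReal.toReal_pos this.1 this.2
  have hAmono : ∀ i, A (i+1) ≤ A i := by
    intro i
    rw [hA]; simp only
    rw [ENNReal.toReal_le_toReal (hvapos _ (hminlt (i+1))).2 (hvapos _ (hminlt i)).2]
    exact hvasort _ _ (by omega) (hminlt (i+1))
  -- prefix products
  have hAin : ∀ i r, i < r → r ≤ n → A i = (va i).toReal := by
    intro i r hir hrn
    rw [hA]; simp only
    rw [min_eq_left (by omega : i ≤ n - 1)]
  have hBin : ∀ i r, i < r → r ≤ n → B i = (vb i).toReal := by
    intro i r hir hrn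
    rw [hB]; simp only
    rw [min_eq_left (by omega : i ≤ n - 1)]
  have hprod : ∀ r, r ≤ n → (∏ i ∈ range r, A i) ≤ ∏ i ∈ range r, B i := by
    intro r hr
    have hrS : r ≤ (lS.map c).length := by rw [List.length_map, hlenS]; exact hr
    have hrP : r ≤ (lP.map H).length := by rw [List.length_map, hlenP]; exact hr.trans hnP
    -- identify the ENNReal products
    have e1 : ∏ i ∈ range r, va i = ((lS.map c).take r).prod := by
      rw [← prod_range_getD_one _ r hrS]
    have e2 : ∏ i ∈ range r, vb i = ((lP.map H).take r).prod := by
      rw [← prod_range_getD_one _ r hrP]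
    -- the top-r subset of S
    set Y : Finset α := (lS.take r).toFinset with hY
    have hndtake : (lS.take r).Nodup := hndS.sublist (List.take_sublist r lS)
    have hYsub : Y ⊆ S := by
      rw [hY, ← htfS]
      intro y hy
      exact List.mem_toFinset.mpr (List.mem_of_mem_take (List.mem_toFinset.mp hy))
    have hYcard : Y.card = r := by
      rw [hY, List.card_toFinset, hndtake.dedup, List.length_take]
      rw [hlenS]; omega
    have e3 : ∏ y ∈ Y, c y = ((lS.map c).take r).prod := by
      rw [hY, List.prod_toFinset c hndtake, ← List.map_take]
    obtain ⟨Z, hZsub, hZcard, hZprod⟩ := hyp' Y hYsub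
    have e4 : ∏ t ∈ Z, H t ≤ ((lP.map H).take r).prod := by
      have := prod_le_sorted_take H lP hsortP hndP Z (by rw [htfP]; exact hZsub)
      rwa [hZcard, hYcard] at this
    have hfinP : ((lP.map H).take r).prod ≠ ∞ :=
      list_prod_ne_top _ (fun x hx => (hPval x (List.mem_of_mem_take hx)).2)
    have hfinS : ((lS.map c).take r).prod ≠ ∞ :=
      list_prod_ne_top _ (fun x hx => (hSval x (List.mem_of_mem_take hx)).2)
    have hstep : ∏ i ∈ range r, va i ≤ ∏ i ∈ range r, vb i := by
      calc ∏ i ∈ range r, va i = ∏ y ∈ Y, c y := by rw [e1, e3]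
        _ ≤ ∏ t ∈ Z, H t := hZprod
        _ ≤ ((lP.map H).take r).prod := e4
        _ = ∏ i ∈ range r, vb i := e2.symm
    have hAeq : ∏ i ∈ range r, A i = (∏ i ∈ range r, va i).toReal := by
      rw [ENNReal.toReal_prod]
      exact Finset.prod_congr rfl (fun i hi => hAin i r (mem_range.mp hi) hr)
    have hBeq : ∏ i ∈ range r, B i = (∏ i ∈ range r, vb i).toReal := by
      rw [ENNReal.toReal_prod]
      exact Finset.prod_congr rfl (fun i hi => hBin i r (mem_range.mp hi) hr)
    rw [hAeq, hBeq]
    rw [ENNReal.toReal_le_toReal (e1 ▸ hfinS) (e2 ▸ hfinP)]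
    exact hstep
  -- apply the real majorization lemma
  have hfinal := maj_core n A B (fun i => hApos i) (fun i => hBpos i) hAmono hprod
  -- lift back to ℝ≥0∞
  have hvafin : ∀ i ∈ range n, va i ≠ ∞ := fun i hi => (hvapos i (mem_range.mp hi)).2
  have hvbfin : ∀ i ∈ range n, vb i ≠ ∞ := fun i hi => (hvbpos i (mem_range.mp hi)).2
  have hAsum : ∑ i ∈ range n, A i = (∑ i ∈ range n, va i).toReal := by
    rw [ENNReal.toReal_sum hvafin]
    exact Finset.sum_congr rfl (fun i hi => hAin i n (mem_range.mp hi) le_rfl)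
  have hBsum : ∑ i ∈ range n, B i = (∑ i ∈ range n, vb i).toReal := by
    rw [ENNReal.toReal_sum hvbfin]
    exact Finset.sum_congr rfl (fun i hi => hBin i n (mem_range.mp hi) le_rfl)
  have hvaS : ∑ i ∈ range n, va i = ∑ x ∈ S, c x := by
    have h1 : ∀ i ∈ range n, va i = (lS.map c).getD i 0 := by
      intro i hi
      have hi' : i < (lS.map c).length := by
        rw [List.length_map, hlenS]; exact mem_range.mp hi
      rw [hva]; simp only
      rw [List.getD_eq_getElem _ 1 hi', List.getD_eq_getElem _ 0 hi']
    rw [Finset.sum_congr rfl h1, sum_range_getD_zero _ n (by rw [List.length_map, hlenS])]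
    have : (lS.map c).take n = lS.map c := by
      apply List.take_of_length_le
      rw [List.length_map, hlenS]
    rw [this, ← List.sum_toFinset c hndS, htfS]
  have hvbP : ∑ i ∈ range n, vb i ≤ ∑ t ∈ P', H t := by
    have h1 : ∀ i ∈ range n, vb i = (lP.map H).getD i 0 := by
      intro i hi
      have hi' : i < (lP.map H).length := by
        rw [List.length_map, hlenP]; exact lt_of_lt_of_le (mem_range.mp hi) hnP
      rw [hvb]; simp only
      rw [List.getD_eq_getElem _ 1 hi', List.getD_eq_getElem _ 0 hi']
    rw [Finset.sum_congr rfl h1, sum_range_getD_zero _ n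
      (by rw [List.length_map, hlenP]; exact hnP)]
    have hsplit : ((lP.map H).take n).sum ≤ (lP.map H).sum := by
      conv_rhs => rw [← List.take_append_drop n (lP.map H)]
      rw [List.sum_append]
      exact le_self_add
    refine hsplit.trans ?_
    rw [← List.sum_toFinset H hndP, htfP]
  have hfin1 : ∑ x ∈ S, c x ≠ ⊤ := by
    rw [← hvaS]
    exact (ENNReal.sum_lt_top.mpr (fun i hi => lt_top_iff_ne_top.mpr (hvafin i hi))).ne
  have hfin2 : ∑ i ∈ range n, vb i ≠ ⊤ :=
    (ENNReal.sum_lt_top.mpr (fun i hi => lt_top_iff_ne_top.mpr (hvbfin i hi))).ne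
  have hkey : ∑ x ∈ S, c x ≤ ∑ i ∈ range n, vb i := by
    rw [← ENNReal.toReal_le_toReal hfin1 hfin2]
    calc (∑ x ∈ S, c x).toReal = ∑ i ∈ range n, A i := by rw [hAsum, hvaS]
      _ ≤ ∑ i ∈ range n, B i := hfinal
      _ = (∑ i ∈ range n, vb i).toReal := hBsum
  rw [hsumS]
  exact hkey.trans (hvbP.trans hsumP)

lemma ennreal_le_of_sq {a b : ℝ≥0∞} (h : a * a ≤ b * b) : a ≤ b := by
  rcases eq_or_ne a ⊤ with rfl | ha
  · have hbb : b * b = ⊤ := top_le_iff.mp (le_trans (le_of_eq (by simp)) h)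
    rcases ENNReal.mul_eq_top.mp hbb with ⟨_, h2⟩ | ⟨h1, _⟩
    · exact le_of_eq h2.symm
    · exact le_of_eq h1.symm
  rcases eq_or_ne b ⊤ with rfl | hb
  · exact le_top
  · have ha' : a * a ≠ ⊤ := ENNReal.mul_ne_top ha ha
    have hb' : b * b ≠ ⊤ := ENNReal.mul_ne_top hb hb
    have h2 : a.toNNReal * a.toNNReal ≤ b.toNNReal * b.toNNReal := by
      have := (ENNReal.toNNReal_le_toNNReal ha' hb').mpr h
      rwa [ENNReal.toNNReal_mul, ENNReal.toNNReal_mul] at this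
    have h3 : a.toNNReal ≤ b.toNNReal := by
      have := NNReal.sqrt_le_sqrt.mpr h2
      rwa [NNReal.sqrt_mul_self, NNReal.sqrt_mul_self] at this
    exact (ENNReal.toNNReal_le_toNNReal ha hb).mp h3

section Fiber
variable {β : Type*} [AddCommGroup β] [LinearOrder β] [IsOrderedAddMonoid β]

/-- Strict nesting of the transported intervals. -/
lemma nest (w : β) (τ : β → β) (hmono : Monotone τ)
    (hlip : ∀ d d' : β, d ≤ d' → τ d' ≤ τ d + (d' - d))
    {x₁ x₂ x₃ x₄ : β} (h12 : x₁ < x₂) (h23 : x₂ ≤ x₃) (h34 : x₃ < x₄) :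
    x₁ + τ (w - x₁ - x₄) < x₂ + τ (w - x₂ - x₃) ∧
    x₃ + τ (w - x₂ - x₃) < x₄ + τ (w - x₁ - x₄) := by
  rcases le_total (x₂ + x₃) (x₁ + x₄) with hσ | hσ
  · have hd : w - x₁ - x₄ ≤ w - x₂ - x₃ := by
      rw [sub_sub, sub_sub]
      exact sub_le_sub_left hσ w
    constructor
    · exact add_lt_add_of_lt_of_le h12 (hmono hd)
    · have hdelta : (w - x₂ - x₃) - (w - x₁ - x₄) = (x₁ + x₄) - (x₂ + x₃) := by abel
      have hl := hlip _ _ hd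
      rw [hdelta] at hl
      calc x₃ + τ (w - x₂ - x₃) ≤ x₃ + (τ (w - x₁ - x₄) + ((x₁ + x₄) - (x₂ + x₃))) :=
            add_le_add le_rfl hl
        _ = τ (w - x₁ - x₄) + (x₄ + (x₁ - x₂)) := by abel
        _ < τ (w - x₁ - x₄) + (x₄ + 0) := by
            refine add_lt_add_of_le_of_lt le_rfl (add_lt_add_of_le_of_lt le_rfl ?_)
            exact sub_neg.mpr h12
        _ = x₄ + τ (w - x₁ - x₄) := by abel
  · have hd : w - x₂ - x₃ ≤ w - x₁ - x₄ := by
      rw [sub_sub, sub_sub]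
      exact sub_le_sub_left hσ w
    constructor
    · have hdelta : (w - x₁ - x₄) - (w - x₂ - x₃) = (x₂ + x₃) - (x₁ + x₄) := by abel
      have hl := hlip _ _ hd
      rw [hdelta] at hl
      calc x₁ + τ (w - x₁ - x₄) ≤ x₁ + (τ (w - x₂ - x₃) + ((x₂ + x₃) - (x₁ + x₄))) :=
            add_le_add le_rfl hl
        _ = τ (w - x₂ - x₃) + (x₂ + (x₃ - x₄)) := by abel
        _ < τ (w - x₂ - x₃) + (x₂ + 0) := by
            refine add_lt_add_of_le_of_lt le_rfl (add_lt_add_of_le_of_lt le_rfl ?_)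
            exact sub_neg.mpr h34
        _ = x₂ + τ (w - x₂ - x₃) := by abel
    · exact add_lt_add_of_lt_of_le h34 (hmono hd)

/-- The onion construction: every nonempty `Y` admits an equinumerous set of
"target points" (all of the form `x + τ (w-x-x')`, `x' + τ (w-x-x')`) whose
`H`-product dominates the `c`-product, and which lies in the outer interval. -/
lemma onion (w : β) (τ : β → β) (hmono : Monotone τ)
    (hlip : ∀ d d' : β, d ≤ d' → τ d' ≤ τ d + (d' - d))
    (c H : β → ℝ≥0∞) (X : Finset β)
    (hyp : ∀ x ∈ X, ∀ x' ∈ X, x ≤ x' →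
      c x * c x' ≤ H (x + τ (w - x - x')) * H (x' + τ (w - x - x'))) :
    ∀ (Y : Finset β), Y ⊆ X → ∀ (hne : Y.Nonempty),
    ∃ Z : Finset β, Z.card = Y.card ∧ (∏ y ∈ Y, c y) ≤ (∏ t ∈ Z, H t) ∧
      (∀ t ∈ Z, (Y.min' hne) + τ (w - (Y.min' hne) - (Y.max' hne)) ≤ t ∧
        t ≤ (Y.max' hne) + τ (w - (Y.min' hne) - (Y.max' hne))) ∧
      (∀ t ∈ Z, ∃ p ∈ X, ∃ q ∈ X, p ≤ q ∧
        (t = p + τ (w - p - q) ∨ t = q + τ (w - p - q))) := by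
  intro Y
  induction Y using Finset.strongInduction with
  | _ Y ih =>
    intro hYX hne
    rcases eq_or_lt_of_le (Nat.succ_le_of_lt (Finset.card_pos.mpr hne)) with hcard1 | hcard2
    · -- singleton
      obtain ⟨x, hx⟩ := Finset.card_eq_one.mp hcard1.symm
      subst hx
      have hxX : x ∈ X := hYX (Finset.mem_singleton_self x)
      have hcx : c x ≤ H (x + τ (w - x - x)) :=
        ennreal_le_of_sq (hyp x hxX x hxX le_rfl)
      refine ⟨{x + τ (w - x - x)}, by simp, by simpa using hcx, ?_, ?_⟩
      · intro t ht
        rw [Finset.mem_singleton] at ht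
        subst ht
        simp
      · intro t ht
        rw [Finset.mem_singleton] at ht
        exact ⟨x, hxX, x, hxX, le_rfl, Or.inl ht⟩
    · -- at least two elements
      set x₁ := Y.min' hne with hx₁
      set x₄ := Y.max' hne with hx₄
      have h14 : x₁ < x₄ := Finset.min'_lt_max'_of_card Y hcard2
      have hx₁Y : x₁ ∈ Y := Y.min'_mem hne
      have hx₄Y : x₄ ∈ Y := Y.max'_mem hne
      have hx₁X : x₁ ∈ X := hYX hx₁Y
      have hx₄X : x₄ ∈ X := hYX hx₄Y
      have hx₄e : x₄ ∈ Y.erase x₁ := Finset.mem_erase.mpr ⟨h14.ne', hx₄Y⟩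
      set Y' := (Y.erase x₁).erase x₄ with hY'
      have hY'card : Y'.card + 2 = Y.card := by
        rw [hY', Finset.card_erase_of_mem hx₄e, Finset.card_erase_of_mem hx₁Y]
        omega
      have hY'subY : Y' ⊆ Y := (Finset.erase_subset _ _).trans (Finset.erase_subset _ _)
      have hprod14 : c x₁ * c x₄ ≤
          H (x₁ + τ (w - x₁ - x₄)) * H (x₄ + τ (w - x₁ - x₄)) :=
        hyp x₁ hx₁X x₄ hx₄X h14.le
      have huv : x₁ + τ (w - x₁ - x₄) < x₄ + τ (w - x₁ - x₄) :=
        add_lt_add_of_lt_of_le h14 le_rfl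
      have hprodY : ∏ y ∈ Y, c y = c x₁ * (c x₄ * ∏ y ∈ Y', c y) := by
        rw [hY', Finset.mul_prod_erase _ _ hx₄e, Finset.mul_prod_erase _ _ hx₁Y]
      rcases Y'.eq_empty_or_nonempty with hY'e | hY'ne
      · -- exactly two elements
        refine ⟨{x₁ + τ (w - x₁ - x₄), x₄ + τ (w - x₁ - x₄)}, ?_, ?_, ?_, ?_⟩
        · rw [Finset.card_insert_of_notMem (by simp [huv.ne]), Finset.card_singleton]
          have h0 : Y'.card = 0 := by rw [hY'e]; exact Finset.card_empty
          omega
        · rw [hprodY, hY'e, Finset.prod_empty, mul_one,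
            Finset.prod_insert (by simp [huv.ne]), Finset.prod_singleton]
          exact hprod14
        · intro t ht
          simp only [Finset.mem_insert, Finset.mem_singleton] at ht
          rcases ht with rfl | rfl
          · exact ⟨le_rfl, huv.le⟩
          · exact ⟨huv.le, le_rfl⟩
        · intro t ht
          simp only [Finset.mem_insert, Finset.mem_singleton] at ht
          rcases ht with rfl | rfl
          · exact ⟨x₁, hx₁X, x₄, hx₄X, h14.le, Or.inl rfl⟩
          · exact ⟨x₁, hx₁X, x₄, hx₄X, h14.le, Or.inr rfl⟩
      · -- recurse
        have hY'ss : Y' ⊂ Y := Finset.ssubset_iff_of_subset hY'subY |>.mpr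
          ⟨x₁, hx₁Y, fun hmem => (Finset.mem_erase.mp (Finset.mem_erase.mp hmem).2).1 rfl⟩
        obtain ⟨Z', hZ'card, hZ'prod, hZ'bounds, hZ'pts⟩ :=
          ih Y' hY'ss (hY'subY.trans hYX) hY'ne
        set x₂ := Y'.min' hY'ne with hx₂
        set x₃ := Y'.max' hY'ne with hx₃
        have hx₂Y' : x₂ ∈ Y' := Y'.min'_mem hY'ne
        have hx₃Y' : x₃ ∈ Y' := Y'.max'_mem hY'ne
        have h23 : x₂ ≤ x₃ := Finset.min'_le Y' x₃ hx₃Y'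
        have h12 : x₁ < x₂ := by
          have h1 : x₁ ≤ x₂ := Finset.min'_le Y x₂ (hY'subY hx₂Y')
          have h2 : x₂ ≠ x₁ := by
            have := Finset.mem_erase.mp (Finset.mem_erase.mp hx₂Y').2
            exact this.1
          exact lt_of_le_of_ne h1 (Ne.symm h2)
        have h34 : x₃ < x₄ := by
          have h1 : x₃ ≤ x₄ := Finset.le_max' Y x₃ (hY'subY hx₃Y')
          have h2 : x₃ ≠ x₄ := (Finset.mem_erase.mp hx₃Y').1
          exact lt_of_le_of_ne h1 h2
        obtain ⟨hnest1, hnest2⟩ := nest w τ hmono hlip h12 h23 h34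
        have hu_notin : x₁ + τ (w - x₁ - x₄) ∉ Z' := by
          intro hmem
          exact absurd ((hZ'bounds _ hmem).1) (not_le.mpr hnest1)
        have hv_notin : x₄ + τ (w - x₁ - x₄) ∉ Z' := by
          intro hmem
          exact absurd ((hZ'bounds _ hmem).2) (not_le.mpr hnest2)
        refine ⟨insert (x₁ + τ (w - x₁ - x₄)) (insert (x₄ + τ (w - x₁ - x₄)) Z'),
          ?_, ?_, ?_, ?_⟩
        · rw [Finset.card_insert_of_notMem (by
            simp only [Finset.mem_insert]
            push_neg
            exact ⟨huv.ne, hu_notin⟩),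
            Finset.card_insert_of_notMem hv_notin, hZ'card]
          omega
        · rw [hprodY, Finset.prod_insert (by
            simp only [Finset.mem_insert]
            push_neg
            exact ⟨huv.ne, hu_notin⟩),
            Finset.prod_insert hv_notin]
          calc c x₁ * (c x₄ * ∏ y ∈ Y', c y)
              = (c x₁ * c x₄) * ∏ y ∈ Y', c y := by ring
            _ ≤ (H (x₁ + τ (w - x₁ - x₄)) * H (x₄ + τ (w - x₁ - x₄))) * ∏ t ∈ Z', H t :=
                mul_le_mul' hprod14 hZ'prod
            _ = H (x₁ + τ (w - x₁ - x₄)) * (H (x₄ + τ (w - x₁ - x₄)) * ∏ t ∈ Z', H t) := by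
                ring
        · intro t ht
          simp only [Finset.mem_insert] at ht
          rcases ht with rfl | rfl | htZ'
          · exact ⟨le_rfl, huv.le⟩
          · exact ⟨huv.le, le_rfl⟩
          · have hb := hZ'bounds t htZ'
            exact ⟨hnest1.le.trans hb.1, hb.2.trans hnest2.le⟩
        · intro t ht
          simp only [Finset.mem_insert] at ht
          rcases ht with rfl | rfl | htZ'
          · exact ⟨x₁, hx₁X, x₄, hx₄X, h14.le, Or.inl rfl⟩
          · exact ⟨x₁, hx₁X, x₄, hx₄X, h14.le, Or.inr rfl⟩
          · exact hZ'pts t htZ'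
end Fiber

section FiberMain
variable {β : Type*} [AddCommGroup β] [LinearOrder β] [IsOrderedAddMonoid β]

/-- The fiber lemma: on each fiber `x + y = w` the `c`-mass is dominated by the
`H`-mass on a suitable finite set of points. -/
lemma fiber_lemma (w : β) (τ : β → β) (hmono : Monotone τ)
    (hlip : ∀ d d' : β, d ≤ d' → τ d' ≤ τ d + (d' - d))
    (c H : β → ℝ≥0∞) (X : Finset β)
    (hyp : ∀ x ∈ X, ∀ x' ∈ X, x ≤ x' →
      c x * c x' ≤ H (x + τ (w - x - x')) * H (x' + τ (w - x - x'))) :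
    ∃ Z : Finset β, ∑ x ∈ X, c x ≤ ∑ t ∈ Z, H t := by
  classical
  set P : Finset β := ((X ×ˢ X).image (fun p => p.1 + τ (w - p.1 - p.2))) ∪
    ((X ×ˢ X).image (fun p => p.2 + τ (w - p.1 - p.2))) with hP
  refine ⟨P, maj_ennreal X P c H ?_⟩
  intro Y hY
  rcases Y.eq_empty_or_nonempty with rfl | hne
  · exact ⟨∅, Finset.empty_subset _, rfl, by simp⟩
  obtain ⟨Z, hZcard, hZprod, _, hZpts⟩ :=
    onion w τ hmono hlip c H X hyp Y hY hne
  refine ⟨Z, ?_, hZcard, hZprod⟩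
  intro t ht
  obtain ⟨p, hp, q, hq, _, hpq⟩ := hZpts t ht
  rw [hP, Finset.mem_union]
  rcases hpq with rfl | rfl
  · exact Or.inl (Finset.mem_image.mpr ⟨(p, q), Finset.mem_product.mpr ⟨hp, hq⟩, rfl⟩)
  · exact Or.inr (Finset.mem_image.mpr ⟨(p, q), Finset.mem_product.mpr ⟨hp, hq⟩, rfl⟩)
end FiberMain

section BlockCore
variable {β : Type*} [AddCommGroup β] [LinearOrder β] [IsOrderedAddMonoid β]

theorem block_core (T : β → β → β)
    (hTE : ∀ x y z : β, T (x + z) (y + z) = T x y + z)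
    (hTm : ∀ x x' y y' : β, x ≤ x' → y ≤ y' → T x y ≤ T x' y')
    (f g h k : β → ℝ≥0∞)
    (hyp : ∀ x y, f x * g y ≤ h (T x y) * k (x + y - T x y)) :
    (∑' x, f x) * (∑' x, g x) ≤ (∑' x, h x) * (∑' x, k x) := by
  classical
  set τ : β → β := fun d => T 0 d with hτ
  have key : ∀ x y : β, T x y = x + τ (y - x) := by
    intro x y
    have := hTE 0 (y - x) x
    rw [zero_add, sub_add_cancel] at this
    rw [this, add_comm]
  have hmono : Monotone τ := fun d d' hd => hTm 0 0 d d' le_rfl hd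
  have hlip : ∀ d d' : β, d ≤ d' → τ d' ≤ τ d + (d' - d) := by
    intro d d' hd
    have h1 : τ d + (d' - d) = T (0 + (d' - d)) (d + (d' - d)) := by
      rw [hTE 0 d (d' - d)]
    rw [h1, show d + (d' - d) = d' from by abel]
    exact hTm 0 (0 + (d' - d)) d' d' (by rw [zero_add]; exact sub_nonneg.mpr hd) le_rfl
  -- RHS as a tsum over pairs
  have hRHS : ∑' q : β × β, h q.1 * k q.2 = (∑' x, h x) * (∑' x, k x) := by
    calc ∑' q : β × β, h q.1 * k q.2 = ∑' a, ∑' b, h a * k b :=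
          ENNReal.tsum_prod (f := fun a b => h a * k b)
      _ = ∑' a, h a * ∑' b, k b := tsum_congr fun a => ENNReal.tsum_mul_left
      _ = (∑' a, h a) * ∑' b, k b := ENNReal.tsum_mul_right
  -- reduce to finite sums
  rw [ENNReal.tsum_eq_iSup_sum (f := f), ENNReal.tsum_eq_iSup_sum (f := g),
    ENNReal.iSup_mul]
  refine iSup_le fun A => ?_
  rw [ENNReal.mul_iSup]
  refine iSup_le fun B => ?_
  -- fiber decomposition of the finite double sum
  set W : Finset β := (A ×ˢ B).image (fun p => p.1 + p.2) with hW
  have hdecomp : (∑ x ∈ A, f x) * (∑ y ∈ B, g y) =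
      ∑ w ∈ W, ∑ p ∈ (A ×ˢ B).filter (fun p => p.1 + p.2 = w), f p.1 * g p.2 := by
    rw [Finset.sum_mul_sum, ← Finset.sum_product']
    exact (Finset.sum_fiberwise_of_maps_to
      (fun p hp => Finset.mem_image_of_mem _ hp) _).symm
  rw [hdecomp]
  -- per fiber
  have hperw : ∀ w ∈ W, ∃ Z : Finset β,
      (∑ p ∈ (A ×ˢ B).filter (fun p => p.1 + p.2 = w), f p.1 * g p.2) ≤
        ∑ t ∈ Z, h t * k (w - t) := by
    intro w _
    set X : Finset β := ((A ×ˢ B).filter (fun p => p.1 + p.2 = w)).image Prod.fst with hX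
    have hinj : ∀ p ∈ (A ×ˢ B).filter (fun p => p.1 + p.2 = w),
        ∀ p' ∈ (A ×ˢ B).filter (fun p => p.1 + p.2 = w), p.1 = p'.1 → p = p' := by
      intro p hp p' hp' hfst
      have h1 := (Finset.mem_filter.mp hp).2
      have h2 := (Finset.mem_filter.mp hp').2
      have h3 : p.2 = p'.2 := by
        have h4 := h1.trans h2.symm
        rw [hfst] at h4
        exact add_left_cancel h4
      exact Prod.ext hfst h3
    have hXsum : (∑ p ∈ (A ×ˢ B).filter (fun p => p.1 + p.2 = w), f p.1 * g p.2) =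
        ∑ x ∈ X, f x * g (w - x) := by
      rw [hX, Finset.sum_image hinj]
      refine Finset.sum_congr rfl fun p hp => ?_
      have h1 := (Finset.mem_filter.mp hp).2
      have h2 : p.2 = w - p.1 := by rw [← h1]; abel
      rw [h2]
    rw [hXsum]
    refine fiber_lemma w τ hmono hlip (fun x => f x * g (w - x))
      (fun t => h t * k (w - t)) X ?_
    intro x _ x' _ _
    have c1 := hyp x (w - x')
    have c2 := hyp x' (w - x)
    have e1 : T x (w - x') = x + τ (w - x - x') := by
      rw [key, show w - x' - x = w - x - x' from by abel]
    have e2 : T x' (w - x) = x' + τ (w - x - x') := by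
      rw [key]
    have e3 : x + (w - x') - T x (w - x') = w - (x' + τ (w - x - x')) := by
      rw [e1]; abel
    have e4 : x' + (w - x) - T x' (w - x) = w - (x + τ (w - x - x')) := by
      rw [e2]; abel
    rw [e3, e1] at c1
    rw [e4, e2] at c2
    calc (f x * g (w - x)) * (f x' * g (w - x'))
        = (f x * g (w - x')) * (f x' * g (w - x)) := by ring
      _ ≤ (h (x + τ (w - x - x')) * k (w - (x' + τ (w - x - x')))) *
          (h (x' + τ (w - x - x')) * k (w - (x + τ (w - x - x')))) :=
          mul_le_mul' c1 c2
      _ = (h (x + τ (w - x - x')) * k (w - (x + τ (w - x - x')))) *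
          (h (x' + τ (w - x - x')) * k (w - (x' + τ (w - x - x')))) := by ring
  choose Z hZ using hperw
  -- assemble
  have hattach : ∑ w ∈ W, ∑ p ∈ (A ×ˢ B).filter (fun p => p.1 + p.2 = w), f p.1 * g p.2
      = ∑ w ∈ W.attach, ∑ p ∈ (A ×ˢ B).filter (fun p => p.1 + p.2 = w.1), f p.1 * g p.2 :=
    (Finset.sum_attach W _).symm
  rw [hattach]
  have hstep : ∑ w ∈ W.attach, ∑ p ∈ (A ×ˢ B).filter (fun p => p.1 + p.2 = w.1), f p.1 * g p.2
      ≤ ∑ w ∈ W.attach, ∑ t ∈ Z w.1 w.2, h t * k (w.1 - t) :=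
    Finset.sum_le_sum (fun w _ => hZ w.1 w.2)
  refine hstep.trans ?_
  rw [← hRHS]
  set Q : Finset (β × β) := W.attach.biUnion
    (fun w => (Z w.1 w.2).image (fun t => (t, w.1 - t))) with hQ
  have hQsum : ∑ q ∈ Q, h q.1 * k q.2 =
      ∑ w ∈ W.attach, ∑ t ∈ Z w.1 w.2, h t * k (w.1 - t) := by
    rw [hQ, Finset.sum_biUnion]
    · refine Finset.sum_congr rfl fun w _ => ?_
      rw [Finset.sum_image]
      intro t _ t' _ he
      exact (Prod.ext_iff.mp he).1
    · intro w _ w' _ hww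
      refine Finset.disjoint_left.mpr fun q hq hq' => ?_
      obtain ⟨t, _, rfl⟩ := Finset.mem_image.mp hq
      obtain ⟨t', _, he⟩ := Finset.mem_image.mp hq'
      have h1 : t' = t := (Prod.ext_iff.mp he).1
      have h2 : w'.1 - t' = w.1 - t := (Prod.ext_iff.mp he).2
      rw [h1] at h2
      have : w'.1 = w.1 := by
        have := congrArg (· + t) h2
        simpa [sub_add_cancel] using this
      exact hww (Subtype.ext this.symm)
  rw [← hQsum]
  exact ENNReal.sum_le_tsum Q
end BlockCore

/-- Build a linear ordered additive group structure from a total additive ordering. -/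
noncomputable def TotalAdditiveOrdering.toLOACG {G : Type*} [AddCommGroup G]
    (r : G → G → Prop) (hr : TotalAdditiveOrdering r) : LinearOrder G where
  le := r
  lt := fun a b => r a b ∧ ¬ r b a
  le_refl := hr.1
  le_trans := hr.2.2.1
  le_antisymm := hr.2.1
  le_total := hr.2.2.2.1
  lt_iff_le_not_ge := fun a b => Iff.rfl
  toDecidableLE := fun a b => Classical.dec _

/-- Tensorization over the Knothe blocks. -/
theorem tensor : ∀ (n : ℕ) (B : Fin n → Type) (instB : ∀ i, AddCommGroup (B i))
    (ord : ∀ i, B i → B i → Prop) (hord : ∀ i, TotalAdditiveOrdering (ord i))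
    (T : (∀ i, B i) → (∀ i, B i) → (∀ i, B i))
    (hTE : ∀ x y z, T (x + z) (y + z) = T x y + z)
    (htri : ∀ (i : Fin n) (x y x' y' : ∀ j, B j),
      (∀ j, j ≤ i → x j = x' j ∧ y j = y' j) → T x y i = T x' y' i)
    (hmon : ∀ (i : Fin n) (x y x' y' : ∀ j, B j),
      (∀ j, j < i → x j = x' j ∧ y j = y' j) →
      ord i (x i) (x' i) → ord i (y i) (y' i) → ord i (T x y i) (T x' y' i))
    (f g h k : (∀ i, B i) → ℝ≥0∞)
    (hyp : ∀ x y, f x * g y ≤ h (T x y) * k (x + y - T x y)),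
    (∑' x, f x) * (∑' x, g x) ≤ (∑' x, h x) * (∑' x, k x) := by
  intro n
  induction n with
  | zero =>
    intro B instB ord hord T hTE htri hmon f g h k hyp
    have hu : ∀ x y : (∀ i, B i), x = y := fun x y => funext fun i => i.elim0
    have h1 : ∀ (φ : (∀ i, B i) → ℝ≥0∞), (∑' x, φ x) = φ 0 := by
      intro φ
      exact tsum_eq_single 0 (fun b hb => absurd (hu b 0) hb)
    rw [h1 f, h1 g, h1 h, h1 k]
    have := hyp 0 0
    rwa [hu (T 0 0) 0, hu (0 + 0 - 0) 0] at this
  | succ m ih =>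
    intro B instB ord hord T hTE htri hmon f g h k hyp
    -- cons arithmetic
    have hconsadd : ∀ (a b : B 0) (x' y' : ∀ i : Fin m, B i.succ),
        Fin.cons a x' + Fin.cons b y' = Fin.cons (a + b) (x' + y') := by
      intro a b x' y'
      funext i
      refine Fin.cases ?_ (fun j => ?_) i
      · simp
      · simp
    have hconssub : ∀ (a b : B 0) (x' y' : ∀ i : Fin m, B i.succ),
        Fin.cons a x' - Fin.cons b y' = Fin.cons (a - b) (x' - y') := by
      intro a b x' y'
      funext i
      refine Fin.cases ?_ (fun j => ?_) i
      · simp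
      · simp
    set T0 : B 0 → B 0 → B 0 := fun a b => T (Fin.cons a 0) (Fin.cons b 0) 0 with hT0
    have hT0x : ∀ x y : (∀ i, B i), T x y 0 = T0 (x 0) (y 0) := by
      intro x y
      apply htri 0
      intro j hj
      have hj0 : j = 0 := Fin.le_zero_iff.mp hj
      subst hj0
      simp
    have hT0E : ∀ a b z : B 0, T0 (a + z) (b + z) = T0 a b + z := by
      intro a b z
      have h1 : ∀ c : B 0, Fin.cons (c + z) (0 : ∀ i : Fin m, B i.succ) =
          Fin.cons c 0 + Fin.cons z 0 := by
        intro c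
        rw [hconsadd, add_zero]
      rw [hT0]
      simp only
      rw [h1 a, h1 b, hTE]
      simp
    have hT0m : ∀ a a' b b' : B 0, ord 0 a a' → ord 0 b b' →
        ord 0 (T0 a b) (T0 a' b') := by
      intro a a' b b' ha hb
      rw [hT0]
      simp only
      refine hmon 0 _ _ _ _ (fun j hj => absurd hj (Fin.not_lt_zero j)) ?_ ?_
      · simpa using ha
      · simpa using hb
    set T' : B 0 → B 0 → (∀ i : Fin m, B i.succ) → (∀ i : Fin m, B i.succ) →
        (∀ i : Fin m, B i.succ) :=
      fun a b x' y' => Fin.tail (T (Fin.cons a x') (Fin.cons b y')) with hT'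
    have hsplit : ∀ (a b : B 0) (x' y' : ∀ i : Fin m, B i.succ),
        T (Fin.cons a x') (Fin.cons b y') = Fin.cons (T0 a b) (T' a b x' y') := by
      intro a b x' y'
      funext i
      refine Fin.cases ?_ (fun j => ?_) i
      · rw [Fin.cons_zero]
        have h0 := hT0x (Fin.cons a x') (Fin.cons b y')
        simpa using h0
      · rw [Fin.cons_succ]
        rfl
    -- the fibered inequality, from the induction hypothesis
    have hihcond : ∀ a b : B 0,
        (∑' x', f (Fin.cons a x')) * (∑' y', g (Fin.cons b y')) ≤
        (∑' t', h (Fin.cons (T0 a b) t')) * (∑' s', k (Fin.cons (a + b - T0 a b) s')) := by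
      intro a b
      refine ih (fun i => B i.succ) (fun i => instB i.succ) (fun i => ord i.succ)
        (fun i => hord i.succ) (T' a b) ?_ ?_ ?_
        (fun x' => f (Fin.cons a x')) (fun y' => g (Fin.cons b y'))
        (fun t' => h (Fin.cons (T0 a b) t')) (fun s' => k (Fin.cons (a + b - T0 a b) s')) ?_
      · -- equivariance of the fiber map
        intro x' y' z'
        have h1 : ∀ (c : B 0) (u v : ∀ i : Fin m, B i.succ),
            Fin.cons c (u + v) = Fin.cons c u + Fin.cons (0 : B 0) v := by
          intro c u v
          rw [hconsadd, add_zero]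
        rw [hT']
        simp only
        rw [h1 a, h1 b, hTE]
        funext j
        simp [Fin.tail]
      · -- triangularity of the fiber map
        intro i x' y' x2 y2 hcond
        show T (Fin.cons a x') (Fin.cons b y') i.succ = T (Fin.cons a x2) (Fin.cons b y2) i.succ
        apply htri i.succ
        intro j hj
        rcases Fin.eq_zero_or_eq_succ j with rfl | ⟨j', rfl⟩
        · simp
        · have hj' : j' ≤ i := by
            rwa [Fin.succ_le_succ_iff] at hj
          simpa using hcond j' hj'
      · -- monotonicity of the fiber map
        intro i x' y' x2 y2 hcond hox hoy
        show ord i.succ (T (Fin.cons a x') (Fin.cons b y') i.succ)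
          (T (Fin.cons a x2) (Fin.cons b y2) i.succ)
        refine hmon i.succ _ _ _ _ ?_ (by simpa using hox) (by simpa using hoy)
        intro j hj
        rcases Fin.eq_zero_or_eq_succ j with rfl | ⟨j', rfl⟩
        · simp
        · have hj' : j' < i := by
            rwa [Fin.succ_lt_succ_iff] at hj
          simpa using hcond j' hj'
      · -- pointwise hypothesis on the fiber
        intro x' y'
        have h0 := hyp (Fin.cons a x') (Fin.cons b y')
        rw [hsplit a b x' y'] at h0
        have harith : Fin.cons a x' + Fin.cons b y' - Fin.cons (T0 a b) (T' a b x' y') =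
            Fin.cons (a + b - T0 a b) (x' + y' - T' a b x' y') := by
          rw [hconsadd, hconssub]
        rwa [harith] at h0
    -- apply the one-block theorem on B 0
    letI instLO : LinearOrder (B 0) :=
      TotalAdditiveOrdering.toLOACG (ord 0) (hord 0)
    haveI : IsOrderedAddMonoid (B 0) := { add_le_add_left := fun a b hab c => (hord 0).2.2.2.2 a b c hab }
    have hmain := block_core (β := B 0) T0 hT0E
      (fun a a' b b' ha hb => hT0m a a' b b' ha hb)
      (fun a => ∑' x', f (Fin.cons a x')) (fun b => ∑' y', g (Fin.cons b y'))
      (fun t => ∑' t', h (Fin.cons t t')) (fun s => ∑' s', k (Fin.cons s s'))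
      hihcond
    -- reassemble the tsums
    have hli : ∀ p : (B 0 × ∀ i : Fin m, B i.succ),
        (fun x : ∀ i, B i => (x 0, Fin.tail x)) ((fun p : (B 0 × ∀ i : Fin m, B i.succ) =>
          Fin.cons p.1 p.2) p) = p := by
      intro p
      refine Prod.ext ?_ ?_
      · simp
      · simp [Fin.tail_cons]
    have hri : ∀ x : (∀ i, B i),
        (fun p : (B 0 × ∀ i : Fin m, B i.succ) => Fin.cons p.1 p.2)
          ((fun x : ∀ i, B i => (x 0, Fin.tail x)) x) = x := fun x => Fin.cons_self_tail x
    have hsum : ∀ (φ : (∀ i, B i) → ℝ≥0∞),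
        (∑' x, φ x) = ∑' a, ∑' x', φ (Fin.cons a x') := by
      intro φ
      have key1 := Equiv.tsum_eq (show (B 0 × ∀ i : Fin m, B i.succ) ≃ (∀ i, B i) from
        ⟨fun p => Fin.cons p.1 p.2, fun x => (x 0, Fin.tail x), hli, hri⟩) φ
      rw [← key1]
      simp only [Equiv.coe_fn_mk]
      exact ENNReal.tsum_prod (f := fun a x' => φ (Fin.cons a x'))
    rw [hsum f, hsum g, hsum h, hsum k]
    exact hmain

/-- **Theorem 1.3 of Halikias–Klartag–Slomka.** Every translation equivariant operation
`T : ℤⁿ × ℤⁿ → ℤⁿ` which is monotone in the sense of Knothe admits a Brunn–Minkowski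
inequality. -/
theorem discrete_brunn_minkowski {n : ℕ} (hn : 1 ≤ n)
    (T : (Fin n → ℤ) → (Fin n → ℤ) → (Fin n → ℤ))
    (hTE : TranslationEquivariant T) (hT : KnotheMonotone T)
    (f g h k : (Fin n → ℤ) → ℝ≥0)
    (hyp : ∀ x y, f x * g y ≤ h (T x y) * k (x + y - T x y)) :
    (∑' x, (f x : ℝ≥0∞)) * (∑' x, (g x : ℝ≥0∞)) ≤
      (∑' x, (h x : ℝ≥0∞)) * (∑' x, (k x : ℝ≥0∞)) := by
  classical
  obtain ⟨kk, hkk, ℓ, hℓsum, e, ord, hprops, hknothe⟩ := hT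
  -- conjugate everything through `e`
  set Tc : ((i : Fin kk) → Fin (ℓ i) → ℤ) → ((i : Fin kk) → Fin (ℓ i) → ℤ) →
      ((i : Fin kk) → Fin (ℓ i) → ℤ) := fun a b => e (T (e.symm a) (e.symm b)) with hTc
  have hTEc : ∀ a b z, Tc (a + z) (b + z) = Tc a b + z := by
    intro a b z
    rw [hTc]
    simp only [map_add]
    rw [hTE (e.symm a) (e.symm b) (e.symm z), map_add, AddEquiv.apply_symm_apply]
  have htric : ∀ (i : Fin kk) (a b a' b' : (j : Fin kk) → Fin (ℓ j) → ℤ),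
      (∀ j, j ≤ i → a j = a' j ∧ b j = b' j) → Tc a b i = Tc a' b' i := by
    intro i a b a' b' hcond
    refine hknothe.1 i (e.symm a) (e.symm b) (e.symm a') (e.symm b') ?_
    intro j hj
    simpa only [AddEquiv.apply_symm_apply] using hcond j hj
  have hmonc : ∀ (i : Fin kk) (a b a' b' : (j : Fin kk) → Fin (ℓ j) → ℤ),
      (∀ j, j < i → a j = a' j ∧ b j = b' j) →
      ord i (a i) (a' i) → ord i (b i) (b' i) → ord i (Tc a b i) (Tc a' b' i) := by
    intro i a b a' b' hcond h1 h2
    refine hknothe.2 i (e.symm a) (e.symm b) (e.symm a') (e.symm b') ?_ ?_ ?_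
    · intro j hj
      simpa only [AddEquiv.apply_symm_apply] using hcond j hj
    · simpa only [AddEquiv.apply_symm_apply] using h1
    · simpa only [AddEquiv.apply_symm_apply] using h2
  have hypc : ∀ a b, ((f (e.symm a) : ℝ≥0∞)) * ((g (e.symm b) : ℝ≥0∞)) ≤
      ((h (e.symm (Tc a b)) : ℝ≥0∞)) * ((k (e.symm (a + b - Tc a b)) : ℝ≥0∞)) := by
    intro a b
    have h0 := hyp (e.symm a) (e.symm b)
    have e1 : e.symm (Tc a b) = T (e.symm a) (e.symm b) := by
      rw [hTc]
      exact e.symm_apply_apply _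
    have e2 : e.symm (a + b - Tc a b) = e.symm a + e.symm b - T (e.symm a) (e.symm b) := by
      rw [map_sub, map_add, e1]
    rw [e1, e2]
    rw [← ENNReal.coe_mul, ← ENNReal.coe_mul]
    exact ENNReal.coe_le_coe.mpr h0
  have hmain := tensor kk (fun i => Fin (ℓ i) → ℤ) (fun i => inferInstance) ord
    (fun i => (hprops i).1) Tc hTEc htric hmonc
    (fun a => (f (e.symm a) : ℝ≥0∞)) (fun a => (g (e.symm a) : ℝ≥0∞))
    (fun a => (h (e.symm a) : ℝ≥0∞)) (fun a => (k (e.symm a) : ℝ≥0∞)) hypc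
  have hsum : ∀ (φ : (Fin n → ℤ) → ℝ≥0), (∑' x, (φ x : ℝ≥0∞)) =
      ∑' a : ((i : Fin kk) → Fin (ℓ i) → ℤ), (φ (e.symm a) : ℝ≥0∞) := by
    intro φ
    have := Equiv.tsum_eq e.symm.toEquiv (fun x => (φ x : ℝ≥0∞))
    rw [← this]
    exact tsum_congr fun a => rfl
  rw [hsum f, hsum g, hsum h, hsum k]
  exact hmain
end

section
/- Let α, β, γ, δ > 0 with max{α,β} ≤ min{γ,δ}. Let T₋ : ℤⁿ×ℤⁿ → ℤⁿ be translation equivariant and monotone in the sense of Knothe, and suppose its complementing operation T₊(x,y) = x+y−T₋(x,y) is also monotone in the sense of Knothe with respect to the same decomposition and orderings. Then for any finitely supported probability measures μ and ν on ℤⁿ there exists a coupling π of μ and ν such that, with κ₋ = π∘T₋⁻¹ and κ₊ = π∘T₊⁻¹ the push-forwards of π by T₋ and T₊, one has α·H(μ|mₙ) + β·H(ν|mₙ) ≥ γ·H(κ₋|mₙ) + δ·H(κ₊|mₙ). -/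
open scoped BigOperators ENNReal NNReal

/-- `T` and `T'` are both monotone in the sense of Knothe with respect to the *same*
decomposition and orderings. -/
def KnothePair {n : ℕ} (T T' : (Fin n → ℤ) → (Fin n → ℤ) → (Fin n → ℤ)) : Prop :=
  ∃ (k : ℕ) (_ : 1 ≤ k) (ℓ : Fin k → ℕ) (_ : ∑ i, ℓ i = n)
    (e : (Fin n → ℤ) ≃+ ((i : Fin k) → Fin (ℓ i) → ℤ))
    (ord : (i : Fin k) → (Fin (ℓ i) → ℤ) → (Fin (ℓ i) → ℤ) → Prop),
    (∀ i, TotalAdditiveOrdering (ord i) ∧ ∃ u, IsMinimalPositive (ord i) u) ∧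
    KnotheWith ℓ e ord T ∧ KnotheWith ℓ e ord T'

/-- A finitely supported probability measure on `A`, viewed as its density. -/
def IsPMF {A : Type*} (μ : A → ℝ) : Prop :=
  (∀ x, 0 ≤ μ x) ∧ (Function.support μ).Finite ∧ ∑ᶠ x, μ x = 1

/-- Relative entropy `H(μ | m)` of a finitely supported probability measure with respect to
the counting measure `m`: `∑ₓ μ(x) log μ(x)` (note `Real.log 0 = 0`, so `0 · log 0 = 0`). -/
noncomputable def relEntropy {A : Type*} (μ : A → ℝ) : ℝ :=
  ∑ᶠ x, μ x * Real.log (μ x)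

/-- Push-forward `π ∘ T⁻¹` of a (finitely supported) measure `π` by the map `T`. -/
noncomputable def pushforward {A B : Type*} (T : A → B) (π : A → ℝ) : B → ℝ :=
  fun z => ∑ᶠ p ∈ {p : A | T p = z}, π p

/-- `π` is a coupling of `μ` and `ν`: a probability measure on the product whose first and
second marginals are `μ` and `ν` respectively. -/
def IsCoupling {A B : Type*} (π : A × B → ℝ) (μ : A → ℝ) (ν : B → ℝ) : Prop :=
  IsPMF π ∧ (∀ x, ∑ᶠ y, π (x, y) = μ x) ∧ (∀ y, ∑ᶠ x, π (x, y) = ν y)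


/-! ### Toolbox: finitely supported measures, finsum ↔ Finset.sum -/

open Finset Function

section Toolbox
variable {A B : Type*}

lemma finsum_eq_sum_of_vanish (f : A → ℝ) (s : Finset A) (hs : ∀ x ∉ s, f x = 0) :
    ∑ᶠ x, f x = ∑ x ∈ s, f x := by
  apply finsum_eq_finset_sum_of_support_subset
  intro x hx
  by_contra h
  exact hx (hs x h)

lemma relEntropy_eq_sum (μ : A → ℝ) (s : Finset A) (hs : ∀ x ∉ s, μ x = 0) :
    relEntropy μ = ∑ x ∈ s, μ x * Real.log (μ x) := by
  apply finsum_eq_sum_of_vanish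
  intro x hx
  rw [hs x hx]; simp

lemma pushforward_eq_sum (T : A → B) (π : A → ℝ) (s : Finset A) (hs : ∀ p ∉ s, π p = 0)
    [DecidablePred fun p => p ∈ s] (z : B) [DecidablePred fun p => T p = z] :
    pushforward T π z = ∑ p ∈ s.filter (fun p => T p = z), π p := by
  unfold pushforward
  apply finsum_mem_eq_sum_of_inter_support_eq
  ext p
  simp only [Set.mem_inter_iff, Set.mem_setOf_eq, Finset.coe_filter, Function.mem_support]
  constructor
  · rintro ⟨h1, h2⟩
    refine ⟨⟨?_, h1⟩, h2⟩
    by_contra h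
    exact h2 (hs p h)
  · rintro ⟨⟨_, h1⟩, h2⟩
    exact ⟨h1, h2⟩

/-- canonical support finset of a pmf -/
lemma pmf_support (hμ : IsPMF (μ : A → ℝ)) :
    ∃ s : Finset A, (∀ x ∈ s, 0 < μ x) ∧ (∀ x ∉ s, μ x = 0) ∧ (∑ x ∈ s, μ x = 1) := by
  obtain ⟨h0, hfin, hsum⟩ := hμ
  refine ⟨hfin.toFinset, ?_, ?_, ?_⟩
  · intro x hx
    rw [Set.Finite.mem_toFinset, Function.mem_support] at hx
    exact lt_of_le_of_ne (h0 x) (Ne.symm hx)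
  · intro x hx
    rw [Set.Finite.mem_toFinset, Function.mem_support, not_not] at hx
    exact hx
  · rw [← finsum_eq_sum_of_vanish μ hfin.toFinset]
    · exact hsum
    · intro x hx
      rw [Set.Finite.mem_toFinset, Function.mem_support, not_not] at hx
      exact hx

lemma isPMF_of_sum (μ : A → ℝ) (s : Finset A) (h0 : ∀ x, 0 ≤ μ x) (hs : ∀ x ∉ s, μ x = 0)
    (hsum : ∑ x ∈ s, μ x = 1) : IsPMF μ := by
  refine ⟨h0, ?_, ?_⟩
  · apply Set.Finite.subset s.finite_toSet
    intro x hx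
    rw [Function.mem_support] at hx
    by_contra h
    exact hx (hs x h)
  · rw [finsum_eq_sum_of_vanish μ s hs]; exact hsum

lemma pmf_le_one (hμ : IsPMF (μ : A → ℝ)) (x : A) : μ x ≤ 1 := by
  obtain ⟨s, hpos, hz, hsum⟩ := pmf_support hμ
  by_cases hx : x ∈ s
  · rw [← hsum]
    exact Finset.single_le_sum (fun i hi => le_of_lt (hpos i hi)) hx
  · rw [hz x hx]; norm_num

lemma relEntropy_nonpos (hμ : IsPMF (μ : A → ℝ)) : relEntropy μ ≤ 0 := by
  obtain ⟨s, hpos, hz, hsum⟩ := pmf_support hμ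
  rw [relEntropy_eq_sum μ s hz]
  apply Finset.sum_nonpos
  intro i hi
  have h1 : 0 ≤ μ i := le_of_lt (hpos i hi)
  have h2 := pmf_le_one hμ i
  have := Real.log_nonpos h1 h2
  nlinarith

/-- the pushforward as a function equals fiberwise sums  -/
lemma pushforward_eq_fiberSum (T : A → B) (π : A → ℝ) (s : Finset A) (hs : ∀ p ∉ s, π p = 0)
    [DecidableEq B] :
    pushforward T π = fun z => ∑ p ∈ s.filter (fun p => T p = z), π p := by
  classical
  funext z
  exact pushforward_eq_sum T π s hs z

lemma pushforward_isPMF (T : A → B) (π : A → ℝ) (hπ : IsPMF π) : IsPMF (pushforward T π) := by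
  classical
  obtain ⟨s, hpos, hz, hsum⟩ := pmf_support hπ
  rw [pushforward_eq_fiberSum T π s hz]
  apply isPMF_of_sum _ (s.image T)
  · intro z
    apply Finset.sum_nonneg
    intro p hp
    exact le_of_lt (hpos p (Finset.mem_filter.1 hp).1)
  · intro z hz2
    apply Finset.sum_eq_zero
    intro p hp
    obtain ⟨hp1, hp2⟩ := Finset.mem_filter.1 hp
    exact absurd (Finset.mem_image_of_mem T hp1) (by rw [hp2]; exact hz2)
  · rw [← hsum]
    exact Finset.sum_fiberwise_of_maps_to (fun p hp => Finset.mem_image_of_mem T hp) π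

/-- family entropy identity: entropy of fiberwise sums -/
lemma relEntropy_fiberSum [DecidableEq B] (T : A → B) (w : A → ℝ) (s : Finset A) :
    relEntropy (fun z => ∑ p ∈ s.filter (fun p => T p = z), w p)
      = ∑ i ∈ s, w i * Real.log (∑ j ∈ s.filter (fun j => T j = T i), w j) := by
  classical
  rw [relEntropy_eq_sum _ (s.image T)]
  · apply Finset.sum_image'
    intro i hi
    rw [Finset.sum_mul]
    apply Finset.sum_congr rfl
    intro j hj
    obtain ⟨hj1, hj2⟩ := Finset.mem_filter.1 hj
    rw [hj2]
  · intro z hz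
    apply Finset.sum_eq_zero
    intro p hp
    obtain ⟨hp1, hp2⟩ := Finset.mem_filter.1 hp
    exact absurd (Finset.mem_image_of_mem T hp1) (by rw [hp2]; exact hz)

end Toolbox

/-! ### Analytic lemmas for the spill terms -/

section Analytic

private noncomputable def spillD (wa V : ℝ) : ℝ := (V - wa) * (Real.log V - Real.log (V - wa))

lemma spillD_nonneg {wa V : ℝ} (h0 : 0 < wa) (h : wa ≤ V) : 0 ≤ spillD wa V := by
  rcases eq_or_lt_of_le h with h1 | h1
  · simp [spillD, ← h1]
  · have h2 : 0 < V - wa := by linarith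
    have h3 : Real.log (V - wa) ≤ Real.log V := Real.log_le_log h2 (by linarith)
    unfold spillD
    nlinarith

lemma spillD_mono {wa V V' : ℝ} (h0 : 0 < wa) (hV : wa ≤ V) (hVV' : V ≤ V') :
    spillD wa V ≤ spillD wa V' := by
  rcases eq_or_lt_of_le hV with h1 | h1
  · rw [show spillD wa V = 0 by simp [spillD, ← h1]]
    exact spillD_nonneg h0 (le_trans hV hVV')
  -- now wa < V ≤ V'
  set g : ℝ → ℝ := fun v => v * (Real.log (v + wa) - Real.log v) with hg_def
  have hderiv : ∀ v ∈ Set.Ioi (0:ℝ),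
      HasDerivAt g (Real.log (v + wa) - Real.log v + v * ((v + wa)⁻¹ - v⁻¹)) v := by
    intro v hv
    have hv0 : (0:ℝ) < v := hv
    have h1 : HasDerivAt (fun w => Real.log (w + wa)) (v + wa)⁻¹ v := by
      have := (Real.hasDerivAt_log (x := v + wa) (by positivity)).comp v
        ((hasDerivAt_id v).add_const wa)
      simpa [Function.comp_def] using this
    have h2 : HasDerivAt Real.log v⁻¹ v := Real.hasDerivAt_log (ne_of_gt hv0)
    have := (hasDerivAt_id v).mul (h1.sub h2)
    simp only [id_eq, one_mul] at this
    exact this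
  have hmono : MonotoneOn g (Set.Ioi (0:ℝ)) := by
    apply monotoneOn_of_deriv_nonneg (convex_Ioi 0)
    · exact fun v hv => ((hderiv v hv).continuousAt).continuousWithinAt
    · rw [interior_Ioi]
      exact fun v hv => ((hderiv v hv).differentiableAt).differentiableWithinAt
    · rw [interior_Ioi]
      intro v hv
      rw [(hderiv v hv).deriv]
      have hv0 : (0:ℝ) < v := hv
      have hkey : Real.log (v + wa) - Real.log v ≥ wa / (v + wa) := by
        have hx : (0:ℝ) < v / (v + wa) := by positivity
        have := Real.log_le_sub_one_of_pos hx
        rw [Real.log_div (ne_of_gt hv0) (by positivity)] at this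
        have hvwa : (0:ℝ) < v + wa := by positivity
        rw [div_sub' (ne_of_gt hvwa)] at this
        have hsimp : (v - (v + wa) * 1) / (v + wa) = -(wa / (v + wa)) := by
          field_simp
          ring
        rw [hsimp] at this
        linarith
      have h2 : v * ((v + wa)⁻¹ - v⁻¹) = - (wa / (v + wa)) := by
        field_simp
        ring
      rw [h2]
      linarith
  have h2 : g (V - wa) ≤ g (V' - wa) := by
    apply hmono (by simp; linarith) (by simp; linarith) (by linarith)
  unfold spillD
  have e1 : V - wa + wa = V := by ring
  have e2 : V' - wa + wa = V' := by ring
  simpa [hg_def, e1, e2] using h2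

/-- the scalar step inequality used in the core induction -/
lemma step_ineq {wa WA WB WX WY : ℝ} (h0 : 0 < wa)
    (hA : wa ≤ WA) (hB : wa ≤ WB) (hX : wa ≤ WX) (hY : wa ≤ WY)
    (htriv : WA = wa ∨ WB = wa)
    (hAc : WA ≤ WX ∨ WA ≤ WY) (hBc : WB ≤ WX ∨ WB ≤ WY) :
    wa * (Real.log WA + Real.log WB) + spillD wa WA + spillD wa WB ≤
      wa * (Real.log WX + Real.log WY) + spillD wa WX + spillD wa WY := by
  have hDX := spillD_nonneg h0 hX
  have hDY := spillD_nonneg h0 hY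
  have logmono : ∀ {P Q : ℝ}, 0 < P → P ≤ Q → Real.log P ≤ Real.log Q :=
    fun hP hPQ => Real.log_le_log hP hPQ
  rcases htriv with h | h
  · -- WA = wa
    have hDA : spillD wa WA = 0 := by simp [spillD, h]
    rcases hBc with hBX | hBY
    · have l1 : Real.log WA ≤ Real.log WY := logmono (by linarith) (by linarith [h])
      have l2 : Real.log WB ≤ Real.log WX := logmono (by linarith) hBX
      have d1 : spillD wa WB ≤ spillD wa WX := spillD_mono h0 hB hBX
      nlinarith
    · have l1 : Real.log WA ≤ Real.log WX := logmono (by linarith) (by linarith [h])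
      have l2 : Real.log WB ≤ Real.log WY := logmono (by linarith) hBY
      have d1 : spillD wa WB ≤ spillD wa WY := spillD_mono h0 hB hBY
      nlinarith
  · -- WB = wa
    have hDB : spillD wa WB = 0 := by simp [spillD, h]
    rcases hAc with hAX | hAY
    · have l1 : Real.log WB ≤ Real.log WY := logmono (by linarith) (by linarith [h])
      have l2 : Real.log WA ≤ Real.log WX := logmono (by linarith) hAX
      have d1 : spillD wa WA ≤ spillD wa WX := spillD_mono h0 hA hAX
      nlinarith
    · have l1 : Real.log WB ≤ Real.log WX := logmono (by linarith) (by linarith [h])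
      have l2 : Real.log WA ≤ Real.log WY := logmono (by linarith) hAY
      have d1 : spillD wa WA ≤ spillD wa WY := spillD_mono h0 hA hAY
      nlinarith

end Analytic

/-! ### The core chain lemma -/

section Core

lemma rearr {ι F : Type*} [DecidableEq ι] [DecidableEq F] (w : ι → ℝ) (f : ι → F)
    (c₀ : Finset ι) (a : ι) (ha : a ∉ c₀) :
    ∑ i ∈ insert a c₀, w i * Real.log (∑ j ∈ (insert a c₀).filter (fun j => f j = f i), w j)
      = (∑ i ∈ c₀, w i * Real.log (∑ j ∈ c₀.filter (fun j => f j = f i), w j))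
        + w a * Real.log (∑ j ∈ (insert a c₀).filter (fun j => f j = f a), w j)
        + spillD (w a) (∑ j ∈ (insert a c₀).filter (fun j => f j = f a), w j) := by
  have hfilA : (insert a c₀).filter (fun j => f j = f a)
      = insert a (c₀.filter (fun j => f j = f a)) := by
    rw [Finset.filter_insert]; simp
  set WA := ∑ j ∈ (insert a c₀).filter (fun j => f j = f a), w j with hWA
  have hWA' : WA = w a + ∑ j ∈ c₀.filter (fun j => f j = f a), w j := by
    rw [hWA, hfilA, Finset.sum_insert (by simp [ha])]
  rw [Finset.sum_insert ha]
  rw [← Finset.sum_filter_add_sum_filter_not c₀ (fun i => f i = f a)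
        (fun i => w i * Real.log (∑ j ∈ (insert a c₀).filter (fun j => f j = f i), w j)),
      ← Finset.sum_filter_add_sum_filter_not c₀ (fun i => f i = f a)
        (fun i => w i * Real.log (∑ j ∈ c₀.filter (fun j => f j = f i), w j))]
  have e1 : ∑ i ∈ c₀.filter (fun i => f i = f a),
      w i * Real.log (∑ j ∈ (insert a c₀).filter (fun j => f j = f i), w j)
      = ∑ i ∈ c₀.filter (fun i => f i = f a), w i * Real.log WA := by
    apply Finset.sum_congr rfl
    intro i hi
    obtain ⟨hi1, hi2⟩ := Finset.mem_filter.1 hi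
    congr 2
    apply Finset.sum_congr _ (fun _ _ => rfl)
    apply Finset.filter_congr
    intro j _; simp [hi2]
  have e2 : ∑ i ∈ c₀.filter (fun i => f i = f a),
      w i * Real.log (∑ j ∈ c₀.filter (fun j => f j = f i), w j)
      = ∑ i ∈ c₀.filter (fun i => f i = f a), w i * Real.log (WA - w a) := by
    apply Finset.sum_congr rfl
    intro i hi
    obtain ⟨hi1, hi2⟩ := Finset.mem_filter.1 hi
    have hfe : c₀.filter (fun j => f j = f i) = c₀.filter (fun j => f j = f a) := by
      apply Finset.filter_congr; intro j _; simp [hi2]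
    rw [hfe]
    congr 2
    rw [hWA']; ring
  have e3 : ∑ i ∈ c₀.filter (fun i => ¬ f i = f a),
      w i * Real.log (∑ j ∈ (insert a c₀).filter (fun j => f j = f i), w j)
      = ∑ i ∈ c₀.filter (fun i => ¬ f i = f a),
          w i * Real.log (∑ j ∈ c₀.filter (fun j => f j = f i), w j) := by
    apply Finset.sum_congr rfl
    intro i hi
    obtain ⟨hi1, hi2⟩ := Finset.mem_filter.1 hi
    congr 3
    rw [Finset.filter_insert, if_neg (fun h => hi2 (Eq.symm h))]
  rw [e1, e2, e3]
  have hsum : ∑ i ∈ c₀.filter (fun i => f i = f a), w i = WA - w a := by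
    rw [hWA']; ring
  rw [← Finset.sum_mul, ← Finset.sum_mul, hsum]
  unfold spillD
  ring


lemma unif_dichot {ι X Y W : Type*} [DecidableEq ι]
    [DecidableEq X] [DecidableEq Y] [DecidableEq W]
    (w : ι → ℝ) (x : ι → X) (y : ι → Y) (f : ι → W) (c₀ : Finset ι) (a : ι)
    (hain : a ∈ insert a c₀)
    (hd : ∀ i ∈ insert a c₀, ∀ j ∈ insert a c₀, f i = f j → x i = x j ∨ y i = y j) :
    ((insert a c₀).filter (fun j => f j = f a) ⊆ (insert a c₀).filter (fun j => x j = x a))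
    ∨ ((insert a c₀).filter (fun j => f j = f a) ⊆ (insert a c₀).filter (fun j => y j = y a)) := by
  by_contra hcon
  push_neg at hcon
  obtain ⟨h1, h2⟩ := hcon
  rw [Finset.not_subset] at h1 h2
  obtain ⟨i, hi, hix⟩ := h1
  obtain ⟨j, hj, hjy⟩ := h2
  obtain ⟨hi1, hi2⟩ := Finset.mem_filter.1 hi
  obtain ⟨hj1, hj2⟩ := Finset.mem_filter.1 hj
  have hix' : ¬ x i = x a := fun h => hix (Finset.mem_filter.2 ⟨hi1, h⟩)
  have hjy' : ¬ y j = y a := fun h => hjy (Finset.mem_filter.2 ⟨hj1, h⟩)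
  have hyi : y i = y a := (hd i hi1 a hain hi2).resolve_left hix'
  have hxj : x j = x a := (hd j hj1 a hain hj2).resolve_right hjy'
  have : f i = f j := hi2.trans hj2.symm
  rcases hd i hi1 j hj1 this with h | h
  · exact hix' (h.trans hxj)
  · exact hjy' (h.symm.trans hyi)

lemma core_chain {ι X Y U V : Type*} [LinearOrder ι]
    [DecidableEq X] [DecidableEq Y] [DecidableEq U] [DecidableEq V]
    (w : ι → ℝ) (x : ι → X) (y : ι → Y) (t : ι → U) (s : ι → V)
    (c : Finset ι) :
    (∀ i ∈ c, 0 < w i) →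
    (∀ i ∈ c, ∀ j ∈ c, ∀ k ∈ c, i ≤ j → j ≤ k → t i = t k → t i = t j) →
    (∀ i ∈ c, ∀ j ∈ c, ∀ k ∈ c, i ≤ j → j ≤ k → s i = s k → s i = s j) →
    (∀ i ∈ c, ∀ j ∈ c, t i = t j → s i = s j → i = j) →
    (∀ i ∈ c, ∀ j ∈ c, t i = t j → x i = x j ∨ y i = y j) →
    (∀ i ∈ c, ∀ j ∈ c, s i = s j → x i = x j ∨ y i = y j) →
    ∑ i ∈ c, w i * (Real.log (∑ j ∈ c.filter (fun j => t j = t i), w j)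
                   + Real.log (∑ j ∈ c.filter (fun j => s j = s i), w j))
    ≤ ∑ i ∈ c, w i * (Real.log (∑ j ∈ c.filter (fun j => x j = x i), w j)
                     + Real.log (∑ j ∈ c.filter (fun j => y j = y i), w j)) := by
  classical
  induction c using Finset.induction_on_max with
  | empty => intro _ _ _ _ _ _; simp
  | insert a c₀ hlt ih =>
    intro hw hconvt hconvs hinj hdt hds
    have ha : a ∉ c₀ := fun h => lt_irrefl a (hlt a h)
    have hmem : ∀ i ∈ c₀, i ∈ insert a c₀ := fun i hi => Finset.mem_insert_of_mem hi
    have hain : a ∈ insert a c₀ := Finset.mem_insert_self a c₀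
    have hwa : 0 < w a := hw a hain
    -- weight sums
    set WA := ∑ j ∈ (insert a c₀).filter (fun j => t j = t a), w j with hWAdef
    set WB := ∑ j ∈ (insert a c₀).filter (fun j => s j = s a), w j with hWBdef
    set WX := ∑ j ∈ (insert a c₀).filter (fun j => x j = x a), w j with hWXdef
    set WY := ∑ j ∈ (insert a c₀).filter (fun j => y j = y a), w j with hWYdef
    have hfilpos : ∀ (d : Finset ι), d ⊆ insert a c₀ → a ∈ d → w a ≤ ∑ j ∈ d, w j := by
      intro d hd had
      exact Finset.single_le_sum (fun i hi => le_of_lt (hw i (hd hi))) had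
    have hWApos : w a ≤ WA :=
      hfilpos _ (Finset.filter_subset _ _) (Finset.mem_filter.2 ⟨hain, rfl⟩)
    have hWBpos : w a ≤ WB :=
      hfilpos _ (Finset.filter_subset _ _) (Finset.mem_filter.2 ⟨hain, rfl⟩)
    have hWXpos : w a ≤ WX :=
      hfilpos _ (Finset.filter_subset _ _) (Finset.mem_filter.2 ⟨hain, rfl⟩)
    have hWYpos : w a ≤ WY :=
      hfilpos _ (Finset.filter_subset _ _) (Finset.mem_filter.2 ⟨hain, rfl⟩)
    -- corner property: one of the t-fiber, s-fiber of a is trivial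
    have htriv : WA = w a ∨ WB = w a := by
      by_cases hA : (c₀.filter (fun j => t j = t a)).Nonempty
      · right
        -- show s-fiber in c₀ empty
        have hBempty : c₀.filter (fun j => s j = s a) = ∅ := by
          by_contra hB
          obtain ⟨i, hi⟩ := hA
          obtain ⟨j, hj⟩ := Finset.nonempty_of_ne_empty hB
          obtain ⟨hi1, hi2⟩ := Finset.mem_filter.1 hi
          obtain ⟨hj1, hj2⟩ := Finset.mem_filter.1 hj
          rcases le_total i j with hij | hij
          · have : t i = t j := hconvt i (hmem i hi1) j (hmem j hj1) a hain hij
              (le_of_lt (hlt j hj1)) hi2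
            have : t j = t a := this ▸ hi2
            exact ha (hinj j (hmem j hj1) a hain this hj2 ▸ hj1)
          · have : s j = s i := hconvs j (hmem j hj1) i (hmem i hi1) a hain hij
              (le_of_lt (hlt i hi1)) hj2
            have hsi : s i = s a := this ▸ hj2
            exact ha (hinj i (hmem i hi1) a hain hi2 hsi ▸ hi1)
        rw [hWBdef, Finset.filter_insert, if_pos rfl, hBempty,
          Finset.sum_insert (by simp), Finset.sum_empty, add_zero]
      · left
        have hAempty : c₀.filter (fun j => t j = t a) = ∅ :=
          Finset.not_nonempty_iff_eq_empty.1 hA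
        rw [hWAdef, Finset.filter_insert, if_pos rfl, hAempty,
          Finset.sum_insert (by simp), Finset.sum_empty, add_zero]
    have hACsub := unif_dichot w x y t c₀ a hain (fun i hi j hj h => hdt i hi j hj h)
    have hBCsub := unif_dichot w x y s c₀ a hain (fun i hi j hj h => hds i hi j hj h)
    have hsub_le : ∀ (d e : Finset ι), d ⊆ insert a c₀ → e ⊆ insert a c₀ → d ⊆ e →
        ∑ j ∈ d, w j ≤ ∑ j ∈ e, w j := by
      intro d e hd he hde
      exact Finset.sum_le_sum_of_subset_of_nonneg hde
        (fun i hi _ => le_of_lt (hw i (he hi)))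
    have hAc : WA ≤ WX ∨ WA ≤ WY := by
      rcases hACsub with h | h
      · exact Or.inl (hsub_le _ _ (Finset.filter_subset _ _) (Finset.filter_subset _ _) h)
      · exact Or.inr (hsub_le _ _ (Finset.filter_subset _ _) (Finset.filter_subset _ _) h)
    have hBc : WB ≤ WX ∨ WB ≤ WY := by
      rcases hBCsub with h | h
      · exact Or.inl (hsub_le _ _ (Finset.filter_subset _ _) (Finset.filter_subset _ _) h)
      · exact Or.inr (hsub_le _ _ (Finset.filter_subset _ _) (Finset.filter_subset _ _) h)
    have hstep := step_ineq hwa hWApos hWBpos hWXpos hWYpos htriv hAc hBc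
    -- apply the induction hypothesis on c₀
    have ihc := ih (fun i hi => hw i (hmem i hi))
      (fun i hi j hj k hk => hconvt i (hmem i hi) j (hmem j hj) k (hmem k hk))
      (fun i hi j hj k hk => hconvs i (hmem i hi) j (hmem j hj) k (hmem k hk))
      (fun i hi j hj => hinj i (hmem i hi) j (hmem j hj))
      (fun i hi j hj => hdt i (hmem i hi) j (hmem j hj))
      (fun i hi j hj => hds i (hmem i hi) j (hmem j hj))
    -- rearrange both sides
    simp only [mul_add, Finset.sum_add_distrib] at ihc ⊢
    rw [rearr w t c₀ a ha, rearr w s c₀ a ha, rearr w x c₀ a ha, rearr w y c₀ a ha]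
    rw [← hWAdef, ← hWBdef, ← hWXdef, ← hWYdef]
    linarith
end Core

/-! ### Monotone coupling -/

section MC

lemma monotone_coupling {X : Type*} [LinearOrder X] [DecidableEq X] :
    ∀ (N : ℕ) (μ ν : X → ℝ) (sμ sν : Finset X),
    sμ.card + sν.card ≤ N →
    (∀ a, 0 ≤ μ a) → (∀ a ∉ sμ, μ a = 0) → (∀ a ∈ sμ, 0 < μ a) →
    (∀ b, 0 ≤ ν b) → (∀ b ∉ sν, ν b = 0) → (∀ b ∈ sν, 0 < ν b) →
    (∑ a ∈ sμ, μ a = ∑ b ∈ sν, ν b) →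
    ∃ (c : Finset (X × X)) (w : X × X → ℝ),
      (∀ p ∈ c, 0 < w p) ∧ (∀ p ∉ c, w p = 0) ∧
      (∀ a, μ a = ∑ p ∈ c.filter (fun p => p.1 = a), w p) ∧
      (∀ b, ν b = ∑ p ∈ c.filter (fun p => p.2 = b), w p) ∧
      (∀ p ∈ c, ∀ q ∈ c, (p.1 ≤ q.1 ∧ p.2 ≤ q.2) ∨ (q.1 ≤ p.1 ∧ q.2 ≤ p.2)) ∧
      (∀ p ∈ c, p.1 ∈ sμ ∧ p.2 ∈ sν) := by
  intro N
  induction N with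
  | zero =>
    intro μ ν sμ sν hcard hμ0 hμz hμpos hν0 hνz hνpos hmass
    have h1 : sμ = ∅ := Finset.card_eq_zero.1 (by omega)
    have h2 : sν = ∅ := Finset.card_eq_zero.1 (by omega)
    refine ⟨∅, fun _ => 0, by simp, by simp, ?_, ?_, by simp, by simp⟩
    · intro a; simp [hμz a (by simp [h1])]
    · intro b; simp [hνz b (by simp [h2])]
  | succ N ih =>
    intro μ ν sμ sν hcard hμ0 hμz hμpos hν0 hνz hνpos hmass
    by_cases hμe : sμ = ∅
    · have hz : ∑ b ∈ sν, ν b = 0 := by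
        rw [← hmass, hμe]; simp
      have h2 : sν = ∅ := by
        by_contra h
        obtain ⟨b, hb⟩ := Finset.nonempty_of_ne_empty h
        have : 0 < ∑ b ∈ sν, ν b :=
          Finset.sum_pos' (fun i hi => le_of_lt (hνpos i hi)) ⟨b, hb, hνpos b hb⟩
        linarith
      refine ⟨∅, fun _ => 0, by simp, by simp, ?_, ?_, by simp, by simp⟩
      · intro a; simp [hμz a (by simp [hμe])]
      · intro b; simp [hνz b (by simp [h2])]
    by_cases hνe : sν = ∅
    · have hz : ∑ a ∈ sμ, μ a = 0 := by
        rw [hmass, hνe]; simp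
      have h1 : sμ = ∅ := by
        by_contra h
        obtain ⟨a, haa⟩ := Finset.nonempty_of_ne_empty h
        have : 0 < ∑ a ∈ sμ, μ a :=
          Finset.sum_pos' (fun i hi => le_of_lt (hμpos i hi)) ⟨a, haa, hμpos a haa⟩
        linarith
      exact absurd h1 hμe
    -- both supports nonempty
    have hμne : sμ.Nonempty := Finset.nonempty_of_ne_empty hμe
    have hνne : sν.Nonempty := Finset.nonempty_of_ne_empty hνe
    set a₀ := sμ.min' hμne with ha₀
    set b₀ := sν.min' hνne with hb₀
    have ha₀m : a₀ ∈ sμ := Finset.min'_mem _ _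
    have hb₀m : b₀ ∈ sν := Finset.min'_mem _ _
    set m := min (μ a₀) (ν b₀) with hm
    have hmpos : 0 < m := lt_min (hμpos a₀ ha₀m) (hνpos b₀ hb₀m)
    have hmμ : m ≤ μ a₀ := min_le_left _ _
    have hmν : m ≤ ν b₀ := min_le_right _ _
    set μ' := Function.update μ a₀ (μ a₀ - m) with hμ'
    set ν' := Function.update ν b₀ (ν b₀ - m) with hν'
    set sμ' := if μ a₀ - m = 0 then sμ.erase a₀ else sμ with hsμ'
    set sν' := if ν b₀ - m = 0 then sν.erase b₀ else sν with hsν'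
    have hsμ'sub : sμ' ⊆ sμ := by
      rw [hsμ']; split
      · exact Finset.erase_subset _ _
      · exact Finset.Subset.refl _
    have hsν'sub : sν' ⊆ sν := by
      rw [hsν']; split
      · exact Finset.erase_subset _ _
      · exact Finset.Subset.refl _
    have hkey : μ a₀ - m = 0 ∨ ν b₀ - m = 0 := by
      rcases min_choice (μ a₀) (ν b₀) with h | h
      · left
        have hh : m = μ a₀ := h
        linarith
      · right
        have hh : m = ν b₀ := h
        linarith
    -- cardinality decreases
    have hcard' : sμ'.card + sν'.card ≤ N := by
      have h1 : sμ'.card ≤ sμ.card := Finset.card_le_card hsμ'sub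
      have h2 : sν'.card ≤ sν.card := Finset.card_le_card hsν'sub
      have hμc : 1 ≤ sμ.card := Finset.card_pos.2 hμne
      have hνc : 1 ≤ sν.card := Finset.card_pos.2 hνne
      rcases hkey with h | h
      · have : sμ' = sμ.erase a₀ := by rw [hsμ', if_pos h]
        have := this ▸ Finset.card_erase_of_mem ha₀m
        omega
      · have : sν' = sν.erase b₀ := by rw [hsν', if_pos h]
        have := this ▸ Finset.card_erase_of_mem hb₀m
        omega
    -- hypotheses for μ'
    have hμ0' : ∀ a, 0 ≤ μ' a := by
      intro a
      rw [hμ']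
      rcases eq_or_ne a a₀ with h | h
      · rw [h, Function.update_self]; linarith
      · rw [Function.update_of_ne h]; exact hμ0 a
    have hμz' : ∀ a ∉ sμ', μ' a = 0 := by
      intro a has
      rcases eq_or_ne a a₀ with h | h
      · subst h
        rw [hμ', Function.update_self]
        by_contra hne
        have : sμ' = sμ := by rw [hsμ', if_neg hne]
        exact has (this ▸ ha₀m)
      · rw [hμ', Function.update_of_ne h]
        apply hμz
        intro hmem
        apply has
        rw [hsμ']; split
        · exact Finset.mem_erase.2 ⟨h, hmem⟩
        · exact hmem
    have hμpos' : ∀ a ∈ sμ', 0 < μ' a := by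
      intro a haSet
      rcases eq_or_ne a a₀ with h | h
      · subst h
        rw [hμ', Function.update_self]
        have hne : ¬ (μ a₀ - m = 0) := by
          intro hzz
          have : sμ' = sμ.erase a₀ := by rw [hsμ', if_pos hzz]
          rw [this] at haSet
          exact (Finset.mem_erase.1 haSet).1 rfl
        have := hμ0' a₀
        rw [hμ', Function.update_self] at this
        exact lt_of_le_of_ne this (Ne.symm hne)
      · rw [hμ', Function.update_of_ne h]
        exact hμpos a (hsμ'sub haSet)
    have hν0' : ∀ b, 0 ≤ ν' b := by
      intro b
      rw [hν']
      rcases eq_or_ne b b₀ with h | h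
      · rw [h, Function.update_self]; linarith
      · rw [Function.update_of_ne h]; exact hν0 b
    have hνz' : ∀ b ∉ sν', ν' b = 0 := by
      intro b hbs
      rcases eq_or_ne b b₀ with h | h
      · subst h
        rw [hν', Function.update_self]
        by_contra hne
        have : sν' = sν := by rw [hsν', if_neg hne]
        exact hbs (this ▸ hb₀m)
      · rw [hν', Function.update_of_ne h]
        apply hνz
        intro hmem
        apply hbs
        rw [hsν']; split
        · exact Finset.mem_erase.2 ⟨h, hmem⟩
        · exact hmem
    have hνpos' : ∀ b ∈ sν', 0 < ν' b := by
      intro b hbSet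
      rcases eq_or_ne b b₀ with h | h
      · subst h
        rw [hν', Function.update_self]
        have hne : ¬ (ν b₀ - m = 0) := by
          intro hzz
          have : sν' = sν.erase b₀ := by rw [hsν', if_pos hzz]
          rw [this] at hbSet
          exact (Finset.mem_erase.1 hbSet).1 rfl
        have := hν0' b₀
        rw [hν', Function.update_self] at this
        exact lt_of_le_of_ne this (Ne.symm hne)
      · rw [hν', Function.update_of_ne h]
        exact hνpos b (hsν'sub hbSet)
    -- masses
    have hμsum : ∑ a ∈ sμ', μ' a = (∑ a ∈ sμ, μ a) - m := by
      have hupd : ∑ a ∈ sμ, μ' a = (μ a₀ - m) + ∑ a ∈ sμ.erase a₀, μ a := by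
        rw [hμ', Finset.sum_update_of_mem ha₀m, Finset.sdiff_singleton_eq_erase]
      have horig : ∑ a ∈ sμ, μ a = μ a₀ + ∑ a ∈ sμ.erase a₀, μ a :=
        (Finset.add_sum_erase _ _ ha₀m).symm
      rw [hsμ']; split
      · rename_i hzz
        have : ∑ a ∈ sμ.erase a₀, μ' a = ∑ a ∈ sμ.erase a₀, μ a := by
          apply Finset.sum_congr rfl
          intro a haSet
          rw [hμ', Function.update_of_ne (Finset.mem_erase.1 haSet).1]
        rw [this, horig]
        linarith [hzz]
      · rw [hupd, horig]; ring
    have hνsum : ∑ b ∈ sν', ν' b = (∑ b ∈ sν, ν b) - m := by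
      have hupd : ∑ b ∈ sν, ν' b = (ν b₀ - m) + ∑ b ∈ sν.erase b₀, ν b := by
        rw [hν', Finset.sum_update_of_mem hb₀m, Finset.sdiff_singleton_eq_erase]
      have horig : ∑ b ∈ sν, ν b = ν b₀ + ∑ b ∈ sν.erase b₀, ν b :=
        (Finset.add_sum_erase _ _ hb₀m).symm
      rw [hsν']; split
      · rename_i hzz
        have : ∑ b ∈ sν.erase b₀, ν' b = ∑ b ∈ sν.erase b₀, ν b := by
          apply Finset.sum_congr rfl
          intro b hbSet
          rw [hν', Function.update_of_ne (Finset.mem_erase.1 hbSet).1]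
        rw [this, horig]
        linarith [hzz]
      · rw [hupd, horig]; ring
    have hmass' : ∑ a ∈ sμ', μ' a = ∑ b ∈ sν', ν' b := by
      rw [hμsum, hνsum, hmass]
    -- apply induction hypothesis
    obtain ⟨c', w', hw'pos, hw'z, hw'μ, hw'ν, hw'chain, hw'supp⟩ :=
      ih μ' ν' sμ' sν' hcard' hμ0' hμz' hμpos' hν0' hνz' hνpos' hmass'
    have hnotin : (a₀, b₀) ∉ c' := by
      intro hmem
      obtain ⟨h1, h2⟩ := hw'supp _ hmem
      rcases hkey with h | h
      · have : sμ' = sμ.erase a₀ := by rw [hsμ', if_pos h]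
        rw [this] at h1
        exact (Finset.mem_erase.1 h1).1 rfl
      · have : sν' = sν.erase b₀ := by rw [hsν', if_pos h]
        rw [this] at h2
        exact (Finset.mem_erase.1 h2).1 rfl
    refine ⟨insert (a₀, b₀) c', Function.update w' (a₀, b₀) m, ?_, ?_, ?_, ?_, ?_, ?_⟩
    · intro p hp
      rcases Finset.mem_insert.1 hp with h | h
      · rw [h, Function.update_self]; exact hmpos
      · rw [Function.update_of_ne (fun hh => hnotin (by rw [← hh]; exact h))]
        exact hw'pos p h
    · intro p hp
      rw [Finset.mem_insert] at hp
      push_neg at hp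
      rw [Function.update_of_ne hp.1]
      exact hw'z p hp.2
    · intro a
      rw [Finset.filter_insert]
      rcases eq_or_ne a₀ a with h | h
      · rw [if_pos h]
        rw [Finset.sum_insert (fun hmem => hnotin (Finset.mem_filter.1 hmem).1),
          Function.update_self]
        have : ∑ p ∈ c'.filter (fun p => p.1 = a), Function.update w' (a₀, b₀) m p
            = ∑ p ∈ c'.filter (fun p => p.1 = a), w' p := by
          apply Finset.sum_congr rfl
          intro p hp
          exact Function.update_of_ne
            (fun hh => hnotin (by rw [← hh]; exact (Finset.mem_filter.1 hp).1)) _ _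
        rw [this, ← hw'μ a, ← h, hμ', Function.update_self]
        ring
      · rw [if_neg h]
        have : ∑ p ∈ c'.filter (fun p => p.1 = a), Function.update w' (a₀, b₀) m p
            = ∑ p ∈ c'.filter (fun p => p.1 = a), w' p := by
          apply Finset.sum_congr rfl
          intro p hp
          exact Function.update_of_ne
            (fun hh => hnotin (by rw [← hh]; exact (Finset.mem_filter.1 hp).1)) _ _
        rw [this, ← hw'μ a, hμ', Function.update_of_ne (Ne.symm h)]
    · intro b
      rw [Finset.filter_insert]
      rcases eq_or_ne b₀ b with h | h
      · rw [if_pos h]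
        rw [Finset.sum_insert (fun hmem => hnotin (Finset.mem_filter.1 hmem).1),
          Function.update_self]
        have : ∑ p ∈ c'.filter (fun p => p.2 = b), Function.update w' (a₀, b₀) m p
            = ∑ p ∈ c'.filter (fun p => p.2 = b), w' p := by
          apply Finset.sum_congr rfl
          intro p hp
          exact Function.update_of_ne
            (fun hh => hnotin (by rw [← hh]; exact (Finset.mem_filter.1 hp).1)) _ _
        rw [this, ← hw'ν b, ← h, hν', Function.update_self]
        ring
      · rw [if_neg h]
        have : ∑ p ∈ c'.filter (fun p => p.2 = b), Function.update w' (a₀, b₀) m p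
            = ∑ p ∈ c'.filter (fun p => p.2 = b), w' p := by
          apply Finset.sum_congr rfl
          intro p hp
          exact Function.update_of_ne
            (fun hh => hnotin (by rw [← hh]; exact (Finset.mem_filter.1 hp).1)) _ _
        rw [this, ← hw'ν b, hν', Function.update_of_ne (Ne.symm h)]
    · intro p hp q hq
      rcases Finset.mem_insert.1 hp with h1 | h1 <;> rcases Finset.mem_insert.1 hq with h2 | h2
      · left; rw [h1, h2]; exact ⟨le_refl _, le_refl _⟩
      · left
        obtain ⟨hq1, hq2⟩ := hw'supp q h2
        rw [h1]
        exact ⟨Finset.min'_le _ _ (hsμ'sub hq1), Finset.min'_le _ _ (hsν'sub hq2)⟩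
      · right
        obtain ⟨hp1, hp2⟩ := hw'supp p h1
        rw [h2]
        exact ⟨Finset.min'_le _ _ (hsμ'sub hp1), Finset.min'_le _ _ (hsν'sub hp2)⟩
      · exact hw'chain p h1 q h2
    · intro p hp
      rcases Finset.mem_insert.1 hp with h | h
      · rw [h]; exact ⟨ha₀m, hb₀m⟩
      · obtain ⟨h1, h2⟩ := hw'supp p h
        exact ⟨hsμ'sub h1, hsν'sub h2⟩

end MC

/-! ### The one-block lemma -/

section OneBlock

lemma one_block {X : Type*} [AddCommGroup X] [LinearOrder X]
    (hadd : ∀ a b c : X, a ≤ b → a + c ≤ b + c)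
    (u : X) (hu0 : 0 < u) (humin : ∀ g : X, 0 < g → u ≤ g)
    (T : X → X → X)
    (hTmono : ∀ a a' b b' : X, a ≤ a' → b ≤ b' → T a b ≤ T a' b')
    (hSmono : ∀ a a' b b' : X, a ≤ a' → b ≤ b' → a + b - T a b ≤ a' + b' - T a' b')
    (hTE : ∀ a b c : X, T (a + c) (b + c) = T a b + c)
    (μ ν : X → ℝ) (hμ : IsPMF μ) (hν : IsPMF ν) :
    ∃ π : X × X → ℝ, IsCoupling π μ ν ∧
      relEntropy (pushforward (fun p : X × X => T p.1 p.2) π) +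
        relEntropy (pushforward (fun p : X × X => p.1 + p.2 - T p.1 p.2) π) ≤
      relEntropy μ + relEntropy ν := by
  classical
  -- order facts
  have haddlt : ∀ a b c : X, a < b → a + c < b + c := by
    intro a b c h
    refine lt_of_le_of_ne (hadd _ _ _ (le_of_lt h)) ?_
    intro he
    exact (ne_of_lt h) (add_right_cancel he)
  have hstep : ∀ a b : X, a < b → a + u ≤ b := by
    intro a b h
    have h1 : 0 < b - a := by
      have := haddlt a b (-a) h
      rwa [add_neg_cancel, ← sub_eq_add_neg] at this
    have h2 : u ≤ b - a := humin _ h1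
    have h3 := hadd u (b - a) a h2
    rwa [sub_add_cancel, add_comm] at h3
  have hcancel1 : ∀ a a' b b' : X, a ≤ a' → b ≤ b' → a + b = a' + b' → a = a' := by
    intro a a' b b' h1 h2 h3
    have k1 : a + b ≤ a' + b := hadd _ _ _ h1
    have k2 : a' + b ≤ a' + b' := by
      have := hadd b b' a' h2
      rwa [add_comm b a', add_comm b' a'] at this
    rw [← h3] at k2
    exact add_right_cancel (le_antisymm k1 k2)
  -- supports
  obtain ⟨sμ, hμpos, hμz, hμsum⟩ := pmf_support hμ
  obtain ⟨sν, hνpos, hνz, hνsum⟩ := pmf_support hν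
  obtain ⟨c, w, hwpos, hwz, hwμ, hwν, hwchain, hwsupp⟩ :=
    monotone_coupling (sμ.card + sν.card) μ ν sμ sν (le_refl _)
      hμ.1 hμz hμpos hν.1 hνz hνpos (by rw [hμsum, hνsum])
  have hw0 : ∀ p, 0 ≤ w p := by
    intro p
    by_cases hp : p ∈ c
    · exact le_of_lt (hwpos p hp)
    · rw [hwz p hp]
  -- the coupling
  have hcoup : IsCoupling w μ ν := by
    refine ⟨?_, ?_, ?_⟩
    · apply isPMF_of_sum w c hw0 hwz
      have := Finset.sum_fiberwise_of_maps_to (g := Prod.fst) (t := sμ)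
        (fun p hp => (hwsupp p hp).1) w
      rw [← this, ← hμsum]
      apply Finset.sum_congr rfl
      intro a _
      exact (hwμ a).symm
    · intro a
      rw [finsum_eq_sum_of_vanish _ ((c.filter (fun p => p.1 = a)).image Prod.snd)
        (by
          intro b hb
          by_contra hne
          have : (a, b) ∈ c := by
            by_contra hc
            exact hne (hwz _ hc)
          exact hb (Finset.mem_image.2 ⟨(a, b), Finset.mem_filter.2 ⟨this, rfl⟩, rfl⟩))]
      rw [Finset.sum_image (by
        intro p hp q hq hpq
        have h1 := (Finset.mem_filter.1 hp).2
        have h2 := (Finset.mem_filter.1 hq).2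
        exact Prod.ext_iff.2 ⟨h1.trans h2.symm, hpq⟩)]
      rw [hwμ a]
      apply Finset.sum_congr rfl
      intro p hp
      have h1 := (Finset.mem_filter.1 hp).2
      congr 1
      exact Prod.ext_iff.2 ⟨h1.symm, rfl⟩
    · intro b
      rw [finsum_eq_sum_of_vanish _ ((c.filter (fun p => p.2 = b)).image Prod.fst)
        (by
          intro a haa
          by_contra hne
          have : (a, b) ∈ c := by
            by_contra hc
            exact hne (hwz _ hc)
          exact haa (Finset.mem_image.2 ⟨(a, b), Finset.mem_filter.2 ⟨this, rfl⟩, rfl⟩))]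
      rw [Finset.sum_image (by
        intro p hp q hq hpq
        have h1 := (Finset.mem_filter.1 hp).2
        have h2 := (Finset.mem_filter.1 hq).2
        exact Prod.ext_iff.2 ⟨hpq, h1.trans h2.symm⟩)]
      rw [hwν b]
      apply Finset.sum_congr rfl
      intro p hp
      have h1 := (Finset.mem_filter.1 hp).2
      congr 1
      exact Prod.ext_iff.2 ⟨rfl, h1.symm⟩
  refine ⟨w, hcoup, ?_⟩
  -- labels
  set t : X × X → X := fun p => T p.1 p.2 with ht
  set s : X × X → X := fun p => p.1 + p.2 - T p.1 p.2 with hs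
  -- strictness facts
  have htstrict : ∀ p ∈ c, ∀ q ∈ c, p.1 ≤ q.1 → p.2 ≤ q.2 → p.1 ≠ q.1 → p.2 ≠ q.2 →
      t p < t q := by
    intro p _ q _ h1 h2 h3 h4
    have k1 : p.1 + u ≤ q.1 := hstep _ _ (lt_of_le_of_ne h1 h3)
    have k2 : p.2 + u ≤ q.2 := hstep _ _ (lt_of_le_of_ne h2 h4)
    calc t p < t p + u := by
          have := haddlt 0 u (t p) hu0
          rwa [zero_add, add_comm u (t p)] at this
      _ = T (p.1 + u) (p.2 + u) := (hTE p.1 p.2 u).symm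
      _ ≤ T q.1 q.2 := hTmono _ _ _ _ k1 k2
  have hsstrict : ∀ p ∈ c, ∀ q ∈ c, p.1 ≤ q.1 → p.2 ≤ q.2 → p.1 ≠ q.1 → p.2 ≠ q.2 →
      s p < s q := by
    intro p _ q _ h1 h2 h3 h4
    have k1 : p.1 + u ≤ q.1 := hstep _ _ (lt_of_le_of_ne h1 h3)
    have k2 : p.2 + u ≤ q.2 := hstep _ _ (lt_of_le_of_ne h2 h4)
    have hSE : (p.1 + u) + (p.2 + u) - T (p.1 + u) (p.2 + u) = (p.1 + p.2 - T p.1 p.2) + u := by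
      rw [hTE]
      abel
    calc s p < s p + u := by
          have := haddlt 0 u (s p) hu0
          rwa [zero_add, add_comm u (s p)] at this
      _ = (p.1 + u) + (p.2 + u) - T (p.1 + u) (p.2 + u) := hSE.symm
      _ ≤ q.1 + q.2 - T q.1 q.2 := hSmono _ _ _ _ k1 k2
  have hinj : ∀ i ∈ c, ∀ j ∈ c, t i = t j → s i = s j → i = j := by
    intro i hi j hj h1 h2
    have hsum : i.1 + i.2 = j.1 + j.2 := by
      have e1 : i.1 + i.2 = t i + s i := by
        show i.1 + i.2 = T i.1 i.2 + (i.1 + i.2 - T i.1 i.2); abel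
      have e2 : j.1 + j.2 = t j + s j := by
        show j.1 + j.2 = T j.1 j.2 + (j.1 + j.2 - T j.1 j.2); abel
      rw [e1, e2, h1, h2]
    rcases hwchain i hi j hj with ⟨k1, k2⟩ | ⟨k1, k2⟩
    · have ha : i.1 = j.1 := hcancel1 _ _ _ _ k1 k2 hsum
      have hb : i.2 = j.2 := by
        apply add_left_cancel (a := i.1)
        rw [hsum, ha]
      exact Prod.ext_iff.2 ⟨ha, hb⟩
    · have ha : j.1 = i.1 := hcancel1 _ _ _ _ k1 k2 hsum.symm
      have hb : j.2 = i.2 := by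
        apply add_left_cancel (a := j.1)
        rw [← hsum, ha]
      exact (Prod.ext_iff.2 ⟨ha, hb⟩ : j = i).symm
  have hdich : ∀ (f : X × X → X), (∀ p ∈ c, ∀ q ∈ c, p.1 ≤ q.1 → p.2 ≤ q.2 →
      p.1 ≠ q.1 → p.2 ≠ q.2 → f p < f q) →
      ∀ i ∈ c, ∀ j ∈ c, f i = f j → i.1 = j.1 ∨ i.2 = j.2 := by
    intro f hf i hi j hj he
    by_contra hcon
    push_neg at hcon
    obtain ⟨h1, h2⟩ := hcon
    rcases hwchain i hi j hj with ⟨k1, k2⟩ | ⟨k1, k2⟩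
    · exact absurd he (ne_of_lt (hf i hi j hj k1 k2 h1 h2))
    · exact absurd he.symm (ne_of_lt (hf j hj i hi k1 k2 (Ne.symm h1) (Ne.symm h2)))
  have hdt := hdich t htstrict
  have hds := hdich s hsstrict
  -- move to the lexicographic order
  let emb : X × X ↪ X ×ₗ X := (toLex : X × X ≃ X ×ₗ X).toEmbedding
  set cl : Finset (X ×ₗ X) := c.map emb with hcl
  have hmeml : ∀ i : X ×ₗ X, i ∈ cl ↔ ofLex i ∈ c := by
    intro i
    rw [hcl, Finset.mem_map_equiv]
    rfl
  have hprodle : ∀ i ∈ cl, ∀ j ∈ cl, i ≤ j →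
      (ofLex i).1 ≤ (ofLex j).1 ∧ (ofLex i).2 ≤ (ofLex j).2 := by
    intro i hi j hj hij
    rcases hwchain (ofLex i) ((hmeml i).1 hi) (ofLex j) ((hmeml j).1 hj) with h | h
    · exact h
    · have h2 : j ≤ i := Prod.Lex.toLex_mono (Prod.mk_le_mk.2 h)
      have h3 : i = j := le_antisymm hij h2
      rw [h3]
      exact ⟨le_refl _, le_refl _⟩
  have hmono : ∀ (f : X × X → X), (∀ a a' b b' : X, a ≤ a' → b ≤ b' → f (a, b) ≤ f (a', b')) →
      ∀ i ∈ cl, ∀ j ∈ cl, ∀ k ∈ cl, i ≤ j → j ≤ k → f (ofLex i) = f (ofLex k) →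
        f (ofLex i) = f (ofLex j) := by
    intro f hf i hi j hj k hk hij hjk he
    obtain ⟨a1, a2⟩ := hprodle i hi j hj hij
    obtain ⟨b1, b2⟩ := hprodle j hj k hk hjk
    have h1 : f (ofLex i) ≤ f (ofLex j) := by
      have := hf (ofLex i).1 (ofLex j).1 (ofLex i).2 (ofLex j).2 a1 a2
      simpa using this
    have h2 : f (ofLex j) ≤ f (ofLex k) := by
      have := hf (ofLex j).1 (ofLex k).1 (ofLex j).2 (ofLex k).2 b1 b2
      simpa using this
    exact le_antisymm h1 (he ▸ h2)
  have hcore := core_chain (fun i => w (ofLex i)) (fun i => (ofLex i).1)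
    (fun i => (ofLex i).2) (fun i => t (ofLex i)) (fun i => s (ofLex i)) cl
    (fun i hi => hwpos (ofLex i) ((hmeml i).1 hi))
    (hmono t (fun a a' b b' h1 h2 => hTmono a a' b b' h1 h2))
    (hmono s (fun a a' b b' h1 h2 => hSmono a a' b b' h1 h2))
    (fun i hi j hj h1 h2 => by
      have := hinj (ofLex i) ((hmeml i).1 hi) (ofLex j) ((hmeml j).1 hj) h1 h2
      exact ofLex.injective this)
    (fun i hi j hj he => hdt (ofLex i) ((hmeml i).1 hi) (ofLex j) ((hmeml j).1 hj) he)
    (fun i hi j hj he => hds (ofLex i) ((hmeml i).1 hi) (ofLex j) ((hmeml j).1 hj) he)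
  -- transport sums from c to cl
  have htrans : ∀ (f : X × X → X),
      ∑ i ∈ cl, w (ofLex i) * Real.log (∑ j ∈ cl.filter
          (fun j => f (ofLex j) = f (ofLex i)), w (ofLex j))
      = ∑ i ∈ c, w i * Real.log (∑ j ∈ c.filter (fun j => f j = f i), w j) := by
    intro f
    rw [hcl, Finset.sum_map]
    apply Finset.sum_congr rfl
    intro p hp
    congr 1
    congr 1
    have hfm : (c.map emb).filter (fun j => f (ofLex j) = f (ofLex (emb p)))
        = (c.filter (fun q => f q = f p)).map emb := by
      rw [Finset.filter_map]
      rfl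
    rw [hfm, Finset.sum_map]
    rfl
  -- translate entropies
  have hKm : relEntropy (pushforward (fun p : X × X => T p.1 p.2) w)
      = ∑ i ∈ cl, w (ofLex i) * Real.log (∑ j ∈ cl.filter
          (fun j => t (ofLex j) = t (ofLex i)), w (ofLex j)) := by
    rw [pushforward_eq_fiberSum _ w c hwz]
    exact (relEntropy_fiberSum t w c).trans (htrans t).symm
  have hKp : relEntropy (pushforward (fun p : X × X => p.1 + p.2 - T p.1 p.2) w)
      = ∑ i ∈ cl, w (ofLex i) * Real.log (∑ j ∈ cl.filter
          (fun j => s (ofLex j) = s (ofLex i)), w (ofLex j)) := by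
    rw [pushforward_eq_fiberSum _ w c hwz]
    exact (relEntropy_fiberSum s w c).trans (htrans s).symm
  have hEμ : relEntropy μ
      = ∑ i ∈ cl, w (ofLex i) * Real.log (∑ j ∈ cl.filter
          (fun j => (ofLex j).1 = (ofLex i).1), w (ofLex j)) := by
    have hμeq : μ = fun a => ∑ p ∈ c.filter (fun p => p.1 = a), w p := funext hwμ
    rw [hμeq]
    exact (relEntropy_fiberSum Prod.fst w c).trans (htrans (fun p => p.1)).symm
  have hEν : relEntropy ν
      = ∑ i ∈ cl, w (ofLex i) * Real.log (∑ j ∈ cl.filter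
          (fun j => (ofLex j).2 = (ofLex i).2), w (ofLex j)) := by
    have hνeq : ν = fun b => ∑ p ∈ c.filter (fun p => p.2 = b), w p := funext hwν
    rw [hνeq]
    exact (relEntropy_fiberSum Prod.snd w c).trans (htrans (fun p => p.2)).symm
  rw [hKm, hKp, hEμ, hEν]
  simp only [mul_add, Finset.sum_add_distrib] at hcore ⊢
  linarith

end OneBlock

/-! ### Transport along equivalences, marginals, conditionals, chain rule, mixtures -/

section Transport
variable {A B C : Type*}

lemma relEntropy_comp_equiv (e : A ≃ B) (f : B → ℝ) :
    relEntropy (fun a => f (e a)) = relEntropy f := by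
  unfold relEntropy
  exact finsum_comp_equiv e (f := fun b => f b * Real.log (f b))

lemma isPMF_comp_equiv (e : A ≃ B) (f : B → ℝ) (h : IsPMF f) : IsPMF (fun a => f (e a)) := by
  obtain ⟨h0, hfin, hsum⟩ := h
  refine ⟨fun a => h0 (e a), ?_, ?_⟩
  · have : (Function.support fun a => f (e a)) = e ⁻¹' (Function.support f) := by
      ext a; simp [Function.mem_support]
    rw [this]
    exact Set.Finite.preimage (e.injective.injOn) hfin
  · rw [finsum_comp_equiv e]; exact hsum

lemma pushforward_comp_equiv {A' : Type*} (e : A' ≃ A) (T : A' → C) (f : A → ℝ) :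
    pushforward T (fun a' => f (e a')) = pushforward (fun a => T (e.symm a)) f := by
  funext z
  unfold pushforward
  calc ∑ᶠ p ∈ {p | T p = z}, f (e p)
      = ∑ᶠ r ∈ e '' {p | T p = z}, f r := (finsum_mem_image (e.injective.injOn)).symm
    _ = ∑ᶠ r ∈ {r | T (e.symm r) = z}, f r := by
        have hset : e '' {p | T p = z} = {r | T (e.symm r) = z} := by
          ext r
          constructor
          · rintro ⟨p, hp, rfl⟩
            simpa using hp
          · intro hr
            exact ⟨e.symm r, hr, by simp⟩
        rw [hset]

lemma single_le_finsum' (f : A → ℝ) (h0 : ∀ x, 0 ≤ f x) (hfin : (Function.support f).Finite)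
    (a : A) : f a ≤ ∑ᶠ x, f x := by
  classical
  rw [finsum_eq_sum_of_vanish f (insert a hfin.toFinset)
    (by
      intro x hx
      rw [Finset.mem_insert] at hx
      push_neg at hx
      by_contra h
      exact hx.2 (hfin.mem_toFinset.2 h))]
  exact Finset.single_le_sum (fun i _ => h0 i) (Finset.mem_insert_self a _)

end Transport

section Marg
variable {X Y : Type*}

noncomputable def marg1 (μ : X × Y → ℝ) : X → ℝ := fun a => ∑ᶠ b, μ (a, b)

noncomputable def cond1 (μ : X × Y → ℝ) (a : X) : Y → ℝ := fun q => μ (a, q) / marg1 μ a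

lemma finsum_snd_filter [DecidableEq X] [DecidableEq Y] (w : X × Y → ℝ) (s : Finset (X × Y))
    (hz : ∀ p ∉ s, w p = 0) (a : X) :
    ∑ᶠ b, w (a, b) = ∑ p ∈ s.filter (fun p => p.1 = a), w p := by
  classical
  rw [finsum_eq_sum_of_vanish _ ((s.filter (fun p => p.1 = a)).image Prod.snd)
    (by
      intro b hb
      by_contra hne
      have hmem : (a, b) ∈ s := by
        by_contra hc
        exact hne (hz _ hc)
      exact hb (Finset.mem_image.2 ⟨(a, b), Finset.mem_filter.2 ⟨hmem, rfl⟩, rfl⟩))]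
  rw [Finset.sum_image (by
    intro p hp q hq hpq
    have h1 := (Finset.mem_filter.1 hp).2
    have h2 := (Finset.mem_filter.1 hq).2
    exact Prod.ext_iff.2 ⟨h1.trans h2.symm, hpq⟩)]
  apply Finset.sum_congr rfl
  intro p hp
  have h1 := (Finset.mem_filter.1 hp).2
  congr 1
  exact Prod.ext_iff.2 ⟨h1.symm, rfl⟩

lemma finsum_fst_filter [DecidableEq X] [DecidableEq Y] (w : X × Y → ℝ) (s : Finset (X × Y))
    (hz : ∀ p ∉ s, w p = 0) (b : Y) :
    ∑ᶠ a, w (a, b) = ∑ p ∈ s.filter (fun p => p.2 = b), w p := by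
  classical
  rw [finsum_eq_sum_of_vanish _ ((s.filter (fun p => p.2 = b)).image Prod.fst)
    (by
      intro a haa
      by_contra hne
      have hmem : (a, b) ∈ s := by
        by_contra hc
        exact hne (hz _ hc)
      exact haa (Finset.mem_image.2 ⟨(a, b), Finset.mem_filter.2 ⟨hmem, rfl⟩, rfl⟩))]
  rw [Finset.sum_image (by
    intro p hp q hq hpq
    have h1 := (Finset.mem_filter.1 hp).2
    have h2 := (Finset.mem_filter.1 hq).2
    exact Prod.ext_iff.2 ⟨hpq, h1.trans h2.symm⟩)]
  apply Finset.sum_congr rfl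
  intro p hp
  have h1 := (Finset.mem_filter.1 hp).2
  congr 1
  exact Prod.ext_iff.2 ⟨rfl, h1.symm⟩

variable (μ : X × Y → ℝ) (s : Finset (X × Y))

lemma marg1_eq_sum [DecidableEq X] [DecidableEq Y] (hz : ∀ p ∉ s, μ p = 0) (a : X) :
    marg1 μ a = ∑ p ∈ s.filter (fun p => p.1 = a), μ p :=
  finsum_snd_filter μ s hz a

lemma marg1_nonneg (h0 : ∀ p, 0 ≤ μ p) (hz : ∀ p ∉ s, μ p = 0) (a : X) :
    0 ≤ marg1 μ a := by
  classical
  rw [marg1_eq_sum μ s hz a]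
  exact Finset.sum_nonneg (fun p _ => h0 p)

lemma marg1_zero (h0 : ∀ p, 0 ≤ μ p) (hz : ∀ p ∉ s, μ p = 0)
    (a : X) (hm : marg1 μ a = 0) (q : Y) : μ (a, q) = 0 := by
  classical
  by_contra h
  have hmem : (a, q) ∈ s.filter (fun p => p.1 = a) := by
    refine Finset.mem_filter.2 ⟨?_, rfl⟩
    by_contra hc
    exact h (hz _ hc)
  have hle : μ (a, q) ≤ marg1 μ a := by
    rw [marg1_eq_sum μ s hz a]
    exact Finset.single_le_sum (fun p _ => h0 p) hmem
  have := h0 (a, q)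
  have : μ (a, q) = 0 := le_antisymm (hm ▸ hle) this
  exact h this

lemma marg1_isPMF [DecidableEq X] [DecidableEq Y] (hμ : IsPMF μ) (hpos : ∀ p ∈ s, 0 < μ p) (hz : ∀ p ∉ s, μ p = 0)
    (hsum : ∑ p ∈ s, μ p = 1) : IsPMF (marg1 μ) := by
  classical
  apply isPMF_of_sum _ (s.image Prod.fst)
  · exact marg1_nonneg μ s hμ.1 hz
  · intro a ha
    rw [marg1_eq_sum μ s hz a]
    apply Finset.sum_eq_zero
    intro p hp
    obtain ⟨hp1, hp2⟩ := Finset.mem_filter.1 hp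
    exact absurd (Finset.mem_image.2 ⟨p, hp1, hp2⟩) ha
  · rw [← hsum]
    have := Finset.sum_fiberwise_of_maps_to (g := Prod.fst) (t := s.image Prod.fst)
      (fun p hp => Finset.mem_image_of_mem _ hp) μ
    rw [← this]
    apply Finset.sum_congr rfl
    intro a _
    exact marg1_eq_sum μ s hz a

lemma marg1_pos_iff [DecidableEq X] [DecidableEq Y] (hpos : ∀ p ∈ s, 0 < μ p) (hz : ∀ p ∉ s, μ p = 0)
    (h0 : ∀ p, 0 ≤ μ p) (a : X) :
    a ∈ s.image Prod.fst ↔ 0 < marg1 μ a := by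
  classical
  constructor
  · intro ha
    obtain ⟨p, hp, hpa⟩ := Finset.mem_image.1 ha
    have h1 : μ p ≤ marg1 μ a := by
      rw [marg1_eq_sum μ s hz a]
      exact Finset.single_le_sum (fun q _ => h0 q) (Finset.mem_filter.2 ⟨hp, hpa⟩)
    exact lt_of_lt_of_le (hpos p hp) h1
  · intro ha
    by_contra hc
    have : marg1 μ a = 0 := by
      rw [marg1_eq_sum μ s hz a]
      apply Finset.sum_eq_zero
      intro p hp
      obtain ⟨hp1, hp2⟩ := Finset.mem_filter.1 hp
      exact absurd (Finset.mem_image.2 ⟨p, hp1, hp2⟩) hc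
    rw [this] at ha
    exact lt_irrefl 0 ha

lemma cond1_isPMF [DecidableEq X] [DecidableEq Y] (h0 : ∀ p, 0 ≤ μ p) (hz : ∀ p ∉ s, μ p = 0)
    (a : X) (hm : 0 < marg1 μ a) : IsPMF (cond1 μ a) := by
  classical
  apply isPMF_of_sum _ ((s.filter (fun p => p.1 = a)).image Prod.snd)
  · intro q
    exact div_nonneg (h0 (a, q)) (le_of_lt hm)
  · intro q hq
    unfold cond1
    have : μ (a, q) = 0 := by
      by_contra h
      have hmem : (a, q) ∈ s := by
        by_contra hc
        exact h (hz _ hc)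
      exact hq (Finset.mem_image.2 ⟨(a, q), Finset.mem_filter.2 ⟨hmem, rfl⟩, rfl⟩)
    rw [this]; simp
  · unfold cond1
    rw [Finset.sum_image (by
      intro p hp q hq hpq
      have h1 := (Finset.mem_filter.1 hp).2
      have h2 := (Finset.mem_filter.1 hq).2
      exact Prod.ext_iff.2 ⟨h1.trans h2.symm, hpq⟩)]
    have : ∀ p ∈ s.filter (fun p => p.1 = a), μ (a, p.2) / marg1 μ a = μ p / marg1 μ a := by
      intro p hp
      have h1 := (Finset.mem_filter.1 hp).2
      congr 2
      exact Prod.ext_iff.2 ⟨h1.symm, rfl⟩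
    rw [Finset.sum_congr rfl this, ← Finset.sum_div, ← marg1_eq_sum μ s hz a]
    field_simp

/-- relative entropy of the conditional, as a sum over the fiber -/
lemma cond1_relEntropy [DecidableEq X] [DecidableEq Y] (hz : ∀ p ∉ s, μ p = 0) (a : X) :
    relEntropy (cond1 μ a)
      = ∑ p ∈ s.filter (fun p => p.1 = a),
          cond1 μ a p.2 * Real.log (cond1 μ a p.2) := by
  classical
  rw [relEntropy_eq_sum (cond1 μ a) ((s.filter (fun p => p.1 = a)).image Prod.snd)
    (by
      intro q hq
      unfold cond1
      have : μ (a, q) = 0 := by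
        by_contra h
        have hmem : (a, q) ∈ s := by
          by_contra hc
          exact h (hz _ hc)
        exact hq (Finset.mem_image.2 ⟨(a, q), Finset.mem_filter.2 ⟨hmem, rfl⟩, rfl⟩)
      rw [this]; simp)]
  rw [Finset.sum_image (by
    intro p hp q hq hpq
    have h1 := (Finset.mem_filter.1 hp).2
    have h2 := (Finset.mem_filter.1 hq).2
    exact Prod.ext_iff.2 ⟨h1.trans h2.symm, hpq⟩)]

/-- Chain rule for relative entropy. -/
lemma chain_rule [DecidableEq X] [DecidableEq Y] (hpos : ∀ p ∈ s, 0 < μ p) (hz : ∀ p ∉ s, μ p = 0) :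
    relEntropy μ = relEntropy (marg1 μ)
      + ∑ a ∈ s.image Prod.fst, marg1 μ a * relEntropy (cond1 μ a) := by
  classical
  have h0 : ∀ p, 0 ≤ μ p := by
    intro p
    by_cases hp : p ∈ s
    · exact le_of_lt (hpos p hp)
    · rw [hz p hp]
  have hE : relEntropy μ = ∑ a ∈ s.image Prod.fst,
      ∑ p ∈ s.filter (fun p => p.1 = a), μ p * Real.log (μ p) := by
    rw [relEntropy_eq_sum μ s hz]
    exact (Finset.sum_fiberwise_of_maps_to (fun p hp => Finset.mem_image_of_mem _ hp) _).symm
  have hM : relEntropy (marg1 μ) = ∑ a ∈ s.image Prod.fst,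
      marg1 μ a * Real.log (marg1 μ a) := by
    apply relEntropy_eq_sum
    intro a ha
    rw [marg1_eq_sum μ s hz a]
    apply Finset.sum_eq_zero
    intro p hp
    obtain ⟨hp1, hp2⟩ := Finset.mem_filter.1 hp
    exact absurd (Finset.mem_image.2 ⟨p, hp1, hp2⟩) ha
  rw [hE, hM, ← Finset.sum_add_distrib]
  apply Finset.sum_congr rfl
  intro a ha
  have hma : 0 < marg1 μ a := (marg1_pos_iff μ s hpos hz h0 a).1 ha
  have hfib : ∀ p ∈ s.filter (fun p => p.1 = a), μ p = marg1 μ a * cond1 μ a p.2 := by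
    intro p hp
    obtain ⟨hp1, hp2⟩ := Finset.mem_filter.1 hp
    unfold cond1
    rw [show (a, p.2) = p from Prod.ext_iff.2 ⟨hp2.symm, rfl⟩]
    field_simp
  have hsplit : ∀ p ∈ s.filter (fun p => p.1 = a),
      μ p * Real.log (μ p)
      = marg1 μ a * Real.log (marg1 μ a) * cond1 μ a p.2
        + marg1 μ a * (cond1 μ a p.2 * Real.log (cond1 μ a p.2)) := by
    intro p hp
    obtain ⟨hp1, hp2⟩ := Finset.mem_filter.1 hp
    have hpp : 0 < μ p := hpos p hp1
    have hcp : 0 < cond1 μ a p.2 := by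
      rw [show cond1 μ a p.2 = μ p / marg1 μ a by
        unfold cond1
        rw [show (a, p.2) = p from Prod.ext_iff.2 ⟨hp2.symm, rfl⟩]]
      positivity
    rw [hfib p hp, Real.log_mul (ne_of_gt hma) (ne_of_gt hcp)]
    ring
  have hone : ∑ p ∈ s.filter (fun p => p.1 = a), cond1 μ a p.2 = 1 := by
    have : ∀ p ∈ s.filter (fun p => p.1 = a), cond1 μ a p.2 = μ p / marg1 μ a := by
      intro p hp
      obtain ⟨hp1, hp2⟩ := Finset.mem_filter.1 hp
      unfold cond1
      rw [show (a, p.2) = p from Prod.ext_iff.2 ⟨hp2.symm, rfl⟩]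
    rw [Finset.sum_congr rfl this, ← Finset.sum_div, ← marg1_eq_sum μ s hz a]
    field_simp
  rw [Finset.sum_congr rfl hsplit, Finset.sum_add_distrib, ← Finset.mul_sum, hone, mul_one,
    cond1_relEntropy μ s hz a, Finset.mul_sum]

end Marg

section Mix

/-- Entropy of a fibered mixture. -/
lemma mix_entropy {I A H : Type*} [DecidableEq A] [DecidableEq H]
    (c : Finset I) (lam : I → ℝ) (hl : ∀ i ∈ c, 0 < lam i)
    (tl : I → A) (ρ : I → H → ℝ) (hρ : ∀ i ∈ c, IsPMF (ρ i)) :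
    relEntropy (fun z : A × H => ∑ i ∈ c.filter (fun i => tl i = z.1), lam i * ρ i z.2)
      ≤ relEntropy (fun a => ∑ i ∈ c.filter (fun i => tl i = a), lam i)
        + ∑ i ∈ c, lam i * relEntropy (ρ i) := by
  classical
  -- support finset for all the ρ i
  set sH : Finset H := c.attach.biUnion (fun i => ((hρ i.1 i.2).2.1).toFinset) with hsH
  have hsHz : ∀ i ∈ c, ∀ q ∉ sH, ρ i q = 0 := by
    intro i hi q hq
    by_contra h
    apply hq
    rw [hsH]
    apply Finset.mem_biUnion.2
    exact ⟨⟨i, hi⟩, Finset.mem_attach _ _, ((hρ i hi).2.1).mem_toFinset.2 h⟩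
  have hρ0 : ∀ i ∈ c, ∀ q, 0 ≤ ρ i q := fun i hi q => (hρ i hi).1 q
  have hρsum : ∀ i ∈ c, ∑ q ∈ sH, ρ i q = 1 := by
    intro i hi
    rw [← finsum_eq_sum_of_vanish (ρ i) sH (hsHz i hi)]
    exact (hρ i hi).2.2
  have hρrel : ∀ i ∈ c, relEntropy (ρ i) = ∑ q ∈ sH, ρ i q * Real.log (ρ i q) :=
    fun i hi => relEntropy_eq_sum (ρ i) sH (hsHz i hi)
  set θ : A × H → ℝ := fun z => ∑ i ∈ c.filter (fun i => tl i = z.1), lam i * ρ i z.2 with hθ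
  set κ : A → ℝ := fun a => ∑ i ∈ c.filter (fun i => tl i = a), lam i with hκ
  have hκ0 : ∀ a, 0 ≤ κ a :=
    fun a => Finset.sum_nonneg (fun i hi => le_of_lt (hl i (Finset.mem_filter.1 hi).1))
  have hEθ : relEntropy θ = ∑ a ∈ c.image tl, ∑ q ∈ sH, θ (a, q) * Real.log (θ (a, q)) := by
    rw [relEntropy_eq_sum θ ((c.image tl) ×ˢ sH)
      (by
        intro z hzz
        simp only [hθ]
        apply Finset.sum_eq_zero
        intro i hi
        obtain ⟨hi1, hi2⟩ := Finset.mem_filter.1 hi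
        by_cases hq : z.2 ∈ sH
        · exfalso
          apply hzz
          apply Finset.mem_product.2
          exact ⟨hi2 ▸ Finset.mem_image_of_mem tl hi1, hq⟩
        · rw [hsHz i hi1 z.2 hq, mul_zero])]
    rw [Finset.sum_product]
  have hEκ : relEntropy κ = ∑ a ∈ c.image tl, κ a * Real.log (κ a) := by
    apply relEntropy_eq_sum
    intro a ha
    simp only [hκ]
    apply Finset.sum_eq_zero
    intro i hi
    obtain ⟨hi1, hi2⟩ := Finset.mem_filter.1 hi
    exact absurd (hi2 ▸ Finset.mem_image_of_mem tl hi1) ha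
  -- the per-a bound
  have hkey : ∀ a ∈ c.image tl,
      ∑ q ∈ sH, θ (a, q) * Real.log (θ (a, q))
        ≤ κ a * Real.log (κ a)
          + ∑ i ∈ c.filter (fun i => tl i = a), lam i * relEntropy (ρ i) := by
    intro a ha
    set F := c.filter (fun i => tl i = a) with hF
    have hFc : ∀ i ∈ F, i ∈ c := fun i hi => (Finset.mem_filter.1 hi).1
    have hκpos : 0 < κ a := by
      obtain ⟨i, hi, hia⟩ := Finset.mem_image.1 ha
      exact lt_of_lt_of_le (hl i hi)
        (Finset.single_le_sum (fun j hj => le_of_lt (hl j (hFc j hj)))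
          (Finset.mem_filter.2 ⟨hi, hia⟩))
    -- pointwise bound
    have hpt : ∀ q ∈ sH, θ (a, q) * Real.log (θ (a, q))
        ≤ θ (a, q) * Real.log (κ a)
          + ∑ i ∈ F, lam i * (ρ i q * Real.log (ρ i q)) := by
      intro q _
      have hθval : θ (a, q) = κ a * ∑ i ∈ F, (lam i / κ a) * ρ i q := by
        simp only [hθ, hκ, ← hF]
        rw [Finset.mul_sum]
        apply Finset.sum_congr rfl
        intro i _
        field_simp
        exact (mul_div_cancel_right₀ _ (hκpos.ne' : (∑ i ∈ F, lam i) ≠ 0)).symm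
      by_cases hσ : ∑ i ∈ F, (lam i / κ a) * ρ i q = 0
      · -- all terms vanish
        have hallz : ∀ i ∈ F, ρ i q = 0 := by
          intro i hi
          have hnn : ∀ j ∈ F, 0 ≤ (lam j / κ a) * ρ j q := by
            intro j hj
            exact mul_nonneg (div_nonneg (le_of_lt (hl j (hFc j hj))) (le_of_lt hκpos))
              (hρ0 j (hFc j hj) q)
          have := (Finset.sum_eq_zero_iff_of_nonneg hnn).1 hσ i hi
          have hlκ : 0 < lam i / κ a := div_pos (hl i (hFc i hi)) hκpos
          exact by
            rcases mul_eq_zero.1 this with h | h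
            · exact absurd h (ne_of_gt hlκ)
            · exact h
        have hθz : θ (a, q) = 0 := by rw [hθval, hσ, mul_zero]
        rw [hθz]
        simp only [zero_mul, zero_add]
        apply Finset.sum_nonneg
        intro i hi
        rw [hallz i hi]
        simp
      · -- Jensen
        have hσ0 : 0 ≤ ∑ i ∈ F, (lam i / κ a) * ρ i q :=
          Finset.sum_nonneg (fun i hi =>
            mul_nonneg (div_nonneg (le_of_lt (hl i (hFc i hi))) (le_of_lt hκpos))
              (hρ0 i (hFc i hi) q))
        have hσpos : 0 < ∑ i ∈ F, (lam i / κ a) * ρ i q := lt_of_le_of_ne hσ0 (Ne.symm hσ)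
        have hwsum : ∑ i ∈ F, lam i / κ a = 1 := by
          have hκa : κ a = ∑ i ∈ F, lam i := by
            simp only [hκ, ← hF]
          rw [← Finset.sum_div, ← hκa]
          exact div_self (ne_of_gt hκpos)
        have hjensen : (∑ i ∈ F, (lam i / κ a) * ρ i q)
            * Real.log (∑ i ∈ F, (lam i / κ a) * ρ i q)
            ≤ ∑ i ∈ F, (lam i / κ a) * (ρ i q * Real.log (ρ i q)) := by
          have := Real.convexOn_mul_log.map_sum_le
            (t := F) (w := fun i => lam i / κ a) (p := fun i => ρ i q)
            (fun i hi => div_nonneg (le_of_lt (hl i (hFc i hi))) (le_of_lt hκpos))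
            hwsum
            (fun i hi => Set.mem_Ici.2 (hρ0 i (hFc i hi) q))
          simpa [smul_eq_mul] using this
        have hlog : Real.log (θ (a, q)) = Real.log (κ a)
            + Real.log (∑ i ∈ F, (lam i / κ a) * ρ i q) := by
          rw [hθval, Real.log_mul (ne_of_gt hκpos) (ne_of_gt hσpos)]
        rw [hlog, mul_add]
        have h2 : θ (a, q) * Real.log (∑ i ∈ F, (lam i / κ a) * ρ i q)
            ≤ ∑ i ∈ F, lam i * (ρ i q * Real.log (ρ i q)) := by
          rw [hθval]
          calc κ a * (∑ i ∈ F, (lam i / κ a) * ρ i q)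
                * Real.log (∑ i ∈ F, (lam i / κ a) * ρ i q)
              ≤ κ a * (∑ i ∈ F, (lam i / κ a) * (ρ i q * Real.log (ρ i q))) := by
                rw [mul_assoc]
                exact mul_le_mul_of_nonneg_left hjensen (le_of_lt hκpos)
            _ = ∑ i ∈ F, lam i * (ρ i q * Real.log (ρ i q)) := by
                rw [Finset.mul_sum]
                apply Finset.sum_congr rfl
                intro i _
                field_simp
        linarith
    calc ∑ q ∈ sH, θ (a, q) * Real.log (θ (a, q))
        ≤ ∑ q ∈ sH, (θ (a, q) * Real.log (κ a)
            + ∑ i ∈ F, lam i * (ρ i q * Real.log (ρ i q))) :=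
          Finset.sum_le_sum hpt
      _ = (∑ q ∈ sH, θ (a, q)) * Real.log (κ a)
            + ∑ i ∈ F, lam i * ∑ q ∈ sH, ρ i q * Real.log (ρ i q) := by
          rw [Finset.sum_add_distrib, ← Finset.sum_mul]
          congr 1
          rw [Finset.sum_comm (s := sH) (t := F)
            (f := fun q i => lam i * (ρ i q * Real.log (ρ i q)))]
          apply Finset.sum_congr rfl
          intro i _
          rw [Finset.mul_sum]
      _ = κ a * Real.log (κ a) + ∑ i ∈ F, lam i * relEntropy (ρ i) := by
          have hθsum : ∑ q ∈ sH, θ (a, q) = κ a := by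
            simp only [hθ, hκ]
            rw [Finset.sum_comm (s := sH) (t := Finset.filter (fun i => tl i = a) c)
              (f := fun q i => lam i * ρ i q)]
            apply Finset.sum_congr rfl
            intro i hi
            rw [← Finset.mul_sum, hρsum i (Finset.mem_filter.1 hi).1, mul_one]
          rw [hθsum]
          congr 1
          apply Finset.sum_congr rfl
          intro i hi
          rw [hρrel i (Finset.mem_filter.1 hi).1]
  -- combine
  rw [hEθ, hEκ]
  have hlast : ∑ a ∈ c.image tl, ∑ i ∈ c.filter (fun i => tl i = a), lam i * relEntropy (ρ i)
      = ∑ i ∈ c, lam i * relEntropy (ρ i) :=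
    Finset.sum_fiberwise_of_maps_to (fun i hi => Finset.mem_image_of_mem tl hi) _
  calc ∑ a ∈ c.image tl, ∑ q ∈ sH, θ (a, q) * Real.log (θ (a, q))
      ≤ ∑ a ∈ c.image tl, (κ a * Real.log (κ a)
          + ∑ i ∈ c.filter (fun i => tl i = a), lam i * relEntropy (ρ i)) :=
        Finset.sum_le_sum hkey
    _ = ∑ a ∈ c.image tl, κ a * Real.log (κ a) + ∑ i ∈ c, lam i * relEntropy (ρ i) := by
        rw [Finset.sum_add_distrib, hlast]

end Mix

/-! ### Composition of couplings along a product decomposition -/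

section Comp
variable {X Y : Type*}

/-- the reshuffle equivalence `((a,b),(q,q')) ↦ ((a,q),(b,q'))` -/
def prodSwapMid : ((X × X) × (Y × Y)) ≃ ((X × Y) × (X × Y)) where
  toFun := fun r => ((r.1.1, r.2.1), (r.1.2, r.2.2))
  invFun := fun p => ((p.1.1, p.2.1), (p.1.2, p.2.2))
  left_inv := by rintro ⟨⟨a, b⟩, ⟨q, q'⟩⟩; rfl
  right_inv := by rintro ⟨⟨a, q⟩, ⟨b, q'⟩⟩; rfl

lemma marg1_mul_cond1 (μ : X × Y → ℝ) (s : Finset (X × Y)) (h0 : ∀ p, 0 ≤ μ p)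
    (hz : ∀ p ∉ s, μ p = 0) (a : X) (q : Y) :
    marg1 μ a * cond1 μ a q = μ (a, q) := by
  by_cases hm : marg1 μ a = 0
  · rw [hm, zero_mul, marg1_zero μ s h0 hz a hm q]
  · unfold cond1
    field_simp

lemma comp_coupling
    (F G : X × Y → X × Y → X × Y) (F1 G1 : X → X → X)
    (hF1 : ∀ p q : X × Y, (F p q).1 = F1 p.1 q.1)
    (hG1 : ∀ p q : X × Y, (G p q).1 = G1 p.1 q.1)
    (μ ν : X × Y → ℝ) (hμ : IsPMF μ) (hν : IsPMF ν)
    (h1 : ∃ π1 : X × X → ℝ, IsCoupling π1 (marg1 μ) (marg1 ν) ∧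
      relEntropy (pushforward (fun p : X × X => F1 p.1 p.2) π1)
        + relEntropy (pushforward (fun p : X × X => G1 p.1 p.2) π1)
        ≤ relEntropy (marg1 μ) + relEntropy (marg1 ν))
    (h2 : ∀ a b : X, 0 < marg1 μ a → 0 < marg1 ν b →
      ∃ ρ : Y × Y → ℝ, IsCoupling ρ (cond1 μ a) (cond1 ν b) ∧
        relEntropy (pushforward (fun qq : Y × Y => (F (a, qq.1) (b, qq.2)).2) ρ)
          + relEntropy (pushforward (fun qq : Y × Y => (G (a, qq.1) (b, qq.2)).2) ρ)
          ≤ relEntropy (cond1 μ a) + relEntropy (cond1 ν b)) :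
    ∃ π : (X × Y) × (X × Y) → ℝ, IsCoupling π μ ν ∧
      relEntropy (pushforward (fun p : (X × Y) × (X × Y) => F p.1 p.2) π)
        + relEntropy (pushforward (fun p : (X × Y) × (X × Y) => G p.1 p.2) π)
        ≤ relEntropy μ + relEntropy ν := by
  classical
  obtain ⟨sμ, hsμpos, hsμz, hsμsum⟩ := pmf_support hμ
  obtain ⟨sν, hsνpos, hsνz, hsνsum⟩ := pmf_support hν
  obtain ⟨π1, hπ1c, hπ1e⟩ := h1
  obtain ⟨hπ1pmf, hπ1m1, hπ1m2⟩ := hπ1c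
  obtain ⟨sπ1, hsπ1pos, hsπ1z, hsπ1sum⟩ := pmf_support hπ1pmf
  have hμ0 := hμ.1
  have hν0 := hν.1
  have hπ10 := hπ1pmf.1
  -- positivity of the marginals on the support of π1
  have hposm : ∀ ab ∈ sπ1, 0 < marg1 μ ab.1 ∧ 0 < marg1 ν ab.2 := by
    intro ab hab
    constructor
    · have h1' : marg1 μ ab.1 = ∑ p ∈ sπ1.filter (fun p => p.1 = ab.1), π1 p := by
        rw [← hπ1m1 ab.1]
        exact finsum_snd_filter π1 sπ1 hsπ1z ab.1
      rw [h1']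
      exact lt_of_lt_of_le (hsπ1pos ab hab)
        (Finset.single_le_sum (fun p hp => le_of_lt (hsπ1pos p (Finset.mem_filter.1 hp).1))
          (Finset.mem_filter.2 ⟨hab, rfl⟩))
    · have h1' : marg1 ν ab.2 = ∑ p ∈ sπ1.filter (fun p => p.2 = ab.2), π1 p := by
        rw [← hπ1m2 ab.2]
        exact finsum_fst_filter π1 sπ1 hsπ1z ab.2
      rw [h1']
      exact lt_of_lt_of_le (hsπ1pos ab hab)
        (Finset.single_le_sum (fun p hp => le_of_lt (hsπ1pos p (Finset.mem_filter.1 hp).1))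
          (Finset.mem_filter.2 ⟨hab, rfl⟩))
  -- choose the conditional couplings
  have h2' : ∀ ab : X × X, ∃ ρ : Y × Y → ℝ,
      0 < marg1 μ ab.1 → 0 < marg1 ν ab.2 →
      IsCoupling ρ (cond1 μ ab.1) (cond1 ν ab.2) ∧
        relEntropy (pushforward (fun qq : Y × Y => (F (ab.1, qq.1) (ab.2, qq.2)).2) ρ)
          + relEntropy (pushforward (fun qq : Y × Y => (G (ab.1, qq.1) (ab.2, qq.2)).2) ρ)
          ≤ relEntropy (cond1 μ ab.1) + relEntropy (cond1 ν ab.2) := by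
    intro ab
    by_cases h : 0 < marg1 μ ab.1 ∧ 0 < marg1 ν ab.2
    · obtain ⟨ρ, hρ⟩ := h2 ab.1 ab.2 h.1 h.2
      exact ⟨ρ, fun _ _ => hρ⟩
    · refine ⟨fun _ => 0, fun hA hB => absurd ⟨hA, hB⟩ h⟩
  choose R hR using h2'
  have hRc : ∀ ab ∈ sπ1, IsCoupling (R ab) (cond1 μ ab.1) (cond1 ν ab.2) :=
    fun ab hab => (hR ab (hposm ab hab).1 (hposm ab hab).2).1
  have hRe : ∀ ab ∈ sπ1,
      relEntropy (pushforward (fun qq : Y × Y => (F (ab.1, qq.1) (ab.2, qq.2)).2) (R ab))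
        + relEntropy (pushforward (fun qq : Y × Y => (G (ab.1, qq.1) (ab.2, qq.2)).2) (R ab))
        ≤ relEntropy (cond1 μ ab.1) + relEntropy (cond1 ν ab.2) :=
    fun ab hab => (hR ab (hposm ab hab).1 (hposm ab hab).2).2
  -- a common support finset for all the conditional couplings
  set sQ : Finset (Y × Y) := sπ1.attach.biUnion
      (fun ab => ((hRc ab.1 ab.2).1.2.1).toFinset) with hsQ
  have hsQz : ∀ ab ∈ sπ1, ∀ qq ∉ sQ, R ab qq = 0 := by
    intro ab hab qq hqq
    by_contra h
    apply hqq
    rw [hsQ]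
    apply Finset.mem_biUnion.2
    exact ⟨⟨ab, hab⟩, Finset.mem_attach _ _, ((hRc ab hab).1.2.1).mem_toFinset.2 h⟩
  have hR0 : ∀ ab ∈ sπ1, ∀ qq, 0 ≤ R ab qq := fun ab hab qq => (hRc ab hab).1.1 qq
  have hRsum : ∀ ab ∈ sπ1, ∑ qq ∈ sQ, R ab qq = 1 := by
    intro ab hab
    rw [← finsum_eq_sum_of_vanish (R ab) sQ (hsQz ab hab)]
    exact (hRc ab hab).1.2.2
  -- the joint measure, on the reshuffled space
  set pt : (X × X) × (Y × Y) → ℝ := fun r => π1 r.1 * R r.1 r.2 with hptdef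
  have hpt0 : ∀ r, 0 ≤ pt r := by
    intro r
    by_cases h : r.1 ∈ sπ1
    · exact mul_nonneg (hπ10 r.1) (hR0 r.1 h r.2)
    · rw [hptdef]
      simp only
      rw [hsπ1z r.1 h, zero_mul]
  have hptz : ∀ r ∉ sπ1 ×ˢ sQ, pt r = 0 := by
    intro r hr
    rw [Finset.mem_product] at hr
    push_neg at hr
    by_cases h : r.1 ∈ sπ1
    · rw [hptdef]
      simp only
      rw [hsQz r.1 h r.2 (hr h), mul_zero]
    · rw [hptdef]
      simp only
      rw [hsπ1z r.1 h, zero_mul]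
  have hptsum : ∑ r ∈ sπ1 ×ˢ sQ, pt r = 1 := by
    rw [Finset.sum_product]
    have : ∀ ab ∈ sπ1, ∑ qq ∈ sQ, pt (ab, qq) = π1 ab := by
      intro ab hab
      rw [hptdef]
      simp only
      rw [← Finset.mul_sum, hRsum ab hab, mul_one]
    rw [Finset.sum_congr rfl this]
    exact hsπ1sum
  have hptpmf : IsPMF pt := isPMF_of_sum pt (sπ1 ×ˢ sQ) hpt0 hptz hptsum
  -- the coupling
  set π : (X × Y) × (X × Y) → ℝ := fun p => pt (prodSwapMid.symm p) with hπdef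
  have hπpmf : IsPMF π := isPMF_comp_equiv prodSwapMid.symm pt hptpmf
  -- marginal computations
  have hmargμ : ∀ x : X × Y, ∑ᶠ y, π (x, y) = μ x := by
    rintro ⟨a, q⟩
    have hval : ∀ y : X × Y, π ((a, q), y) = π1 (a, y.1) * R (a, y.1) (q, y.2) := by
      rintro ⟨b, q'⟩; rfl
    set sB : Finset X := sπ1.image Prod.snd with hsB
    set sQ2 : Finset Y := sQ.image Prod.snd with hsQ2
    have hvan : ∀ y : X × Y, y ∉ sB ×ˢ sQ2 → π ((a, q), y) = 0 := by
      rintro ⟨b, q'⟩ hy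
      rw [Finset.mem_product] at hy
      push_neg at hy
      rw [hval (b, q')]
      by_cases h : (a, b) ∈ sπ1
      · have hb : b ∈ sB := hsB ▸ Finset.mem_image_of_mem Prod.snd h
        have hq' := hy hb
        have : (q, q') ∉ sQ := by
          intro hc
          exact hq' (hsQ2 ▸ Finset.mem_image_of_mem Prod.snd hc)
        rw [hsQz (a, b) h (q, q') this, mul_zero]
      · rw [hsπ1z (a, b) h, zero_mul]
    rw [finsum_eq_sum_of_vanish _ (sB ×ˢ sQ2) hvan]
    rw [Finset.sum_product]
    have hinner : ∀ b ∈ sB, ∑ q' ∈ sQ2, π ((a, q), (b, q')) = π1 (a, b) * cond1 μ a q := by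
      intro b _
      have : ∀ q' ∈ sQ2, π ((a, q), (b, q')) = π1 (a, b) * R (a, b) (q, q') :=
        fun q' _ => hval (b, q')
      rw [Finset.sum_congr rfl this, ← Finset.mul_sum]
      by_cases h : (a, b) ∈ sπ1
      · congr 1
        have hv2 : ∀ z : Y, z ∉ sQ2 → R (a, b) (q, z) = 0 := by
          intro z hzz
          apply hsQz (a, b) h
          intro hc
          exact hzz (hsQ2 ▸ Finset.mem_image_of_mem Prod.snd hc)
        rw [← finsum_eq_sum_of_vanish (fun q' => R (a, b) (q, q')) sQ2 hv2]
        exact (hRc (a, b) h).2.1 q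
      · rw [hsπ1z (a, b) h, zero_mul, zero_mul]
    rw [Finset.sum_congr rfl hinner, ← Finset.sum_mul]
    have hbsum : ∑ b ∈ sB, π1 (a, b) = marg1 μ a := by
      rw [← hπ1m1 a]
      symm
      apply finsum_eq_sum_of_vanish
      intro b hb
      by_contra h
      have : (a, b) ∈ sπ1 := by
        by_contra hc
        exact h (hsπ1z _ hc)
      exact hb (hsB ▸ Finset.mem_image_of_mem Prod.snd this)
    rw [hbsum]
    exact marg1_mul_cond1 μ sμ hμ0 hsμz a q
  have hmargν : ∀ y : X × Y, ∑ᶠ x, π (x, y) = ν y := by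
    rintro ⟨b, q'⟩
    have hval : ∀ x : X × Y, π (x, (b, q')) = π1 (x.1, b) * R (x.1, b) (x.2, q') := by
      rintro ⟨a, q⟩; rfl
    set sA : Finset X := sπ1.image Prod.fst with hsA
    set sQ1 : Finset Y := sQ.image Prod.fst with hsQ1
    have hvan : ∀ x : X × Y, x ∉ sA ×ˢ sQ1 → π (x, (b, q')) = 0 := by
      rintro ⟨a, q⟩ hx
      rw [Finset.mem_product] at hx
      push_neg at hx
      rw [hval (a, q)]
      by_cases h : (a, b) ∈ sπ1
      · have haa : a ∈ sA := hsA ▸ Finset.mem_image_of_mem Prod.fst h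
        have hq := hx haa
        have : (q, q') ∉ sQ := by
          intro hc
          exact hq (hsQ1 ▸ Finset.mem_image_of_mem Prod.fst hc)
        rw [hsQz (a, b) h (q, q') this, mul_zero]
      · rw [hsπ1z (a, b) h, zero_mul]
    rw [finsum_eq_sum_of_vanish _ (sA ×ˢ sQ1) hvan]
    rw [Finset.sum_product]
    have hinner : ∀ a ∈ sA, ∑ q ∈ sQ1, π ((a, q), (b, q')) = π1 (a, b) * cond1 ν b q' := by
      intro a _
      have : ∀ q ∈ sQ1, π ((a, q), (b, q')) = π1 (a, b) * R (a, b) (q, q') :=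
        fun q _ => hval (a, q)
      rw [Finset.sum_congr rfl this, ← Finset.mul_sum]
      by_cases h : (a, b) ∈ sπ1
      · congr 1
        have hv2 : ∀ z : Y, z ∉ sQ1 → R (a, b) (z, q') = 0 := by
          intro z hzz
          apply hsQz (a, b) h
          intro hc
          exact hzz (hsQ1 ▸ Finset.mem_image_of_mem Prod.fst hc)
        rw [← finsum_eq_sum_of_vanish (fun q => R (a, b) (q, q')) sQ1 hv2]
        exact (hRc (a, b) h).2.2 q'
      · rw [hsπ1z (a, b) h, zero_mul, zero_mul]
    rw [Finset.sum_congr rfl hinner, ← Finset.sum_mul]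
    have hasum : ∑ a ∈ sA, π1 (a, b) = marg1 ν b := by
      rw [← hπ1m2 b]
      symm
      apply finsum_eq_sum_of_vanish
      intro a haa
      by_contra h
      have : (a, b) ∈ sπ1 := by
        by_contra hc
        exact h (hsπ1z _ hc)
      exact haa (hsA ▸ Finset.mem_image_of_mem Prod.fst this)
    rw [hasum]
    exact marg1_mul_cond1 ν sν hν0 hsνz b q'
  refine ⟨π, ⟨hπpmf, hmargμ, hmargν⟩, ?_⟩
  -- the pushforwards as fibered mixtures
  have hpush : ∀ (K : X × Y → X × Y → X × Y) (K1 : X → X → X),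
      (∀ p q : X × Y, (K p q).1 = K1 p.1 q.1) →
      pushforward (fun p : (X × Y) × (X × Y) => K p.1 p.2) π
        = fun z : X × Y => ∑ ab ∈ sπ1.filter (fun ab => K1 ab.1 ab.2 = z.1),
            π1 ab * pushforward (fun qq : Y × Y => (K (ab.1, qq.1) (ab.2, qq.2)).2) (R ab) z.2 := by
    intro K K1 hK1
    rw [hπdef, pushforward_comp_equiv prodSwapMid.symm
      (fun p : (X × Y) × (X × Y) => K p.1 p.2) pt]
    funext z
    rw [pushforward_eq_sum _ pt (sπ1 ×ˢ sQ) hptz z]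
    rw [Finset.sum_filter, Finset.sum_product]
    rw [Finset.sum_filter]
    apply Finset.sum_congr rfl
    intro ab hab
    have hstep : ∀ qq ∈ sQ,
        (if K (prodSwapMid.symm.symm (ab, qq)).1 (prodSwapMid.symm.symm (ab, qq)).2 = z
          then pt (ab, qq) else 0)
        = if K1 ab.1 ab.2 = z.1 then
            (if (K (ab.1, qq.1) (ab.2, qq.2)).2 = z.2 then pt (ab, qq) else 0) else 0 := by
      intro qq _
      have hcond : (K (prodSwapMid.symm.symm (ab, qq)).1 (prodSwapMid.symm.symm (ab, qq)).2 = z)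
          ↔ (K1 ab.1 ab.2 = z.1 ∧ (K (ab.1, qq.1) (ab.2, qq.2)).2 = z.2) := by
        have he : prodSwapMid.symm.symm (ab, qq) = ((ab.1, qq.1), (ab.2, qq.2)) := rfl
        rw [he, Prod.ext_iff, hK1]
      rw [if_congr hcond rfl rfl, ite_and]
    rw [Finset.sum_congr rfl hstep]
    by_cases h : K1 ab.1 ab.2 = z.1
    · rw [if_pos h]
      have : ∀ qq ∈ sQ, (if K1 ab.1 ab.2 = z.1 then
            (if (K (ab.1, qq.1) (ab.2, qq.2)).2 = z.2 then pt (ab, qq) else 0) else 0)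
          = (if (K (ab.1, qq.1) (ab.2, qq.2)).2 = z.2 then pt (ab, qq) else 0) :=
        fun qq _ => by rw [if_pos h]
      rw [Finset.sum_congr rfl this, ← Finset.sum_filter]
      rw [pushforward_eq_sum (fun qq : Y × Y => (K (ab.1, qq.1) (ab.2, qq.2)).2) (R ab) sQ
        (hsQz ab hab) z.2, Finset.mul_sum]
    · rw [if_neg h]
      apply Finset.sum_eq_zero
      intro qq _
      rw [if_neg h]
  have hκF := hpush F F1 hF1
  have hκG := hpush G G1 hG1
  rw [hκF, hκG]
  -- mixture bounds
  have hmixF : relEntropy (fun z : X × Y => ∑ ab ∈ sπ1.filter (fun ab => F1 ab.1 ab.2 = z.1),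
        π1 ab * pushforward (fun qq : Y × Y => (F (ab.1, qq.1) (ab.2, qq.2)).2) (R ab) z.2)
      ≤ relEntropy (fun x => ∑ ab ∈ sπ1.filter (fun ab => F1 ab.1 ab.2 = x), π1 ab)
        + ∑ ab ∈ sπ1, π1 ab * relEntropy
            (pushforward (fun qq : Y × Y => (F (ab.1, qq.1) (ab.2, qq.2)).2) (R ab)) := by
    simpa using mix_entropy sπ1 π1 hsπ1pos (fun ab => F1 ab.1 ab.2)
      (fun ab => pushforward (fun qq : Y × Y => (F (ab.1, qq.1) (ab.2, qq.2)).2) (R ab))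
      (fun ab hab => pushforward_isPMF _ _ (hRc ab hab).1)
  have hmixG : relEntropy (fun z : X × Y => ∑ ab ∈ sπ1.filter (fun ab => G1 ab.1 ab.2 = z.1),
        π1 ab * pushforward (fun qq : Y × Y => (G (ab.1, qq.1) (ab.2, qq.2)).2) (R ab) z.2)
      ≤ relEntropy (fun x => ∑ ab ∈ sπ1.filter (fun ab => G1 ab.1 ab.2 = x), π1 ab)
        + ∑ ab ∈ sπ1, π1 ab * relEntropy
            (pushforward (fun qq : Y × Y => (G (ab.1, qq.1) (ab.2, qq.2)).2) (R ab)) := by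
    simpa using mix_entropy sπ1 π1 hsπ1pos (fun ab => G1 ab.1 ab.2)
      (fun ab => pushforward (fun qq : Y × Y => (G (ab.1, qq.1) (ab.2, qq.2)).2) (R ab))
      (fun ab hab => pushforward_isPMF _ _ (hRc ab hab).1)
  -- identify the mixture bases with pushforwards of π1
  have hpf1F : relEntropy (fun x => ∑ ab ∈ sπ1.filter (fun ab => F1 ab.1 ab.2 = x), π1 ab)
      = relEntropy (pushforward (fun p : X × X => F1 p.1 p.2) π1) := by
    congr 1
    funext x
    rw [pushforward_eq_sum (fun p : X × X => F1 p.1 p.2) π1 sπ1 hsπ1z x]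
  have hpf1G : relEntropy (fun x => ∑ ab ∈ sπ1.filter (fun ab => G1 ab.1 ab.2 = x), π1 ab)
      = relEntropy (pushforward (fun p : X × X => G1 p.1 p.2) π1) := by
    congr 1
    funext x
    rw [pushforward_eq_sum (fun p : X × X => G1 p.1 p.2) π1 sπ1 hsπ1z x]
  -- per-pair conditional bound
  have hREsum : ∑ ab ∈ sπ1, π1 ab * relEntropy
          (pushforward (fun qq : Y × Y => (F (ab.1, qq.1) (ab.2, qq.2)).2) (R ab))
        + ∑ ab ∈ sπ1, π1 ab * relEntropy
          (pushforward (fun qq : Y × Y => (G (ab.1, qq.1) (ab.2, qq.2)).2) (R ab))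
      ≤ ∑ ab ∈ sπ1, π1 ab * relEntropy (cond1 μ ab.1)
        + ∑ ab ∈ sπ1, π1 ab * relEntropy (cond1 ν ab.2) := by
    rw [← Finset.sum_add_distrib, ← Finset.sum_add_distrib]
    apply Finset.sum_le_sum
    intro ab hab
    rw [← mul_add, ← mul_add]
    exact mul_le_mul_of_nonneg_left (hRe ab hab) (le_of_lt (hsπ1pos ab hab))
  -- regroup the conditional sums
  have himgμ : sπ1.image Prod.fst = sμ.image Prod.fst := by
    ext a
    rw [marg1_pos_iff μ sμ hsμpos hsμz hμ0 a]
    constructor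
    · intro ha
      obtain ⟨ab, hab, hab2⟩ := Finset.mem_image.1 ha
      exact hab2 ▸ (hposm ab hab).1
    · intro hpos
      have heq : marg1 μ a = ∑ p ∈ sπ1.filter (fun p => p.1 = a), π1 p := by
        rw [← hπ1m1 a]
        exact finsum_snd_filter π1 sπ1 hsπ1z a
      rw [heq] at hpos
      have hne : (sπ1.filter (fun p => p.1 = a)).Nonempty := by
        by_contra h
        rw [Finset.not_nonempty_iff_eq_empty] at h
        rw [h] at hpos
        simp at hpos
      obtain ⟨p, hp⟩ := hne
      obtain ⟨hp1, hp2⟩ := Finset.mem_filter.1 hp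
      exact Finset.mem_image.2 ⟨p, hp1, hp2⟩
  have himgν : sπ1.image Prod.snd = sν.image Prod.fst := by
    ext b
    rw [marg1_pos_iff ν sν hsνpos hsνz hν0 b]
    constructor
    · intro hb
      obtain ⟨ab, hab, hab2⟩ := Finset.mem_image.1 hb
      exact hab2 ▸ (hposm ab hab).2
    · intro hpos
      have heq : marg1 ν b = ∑ p ∈ sπ1.filter (fun p => p.2 = b), π1 p := by
        rw [← hπ1m2 b]
        exact finsum_fst_filter π1 sπ1 hsπ1z b
      rw [heq] at hpos
      have hne : (sπ1.filter (fun p => p.2 = b)).Nonempty := by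
        by_contra h
        rw [Finset.not_nonempty_iff_eq_empty] at h
        rw [h] at hpos
        simp at hpos
      obtain ⟨p, hp⟩ := hne
      obtain ⟨hp1, hp2⟩ := Finset.mem_filter.1 hp
      exact Finset.mem_image.2 ⟨p, hp1, hp2⟩
  have hgroupμ : ∑ ab ∈ sπ1, π1 ab * relEntropy (cond1 μ ab.1)
      = ∑ a ∈ sμ.image Prod.fst, marg1 μ a * relEntropy (cond1 μ a) := by
    rw [← himgμ]
    rw [← Finset.sum_fiberwise_of_maps_to (g := Prod.fst) (t := sπ1.image Prod.fst)
      (fun p hp => Finset.mem_image_of_mem _ hp)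
      (fun ab => π1 ab * relEntropy (cond1 μ ab.1))]
    apply Finset.sum_congr rfl
    intro a _
    have hcng : ∀ ab ∈ sπ1.filter (fun ab => ab.1 = a),
        π1 ab * relEntropy (cond1 μ ab.1) = π1 ab * relEntropy (cond1 μ a) := by
      intro ab hab
      rw [(Finset.mem_filter.1 hab).2]
    rw [Finset.sum_congr rfl hcng, ← Finset.sum_mul]
    congr 1
    rw [← finsum_snd_filter π1 sπ1 hsπ1z a]
    exact hπ1m1 a
  have hgroupν : ∑ ab ∈ sπ1, π1 ab * relEntropy (cond1 ν ab.2)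
      = ∑ b ∈ sν.image Prod.fst, marg1 ν b * relEntropy (cond1 ν b) := by
    rw [← himgν]
    rw [← Finset.sum_fiberwise_of_maps_to (g := Prod.snd) (t := sπ1.image Prod.snd)
      (fun p hp => Finset.mem_image_of_mem _ hp)
      (fun ab => π1 ab * relEntropy (cond1 ν ab.2))]
    apply Finset.sum_congr rfl
    intro b _
    have hcng : ∀ ab ∈ sπ1.filter (fun ab => ab.2 = b),
        π1 ab * relEntropy (cond1 ν ab.2) = π1 ab * relEntropy (cond1 ν b) := by
      intro ab hab
      rw [(Finset.mem_filter.1 hab).2]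
    rw [Finset.sum_congr rfl hcng, ← Finset.sum_mul]
    congr 1
    rw [← finsum_fst_filter π1 sπ1 hsπ1z b]
    exact hπ1m2 b
  -- chain rules
  have hCRμ := chain_rule μ sμ hsμpos hsμz
  have hCRν := chain_rule ν sν hsνpos hsνz
  linarith

end Comp

/-! ### Block induction -/

section Blocks

lemma relEntropy_pushforward_equiv {A C D : Type*} (h : C ≃ D) (g : A → C) (π : A → ℝ) :
    relEntropy (pushforward (fun x => h (g x)) π) = relEntropy (pushforward g π) := by
  have hfun : pushforward (fun x => h (g x)) π = fun z => pushforward g π (h.symm z) := by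
    funext z
    have hset : {p : A | h (g p) = z} = {p : A | g p = h.symm z} := by
      ext x
      simp only [Set.mem_setOf_eq]
      constructor
      · intro hh
        rw [← hh]
        simp
      · intro hh
        rw [hh]
        simp
    show ∑ᶠ p ∈ {p : A | h (g p) = z}, π p = ∑ᶠ p ∈ {p : A | g p = h.symm z}, π p
    rw [hset]
  rw [hfun]
  exact relEntropy_comp_equiv h.symm (pushforward g π)

def KWgen {k : ℕ} (B : Fin k → Type) (ord : ∀ i, B i → B i → Prop)
    (T : (∀ i, B i) → (∀ i, B i) → (∀ i, B i)) : Prop :=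
  (∀ (i : Fin k) (x y x' y' : ∀ j, B j),
      (∀ j, j ≤ i → x j = x' j ∧ y j = y' j) → T x y i = T x' y' i) ∧
  (∀ (i : Fin k) (x y x' y' : ∀ j, B j),
      (∀ j, j < i → x j = x' j ∧ y j = y' j) →
      ord i (x i) (x' i) → ord i (y i) (y' i) →
      ord i (T x y i) (T x' y' i))

lemma relEntropy_unique {A : Type*} [Unique A] (θ : A → ℝ) (h : IsPMF θ) : relEntropy θ = 0 := by
  have h1 : θ default = 1 := by
    have := h.2.2
    rwa [finsum_unique] at this
  unfold relEntropy
  rw [finsum_unique, h1]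
  simp

theorem block_induction (k : ℕ) (B : Fin k → Type) [inst : ∀ i, AddCommGroup (B i)]
    (ord : ∀ i, B i → B i → Prop)
    (hord : ∀ i, TotalAdditiveOrdering (ord i) ∧ ∃ u, IsMinimalPositive (ord i) u)
    (T : (∀ i, B i) → (∀ i, B i) → (∀ i, B i))
    (hTE : TranslationEquivariant T)
    (hT : KWgen B ord T) (hS : KWgen B ord (fun x y => x + y - T x y))
    (μ ν : (∀ i, B i) → ℝ) (hμ : IsPMF μ) (hν : IsPMF ν) :
    ∃ π : (∀ i, B i) × (∀ i, B i) → ℝ, IsCoupling π μ ν ∧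
      relEntropy (pushforward (fun p : (∀ i, B i) × (∀ i, B i) => T p.1 p.2) π)
        + relEntropy (pushforward (fun p : (∀ i, B i) × (∀ i, B i) => p.1 + p.2 - T p.1 p.2) π)
      ≤ relEntropy μ + relEntropy ν := by
  induction k with
  | zero =>
    haveI hU : Unique (∀ i : Fin 0, B i) :=
      ⟨⟨fun i => i.elim0⟩, fun f => funext fun i => i.elim0⟩
    have hμ1 : ∀ x, μ x = 1 := by
      intro x
      have h1 := hμ.2.2
      rw [finsum_unique] at h1
      rw [Unique.eq_default x]
      exact h1
    have hν1 : ∀ y, ν y = 1 := by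
      intro y
      have h1 := hν.2.2
      rw [finsum_unique] at h1
      rw [Unique.eq_default y]
      exact h1
    haveI hU2 : Unique ((∀ i : Fin 0, B i) × (∀ i : Fin 0, B i)) :=
      ⟨⟨(default, default)⟩, fun p => Prod.ext_iff.2 ⟨Unique.eq_default _, Unique.eq_default _⟩⟩
    have hπ : IsPMF (fun _ : (∀ i : Fin 0, B i) × (∀ i : Fin 0, B i) => (1 : ℝ)) :=
      ⟨fun _ => zero_le_one, Set.toFinite _, by rw [finsum_unique]⟩
    refine ⟨fun _ => 1, ⟨hπ, ?_, ?_⟩, ?_⟩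
    · intro x
      rw [finsum_unique]
      exact (hμ1 x).symm
    · intro y
      rw [finsum_unique]
      exact (hν1 y).symm
    · rw [relEntropy_unique _ (pushforward_isPMF _ _ hπ),
        relEntropy_unique _ (pushforward_isPMF _ _ hπ),
        relEntropy_unique μ hμ, relEntropy_unique ν hν]
  | succ n ih =>
    classical
    set E : (B 0 × ∀ i : Fin n, B i.succ) ≃ (∀ i : Fin (n + 1), B i) := Fin.consEquiv B with hE
    -- additivity of cons
    have hconsadd : ∀ (a c : B 0) (y z : ∀ i : Fin n, B i.succ),
        E (a, y) + E (c, z) = E (a + c, y + z) := by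
      intro a c y z
      funext i
      refine Fin.cases ?_ ?_ i
      · rfl
      · intro j
        rfl
    -- block-zero component only depends on block zero
    have hT0 : ∀ (p q : B 0 × ∀ i : Fin n, B i.succ),
        T (E p) (E q) 0 = T (E (p.1, 0)) (E (q.1, 0)) 0 := by
      intro p q
      apply hT.1 0
      intro j hj
      have hj0 : j = 0 := Fin.le_zero_iff.1 hj
      subst hj0
      exact ⟨rfl, rfl⟩
    -- the order on block 0
    obtain ⟨hord0, u0, hu0min⟩ := hord 0
    obtain ⟨hrefl, hantisymm, htrans2, htotal, haddord⟩ := hord0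
    letI : LinearOrder (B 0) :=
      { le := ord 0
        le_refl := hrefl
        le_trans := htrans2
        le_antisymm := hantisymm
        le_total := htotal
        toDecidableLE := fun a b => Classical.propDecidable _ }
    have hadd0 : ∀ a b c : B 0, a ≤ b → a + c ≤ b + c := fun a b c h => haddord a b c h
    have hu0pos : (0 : B 0) < u0 := lt_of_le_of_ne hu0min.1.1 (Ne.symm hu0min.1.2)
    have hu0minle : ∀ g : B 0, 0 < g → u0 ≤ g :=
      fun g hg => hu0min.2 g (le_of_lt hg) (ne_of_gt hg)
    have hnotlt0 : ∀ j : Fin (n + 1), ¬ j < 0 := by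
      intro j h
      exact absurd (Fin.le_zero_iff.1 h.le ▸ h) (lt_irrefl 0)
    -- monotonicity of the block-0 maps
    have hT1mono : ∀ a a' b b' : B 0, a ≤ a' → b ≤ b' →
        T (E (a, 0)) (E (b, 0)) 0 ≤ T (E (a', 0)) (E (b', 0)) 0 := by
      intro a a' b b' h1 h2
      exact hT.2 0 _ _ _ _ (fun j hj => absurd hj (hnotlt0 j)) h1 h2
    have hS1mono : ∀ a a' b b' : B 0, a ≤ a' → b ≤ b' →
        a + b - T (E (a, 0)) (E (b, 0)) 0 ≤ a' + b' - T (E (a', 0)) (E (b', 0)) 0 := by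
      intro a a' b b' h1 h2
      exact hS.2 0 (E (a, 0)) (E (b, 0)) (E (a', 0)) (E (b', 0))
        (fun j hj => absurd hj (hnotlt0 j)) h1 h2
    have hTE1 : ∀ a b c : B 0,
        T (E (a + c, 0)) (E (b + c, 0)) 0 = T (E (a, 0)) (E (b, 0)) 0 + c := by
      intro a b c
      have h1 : E (a + c, (0 : ∀ i : Fin n, B i.succ)) = E (a, 0) + E (c, 0) := by
        have := hconsadd a c 0 0
        rw [add_zero] at this
        exact this.symm
      have h2 : E (b + c, (0 : ∀ i : Fin n, B i.succ)) = E (b, 0) + E (c, 0) := by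
        have := hconsadd b c 0 0
        rw [add_zero] at this
        exact this.symm
      rw [h1, h2]
      exact congrFun (hTE (E (a, 0)) (E (b, 0)) (E (c, 0))) 0
    -- supports of the transported measures
    have hμ'p : IsPMF (fun p => μ (E p)) := isPMF_comp_equiv E μ hμ
    have hν'p : IsPMF (fun p => ν (E p)) := isPMF_comp_equiv E ν hν
    obtain ⟨sμ', hsμ'pos, hsμ'z, hsμ'sum⟩ := pmf_support hμ'p
    obtain ⟨sν', hsν'pos, hsν'z, hsν'sum⟩ := pmf_support hν'p
    -- h1 : the one-block coupling on B 0
    have h1 : ∃ π1 : B 0 × B 0 → ℝ,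
        IsCoupling π1 (marg1 (fun p => μ (E p))) (marg1 (fun p => ν (E p))) ∧
        relEntropy (pushforward (fun p : B 0 × B 0 =>
            T (E (p.1, 0)) (E (p.2, 0)) 0) π1)
          + relEntropy (pushforward (fun p : B 0 × B 0 =>
              p.1 + p.2 - T (E (p.1, 0)) (E (p.2, 0)) 0) π1)
          ≤ relEntropy (marg1 (fun p => μ (E p))) + relEntropy (marg1 (fun p => ν (E p))) := by
      exact one_block hadd0 u0 hu0pos hu0minle
        (fun a b => T (E (a, 0)) (E (b, 0)) 0)
        hT1mono hS1mono hTE1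
        (marg1 (fun p => μ (E p))) (marg1 (fun p => ν (E p)))
        (marg1_isPMF _ sμ' hμ'p hsμ'pos hsμ'z hsμ'sum)
        (marg1_isPMF _ sν' hν'p hsν'pos hsν'z hsν'sum)
    -- h2 : conditional couplings via the induction hypothesis
    have h2 : ∀ a b : B 0,
        0 < marg1 (fun p => μ (E p)) a → 0 < marg1 (fun p => ν (E p)) b →
        ∃ ρ : (∀ i : Fin n, B i.succ) × (∀ i : Fin n, B i.succ) → ℝ,
          IsCoupling ρ (cond1 (fun p => μ (E p)) a) (cond1 (fun p => ν (E p)) b) ∧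
          relEntropy (pushforward (fun qq : (∀ i : Fin n, B i.succ) × (∀ i : Fin n, B i.succ) =>
              ((E.symm (T (E (a, qq.1)) (E (b, qq.2))))).2) ρ)
            + relEntropy (pushforward
                (fun qq : (∀ i : Fin n, B i.succ) × (∀ i : Fin n, B i.succ) =>
                  ((E.symm (E (a, qq.1) + E (b, qq.2) - T (E (a, qq.1)) (E (b, qq.2))))).2) ρ)
            ≤ relEntropy (cond1 (fun p => μ (E p)) a)
              + relEntropy (cond1 (fun p => ν (E p)) b) := by
      intro a b ha hb
      -- the conditional map on the remaining blocks
      set Tab : (∀ i : Fin n, B i.succ) → (∀ i : Fin n, B i.succ) → (∀ i : Fin n, B i.succ) :=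
        fun q q' => (E.symm (T (E (a, q)) (E (b, q')))).2 with hTab
      have hTEab : TranslationEquivariant Tab := by
        intro q q' z
        have h1' : E (a, q + z) = E (a, q) + E ((0 : B 0), z) := by
          have := hconsadd a 0 q z
          rw [add_zero] at this
          exact this.symm
        have h2' : E (b, q' + z) = E (b, q') + E ((0 : B 0), z) := by
          have := hconsadd b 0 q' z
          rw [add_zero] at this
          exact this.symm
        show (E.symm (T (E (a, q + z)) (E (b, q' + z)))).2 = _
        rw [h1', h2', hTE (E (a, q)) (E (b, q')) (E ((0 : B 0), z))]
        rfl
      have hsuccle : ∀ (j : Fin (n + 1)) (i : Fin n), j ≤ i.succ →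
          j = 0 ∨ ∃ j0 : Fin n, j = j0.succ ∧ j0 ≤ i := by
        intro j i h
        rcases Fin.eq_zero_or_eq_succ j with h0 | ⟨j0, rfl⟩
        · left; exact h0
        · right; exact ⟨j0, rfl, Fin.succ_le_succ_iff.1 h⟩
      have hsucclt : ∀ (j : Fin (n + 1)) (i : Fin n), j < i.succ →
          j = 0 ∨ ∃ j0 : Fin n, j = j0.succ ∧ j0 < i := by
        intro j i h
        rcases Fin.eq_zero_or_eq_succ j with h0 | ⟨j0, rfl⟩
        · left; exact h0
        · right; exact ⟨j0, rfl, Fin.succ_lt_succ_iff.1 h⟩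
      have hagle : ∀ (i : Fin n) (q q' r r' : ∀ i : Fin n, B i.succ),
          (∀ j, j ≤ i → q j = r j ∧ q' j = r' j) →
          ∀ j, j ≤ i.succ → E (a, q) j = E (a, r) j ∧ E (b, q') j = E (b, r') j := by
        intro i q q' r r' hag j hj
        rcases hsuccle j i hj with h0 | ⟨j0, rfl, hj0⟩
        · subst h0; exact ⟨rfl, rfl⟩
        · exact ⟨(hag j0 hj0).1, (hag j0 hj0).2⟩
      have haglt : ∀ (i : Fin n) (q q' r r' : ∀ i : Fin n, B i.succ),
          (∀ j, j < i → q j = r j ∧ q' j = r' j) →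
          ∀ j, j < i.succ → E (a, q) j = E (a, r) j ∧ E (b, q') j = E (b, r') j := by
        intro i q q' r r' hag j hj
        rcases hsucclt j i hj with h0 | ⟨j0, rfl, hj0⟩
        · subst h0; exact ⟨rfl, rfl⟩
        · exact ⟨(hag j0 hj0).1, (hag j0 hj0).2⟩
      have hKT : KWgen (fun i : Fin n => B i.succ) (fun i => ord i.succ) Tab := by
        constructor
        · intro i q q' r r' hag
          exact hT.1 i.succ (E (a, q)) (E (b, q')) (E (a, r)) (E (b, r'))
            (hagle i q q' r r' hag)
        · intro i q q' r r' hag hx hy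
          exact hT.2 i.succ (E (a, q)) (E (b, q')) (E (a, r)) (E (b, r'))
            (haglt i q q' r r' hag) hx hy
      have hKS : KWgen (fun i : Fin n => B i.succ) (fun i => ord i.succ)
          (fun q q' => q + q' - Tab q q') := by
        constructor
        · intro i q q' r r' hag
          exact hS.1 i.succ (E (a, q)) (E (b, q')) (E (a, r)) (E (b, r'))
            (hagle i q q' r r' hag)
        · intro i q q' r r' hag hx hy
          exact hS.2 i.succ (E (a, q)) (E (b, q')) (E (a, r)) (E (b, r'))
            (haglt i q q' r r' hag) hx hy
      obtain ⟨ρ, hc, he⟩ := ih (fun i => B i.succ) (fun i => ord i.succ)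
        (fun i => hord i.succ) Tab hTEab hKT hKS
        (cond1 (fun p => μ (E p)) a) (cond1 (fun p => ν (E p)) b)
        (cond1_isPMF _ sμ' hμ'p.1 hsμ'z a ha)
        (cond1_isPMF _ sν' hν'p.1 hsν'z b hb)
      exact ⟨ρ, hc, he⟩
    obtain ⟨π', hπ'c, hπ'e⟩ := comp_coupling
      (fun p q => E.symm (T (E p) (E q)))
      (fun p q => E.symm (E p + E q - T (E p) (E q)))
      (fun a b => T (E (a, 0)) (E (b, 0)) 0)
      (fun a b => a + b - T (E (a, 0)) (E (b, 0)) 0)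
      (fun p q => hT0 p q)
      (fun p q => by
        show E p 0 + E q 0 - T (E p) (E q) 0 = p.1 + q.1 - T (E (p.1, 0)) (E (q.1, 0)) 0
        rw [hT0 p q]
        rfl)
      (fun p => μ (E p)) (fun p => ν (E p)) hμ'p hν'p h1 h2
    obtain ⟨hπ'p, hπ'm1, hπ'm2⟩ := hπ'c
    -- transport back
    refine ⟨fun p => π' (E.symm p.1, E.symm p.2), ⟨?_, ?_, ?_⟩, ?_⟩
    · exact isPMF_comp_equiv (Equiv.prodCongr E.symm E.symm) π' hπ'p
    · intro x
      calc ∑ᶠ y, π' (E.symm x, E.symm y)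
          = ∑ᶠ y', π' (E.symm x, y') := finsum_comp_equiv E.symm (f := fun y' => π' (E.symm x, y'))
        _ = μ (E (E.symm x)) := hπ'm1 (E.symm x)
        _ = μ x := by rw [Equiv.apply_symm_apply]
    · intro y
      calc ∑ᶠ x, π' (E.symm x, E.symm y)
          = ∑ᶠ x', π' (x', E.symm y) := finsum_comp_equiv E.symm (f := fun x' => π' (x', E.symm y))
        _ = ν (E (E.symm y)) := hπ'm2 (E.symm y)
        _ = ν y := by rw [Equiv.apply_symm_apply]
    · have hκ1 : relEntropy (pushforward
            (fun p : (∀ i, B i) × (∀ i, B i) => T p.1 p.2)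
            (fun p => π' (E.symm p.1, E.symm p.2)))
          = relEntropy (pushforward
              (fun r : (B 0 × ∀ i : Fin n, B i.succ) × (B 0 × ∀ i : Fin n, B i.succ) =>
                E.symm (T (E r.1) (E r.2))) π') := by
        calc relEntropy (pushforward (fun p : (∀ i, B i) × (∀ i, B i) => T p.1 p.2)
              (fun p => π' (E.symm p.1, E.symm p.2)))
            = relEntropy (pushforward
                (fun r : (B 0 × ∀ i : Fin n, B i.succ) × (B 0 × ∀ i : Fin n, B i.succ) =>
                  T (E r.1) (E r.2)) π') := by
              have hstep := pushforward_comp_equiv (Equiv.prodCongr E.symm E.symm)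
                (fun p : (∀ i, B i) × (∀ i, B i) => T p.1 p.2) π'
              have : relEntropy (pushforward (fun p : (∀ i, B i) × (∀ i, B i) => T p.1 p.2)
                  (fun p => π' ((Equiv.prodCongr E.symm E.symm) p)))
                  = relEntropy (pushforward (fun r => T (E r.1) (E r.2)) π') := by
                rw [hstep]
                rfl
              exact this
          _ = relEntropy (pushforward
                (fun r : (B 0 × ∀ i : Fin n, B i.succ) × (B 0 × ∀ i : Fin n, B i.succ) =>
                  E (E.symm (T (E r.1) (E r.2)))) π') := by
              have hfeq : (fun r : (B 0 × ∀ i : Fin n, B i.succ) × (B 0 × ∀ i : Fin n, B i.succ) =>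
                  T (E r.1) (E r.2))
                  = (fun r : (B 0 × ∀ i : Fin n, B i.succ) × (B 0 × ∀ i : Fin n, B i.succ) =>
                      E (E.symm (T (E r.1) (E r.2)))) := by
                funext r
                rw [Equiv.apply_symm_apply]
              rw [hfeq]
          _ = relEntropy (pushforward
                (fun r : (B 0 × ∀ i : Fin n, B i.succ) × (B 0 × ∀ i : Fin n, B i.succ) =>
                  E.symm (T (E r.1) (E r.2))) π') :=
              relEntropy_pushforward_equiv E _ π'
      have hκ2 : relEntropy (pushforward
            (fun p : (∀ i, B i) × (∀ i, B i) => p.1 + p.2 - T p.1 p.2)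
            (fun p => π' (E.symm p.1, E.symm p.2)))
          = relEntropy (pushforward
              (fun r : (B 0 × ∀ i : Fin n, B i.succ) × (B 0 × ∀ i : Fin n, B i.succ) =>
                E.symm (E r.1 + E r.2 - T (E r.1) (E r.2))) π') := by
        calc relEntropy (pushforward
              (fun p : (∀ i, B i) × (∀ i, B i) => p.1 + p.2 - T p.1 p.2)
              (fun p => π' (E.symm p.1, E.symm p.2)))
            = relEntropy (pushforward
                (fun r : (B 0 × ∀ i : Fin n, B i.succ) × (B 0 × ∀ i : Fin n, B i.succ) =>
                  E r.1 + E r.2 - T (E r.1) (E r.2)) π') := by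
              have hstep := pushforward_comp_equiv (Equiv.prodCongr E.symm E.symm)
                (fun p : (∀ i, B i) × (∀ i, B i) => p.1 + p.2 - T p.1 p.2) π'
              have : relEntropy (pushforward
                  (fun p : (∀ i, B i) × (∀ i, B i) => p.1 + p.2 - T p.1 p.2)
                  (fun p => π' ((Equiv.prodCongr E.symm E.symm) p)))
                  = relEntropy (pushforward
                      (fun r => E r.1 + E r.2 - T (E r.1) (E r.2)) π') := by
                rw [hstep]
                rfl
              exact this
          _ = relEntropy (pushforward
                (fun r : (B 0 × ∀ i : Fin n, B i.succ) × (B 0 × ∀ i : Fin n, B i.succ) =>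
                  E (E.symm (E r.1 + E r.2 - T (E r.1) (E r.2)))) π') := by
              have hfeq : (fun r : (B 0 × ∀ i : Fin n, B i.succ) × (B 0 × ∀ i : Fin n, B i.succ) =>
                  E r.1 + E r.2 - T (E r.1) (E r.2))
                  = (fun r : (B 0 × ∀ i : Fin n, B i.succ) × (B 0 × ∀ i : Fin n, B i.succ) =>
                      E (E.symm (E r.1 + E r.2 - T (E r.1) (E r.2)))) := by
                funext r
                rw [Equiv.apply_symm_apply]
              rw [hfeq]
          _ = relEntropy (pushforward
                (fun r : (B 0 × ∀ i : Fin n, B i.succ) × (B 0 × ∀ i : Fin n, B i.succ) =>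
                  E.symm (E r.1 + E r.2 - T (E r.1) (E r.2))) π') :=
              relEntropy_pushforward_equiv E _ π'
      rw [hκ1, hκ2]
      have hμE : relEntropy μ = relEntropy (fun p => μ (E p)) :=
        (relEntropy_comp_equiv E μ).symm
      have hνE : relEntropy ν = relEntropy (fun p => ν (E p)) :=
        (relEntropy_comp_equiv E ν).symm
      rw [hμE, hνE]
      exact hπ'e

end Blocks

/-- **Displacement convexity of entropy** for complementing Knothe-monotone operations on
`ℤⁿ`: there is a coupling `π` of `μ` and `ν` such that
`α H(μ|m) + β H(ν|m) ≥ γ H(κ₋|m) + δ H(κ₊|m)` where `κ± = π ∘ T±⁻¹`. -/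
theorem knothe_entropy_inequality {n : ℕ} (α β γ δ : ℝ)
    (hα : 0 < α) (hβ : 0 < β) (hγ : 0 < γ) (hδ : 0 < δ)
    (hmix : max α β ≤ min γ δ)
    (Tm : (Fin n → ℤ) → (Fin n → ℤ) → (Fin n → ℤ))
    (hTE : TranslationEquivariant Tm)
    (hpair : KnothePair Tm (fun x y => x + y - Tm x y))
    (μ ν : (Fin n → ℤ) → ℝ) (hμ : IsPMF μ) (hν : IsPMF ν) :
    ∃ π : (Fin n → ℤ) × (Fin n → ℤ) → ℝ, IsCoupling π μ ν ∧
      α * relEntropy μ + β * relEntropy ν ≥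
        γ * relEntropy (pushforward (fun p => Tm p.1 p.2) π) +
        δ * relEntropy (pushforward (fun p => p.1 + p.2 - Tm p.1 p.2) π) := by
  classical
  obtain ⟨k, hk1, ℓ, hℓ, e, ord, hords, hKT, hKS⟩ := hpair
  set B : Fin k → Type := fun i => Fin (ℓ i) → ℤ with hB
  -- the transported maps
  set T' : (∀ i, B i) → (∀ i, B i) → (∀ i, B i) :=
    fun x y => e (Tm (e.symm x) (e.symm y)) with hT'
  have hTE' : TranslationEquivariant T' := by
    intro x y z
    show e (Tm (e.symm (x + z)) (e.symm (y + z))) = e (Tm (e.symm x) (e.symm y)) + z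
    rw [map_add e.symm x z, map_add e.symm y z, hTE, map_add, AddEquiv.apply_symm_apply]
  have hagree : ∀ (P : Fin k → Prop) (x y x' y' : ∀ i, B i),
      (∀ j, P j → x j = x' j ∧ y j = y' j) →
      (∀ j, P j → e (e.symm x) j = e (e.symm x') j ∧ e (e.symm y) j = e (e.symm y') j) := by
    intro P x y x' y' hag j hj
    rw [AddEquiv.apply_symm_apply, AddEquiv.apply_symm_apply,
      AddEquiv.apply_symm_apply, AddEquiv.apply_symm_apply]
    exact hag j hj
  have hKT' : KWgen B ord T' := by
    constructor
    · intro i x y x' y' hag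
      exact hKT.1 i (e.symm x) (e.symm y) (e.symm x') (e.symm y')
        (hagree (fun j => j ≤ i) x y x' y' hag)
    · intro i x y x' y' hag hx hy
      have h1 := hKT.2 i (e.symm x) (e.symm y) (e.symm x') (e.symm y')
        (hagree (fun j => j < i) x y x' y' hag)
      rw [AddEquiv.apply_symm_apply, AddEquiv.apply_symm_apply] at h1
      have h2 := h1 hx
      rw [AddEquiv.apply_symm_apply, AddEquiv.apply_symm_apply] at h2
      exact h2 hy
  have hcompl : ∀ x y : ∀ i, B i,
      x + y - T' x y = e (e.symm x + e.symm y - Tm (e.symm x) (e.symm y)) := by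
    intro x y
    show x + y - e (Tm (e.symm x) (e.symm y)) = _
    rw [map_sub, map_add, AddEquiv.apply_symm_apply, AddEquiv.apply_symm_apply]
  have hKS' : KWgen B ord (fun x y => x + y - T' x y) := by
    constructor
    · intro i x y x' y' hag
      show (x + y - T' x y) i = (x' + y' - T' x' y') i
      rw [hcompl x y, hcompl x' y']
      exact hKS.1 i (e.symm x) (e.symm y) (e.symm x') (e.symm y')
        (hagree (fun j => j ≤ i) x y x' y' hag)
    · intro i x y x' y' hag hx hy
      show ord i ((x + y - T' x y) i) ((x' + y' - T' x' y') i)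
      rw [hcompl x y, hcompl x' y']
      have h1 := hKS.2 i (e.symm x) (e.symm y) (e.symm x') (e.symm y')
        (hagree (fun j => j < i) x y x' y' hag)
      rw [AddEquiv.apply_symm_apply, AddEquiv.apply_symm_apply] at h1
      have h2 := h1 hx
      rw [AddEquiv.apply_symm_apply, AddEquiv.apply_symm_apply] at h2
      exact h2 hy
  -- transported measures
  have hμ'p : IsPMF (fun p => μ (e.toEquiv.symm p)) := isPMF_comp_equiv e.toEquiv.symm μ hμ
  have hν'p : IsPMF (fun p => ν (e.toEquiv.symm p)) := isPMF_comp_equiv e.toEquiv.symm ν hν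
  obtain ⟨π', ⟨hπ'p, hm1, hm2⟩, hent⟩ :=
    block_induction k B ord hords T' hTE' hKT' hKS'
      (fun p => μ (e.toEquiv.symm p)) (fun p => ν (e.toEquiv.symm p)) hμ'p hν'p
  -- pull the coupling back
  refine ⟨fun p => π' (e p.1, e p.2), ⟨?_, ?_, ?_⟩, ?_⟩
  · exact isPMF_comp_equiv (Equiv.prodCongr e.toEquiv e.toEquiv) π' hπ'p
  · intro x
    calc ∑ᶠ y, π' (e x, e y)
        = ∑ᶠ y', π' (e x, y') := finsum_comp_equiv e.toEquiv (f := fun y' => π' (e x, y'))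
      _ = μ (e.symm (e x)) := hm1 (e x)
      _ = μ x := by rw [AddEquiv.symm_apply_apply]
  · intro y
    calc ∑ᶠ x, π' (e x, e y)
        = ∑ᶠ x', π' (x', e y) := finsum_comp_equiv e.toEquiv (f := fun x' => π' (x', e y))
      _ = ν (e.symm (e y)) := hm2 (e y)
      _ = ν y := by rw [AddEquiv.symm_apply_apply]
  · -- entropy transport
    have hκ1 : relEntropy (pushforward (fun p : (Fin n → ℤ) × (Fin n → ℤ) => Tm p.1 p.2)
          (fun p => π' (e p.1, e p.2)))
        = relEntropy (pushforward (fun r : (∀ i, B i) × (∀ i, B i) => T' r.1 r.2) π') := by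
      calc relEntropy (pushforward (fun p : (Fin n → ℤ) × (Fin n → ℤ) => Tm p.1 p.2)
            (fun p => π' (e p.1, e p.2)))
          = relEntropy (pushforward
              (fun r : (∀ i, B i) × (∀ i, B i) => Tm (e.symm r.1) (e.symm r.2)) π') := by
            have hstep := pushforward_comp_equiv (Equiv.prodCongr e.toEquiv e.toEquiv)
              (fun p : (Fin n → ℤ) × (Fin n → ℤ) => Tm p.1 p.2) π'
            have h2 : relEntropy (pushforward
                (fun p : (Fin n → ℤ) × (Fin n → ℤ) => Tm p.1 p.2)
                (fun p => π' ((Equiv.prodCongr e.toEquiv e.toEquiv) p)))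
                = relEntropy (pushforward
                    (fun r : (∀ i, B i) × (∀ i, B i) => Tm (e.symm r.1) (e.symm r.2)) π') := by
              rw [hstep]
              rfl
            exact h2
        _ = relEntropy (pushforward
              (fun r : (∀ i, B i) × (∀ i, B i) => e.toEquiv.symm (T' r.1 r.2)) π') := by
            have hfeq : (fun r : (∀ i, B i) × (∀ i, B i) => Tm (e.symm r.1) (e.symm r.2))
                = fun r : (∀ i, B i) × (∀ i, B i) => e.toEquiv.symm (T' r.1 r.2) := by
              funext r
              show Tm (e.symm r.1) (e.symm r.2) = e.symm (e (Tm (e.symm r.1) (e.symm r.2)))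
              rw [AddEquiv.symm_apply_apply]
            rw [hfeq]
        _ = relEntropy (pushforward (fun r : (∀ i, B i) × (∀ i, B i) => T' r.1 r.2) π') :=
            relEntropy_pushforward_equiv e.toEquiv.symm
              (fun r : (∀ i, B i) × (∀ i, B i) => T' r.1 r.2) π'
    have hκ2 : relEntropy (pushforward
          (fun p : (Fin n → ℤ) × (Fin n → ℤ) => p.1 + p.2 - Tm p.1 p.2)
          (fun p => π' (e p.1, e p.2)))
        = relEntropy (pushforward
            (fun r : (∀ i, B i) × (∀ i, B i) => r.1 + r.2 - T' r.1 r.2) π') := by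
      calc relEntropy (pushforward
            (fun p : (Fin n → ℤ) × (Fin n → ℤ) => p.1 + p.2 - Tm p.1 p.2)
            (fun p => π' (e p.1, e p.2)))
          = relEntropy (pushforward
              (fun r : (∀ i, B i) × (∀ i, B i) =>
                e.symm r.1 + e.symm r.2 - Tm (e.symm r.1) (e.symm r.2)) π') := by
            have hstep := pushforward_comp_equiv (Equiv.prodCongr e.toEquiv e.toEquiv)
              (fun p : (Fin n → ℤ) × (Fin n → ℤ) => p.1 + p.2 - Tm p.1 p.2) π'
            have h2 : relEntropy (pushforward
                (fun p : (Fin n → ℤ) × (Fin n → ℤ) => p.1 + p.2 - Tm p.1 p.2)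
                (fun p => π' ((Equiv.prodCongr e.toEquiv e.toEquiv) p)))
                = relEntropy (pushforward
                    (fun r : (∀ i, B i) × (∀ i, B i) =>
                      e.symm r.1 + e.symm r.2 - Tm (e.symm r.1) (e.symm r.2)) π') := by
              rw [hstep]
              rfl
            exact h2
        _ = relEntropy (pushforward
              (fun r : (∀ i, B i) × (∀ i, B i) =>
                e.toEquiv.symm (r.1 + r.2 - T' r.1 r.2)) π') := by
            have hfeq : (fun r : (∀ i, B i) × (∀ i, B i) =>
                  e.symm r.1 + e.symm r.2 - Tm (e.symm r.1) (e.symm r.2))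
                = fun r : (∀ i, B i) × (∀ i, B i) => e.toEquiv.symm (r.1 + r.2 - T' r.1 r.2) := by
              funext r
              show e.symm r.1 + e.symm r.2 - Tm (e.symm r.1) (e.symm r.2)
                  = e.symm (r.1 + r.2 - e (Tm (e.symm r.1) (e.symm r.2)))
              rw [map_sub, map_add, AddEquiv.symm_apply_apply]
            rw [hfeq]
        _ = relEntropy (pushforward
              (fun r : (∀ i, B i) × (∀ i, B i) => r.1 + r.2 - T' r.1 r.2) π') :=
            relEntropy_pushforward_equiv e.toEquiv.symm
              (fun r : (∀ i, B i) × (∀ i, B i) => r.1 + r.2 - T' r.1 r.2) π'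
    rw [hκ1, hκ2]
    have hEμ : relEntropy μ = relEntropy (fun p => μ (e.toEquiv.symm p)) :=
      (relEntropy_comp_equiv e.toEquiv.symm μ).symm
    have hEν : relEntropy ν = relEntropy (fun p => ν (e.toEquiv.symm p)) :=
      (relEntropy_comp_equiv e.toEquiv.symm ν).symm
    -- nonpositivity
    have hX : relEntropy (pushforward (fun r : (∀ i, B i) × (∀ i, B i) => T' r.1 r.2) π') ≤ 0 :=
      relEntropy_nonpos (pushforward_isPMF _ _ hπ'p)
    have hY : relEntropy (pushforward
        (fun r : (∀ i, B i) × (∀ i, B i) => r.1 + r.2 - T' r.1 r.2) π') ≤ 0 :=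
      relEntropy_nonpos (pushforward_isPMF _ _ hπ'p)
    have hEμn : relEntropy μ ≤ 0 := relEntropy_nonpos hμ
    have hEνn : relEntropy ν ≤ 0 := relEntropy_nonpos hν
    set XX := relEntropy (pushforward (fun r : (∀ i, B i) × (∀ i, B i) => T' r.1 r.2) π')
    set YY := relEntropy (pushforward
        (fun r : (∀ i, B i) × (∀ i, B i) => r.1 + r.2 - T' r.1 r.2) π')
    have hsum : XX + YY ≤ relEntropy μ + relEntropy ν := by
      rw [hEμ, hEν]
      exact hent
    have hm0 : (0 : ℝ) ≤ min γ δ := le_of_lt (lt_min hγ hδ)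
    have h1 : γ * XX ≤ min γ δ * XX := mul_le_mul_of_nonpos_right (min_le_left γ δ) hX
    have h2 : δ * YY ≤ min γ δ * YY := mul_le_mul_of_nonpos_right (min_le_right γ δ) hY
    have h3 : min γ δ * (XX + YY) ≤ min γ δ * (relEntropy μ + relEntropy ν) :=
      mul_le_mul_of_nonneg_left hsum hm0
    have h4 : min γ δ * relEntropy μ ≤ α * relEntropy μ :=
      mul_le_mul_of_nonpos_right (le_trans (le_max_left α β) hmix) hEμn
    have h5 : min γ δ * relEntropy ν ≤ β * relEntropy ν :=
      mul_le_mul_of_nonpos_right (le_trans (le_max_right α β) hmix) hEνn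
    have e1 : min γ δ * (XX + YY) = min γ δ * XX + min γ δ * YY := mul_add _ _ _
    have e2 : min γ δ * (relEntropy μ + relEntropy ν)
        = min γ δ * relEntropy μ + min γ δ * relEntropy ν := mul_add _ _ _
    linarith
end
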